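/- arXiv:1212.6584 — 4 statements merged into one kernel-verified Lean document; each statement's English description precedes it below -/
import Mathlib

section
/- Let $\mathcal{D}$ be a bounded sequence of integers $(d_k)_{k\ge 1}$ with every $d_k \ge 2$, and let $(i_1,j_1)$ and $(i_2,j_2)$ be two pairs of real numbers with $0 < i_s, j_s < 1$ and $i_s + j_s = 1$ for $s = 1,2$. Then $\mathrm{Bad}_{\mathcal{D}}(i_1,j_1) \cap \mathrm{Bad}_{\mathcal{D}}(i_2,j_2) \neq \emptyset$ (the mixed Schmidt conjecture). -/
/-- `Dprod d n = d 0 * d 1 * ... * d (n-1)`, i.e. the product of the first `n`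
terms of the sequence `d` (so `Dprod d 0 = 1`). -/
def Dprod (d : ℕ → ℕ) (n : ℕ) : ℕ := ∏ k ∈ Finset.range n, d k

/-- The `𝒟`-adic pseudo absolute value `|q|_𝒟 = inf {1 / D_n : q ∈ D_n ℤ}`. -/
noncomputable def pseudoAbs (d : ℕ → ℕ) (q : ℕ) : ℝ :=
  sInf {x : ℝ | ∃ n : ℕ, Dprod d n ∣ q ∧ x = 1 / (Dprod d n : ℝ)}

/-- Distance from a real number to its nearest integer. -/
noncomputable def distNearestInt (x : ℝ) : ℝ := |x - round x|

/-- The set of mixed `(i,j)`-badly approximable numbers `Bad_𝒟(i,j)`. -/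
def BadD (d : ℕ → ℕ) (i j : ℝ) : Set ℝ :=
  {x : ℝ | ∃ c : ℝ, 0 < c ∧ ∀ q : ℕ, 0 < q →
    max (pseudoAbs d q ^ (1 / i)) (distNearestInt ((q : ℝ) * x) ^ (1 / j)) > c / (q : ℝ)}

set_option maxHeartbeats 1000000

namespace MS


lemma Dprod_pos {d : ℕ → ℕ} (hd2 : ∀ k, 2 ≤ d k) (n : ℕ) : 0 < Dprod d n := by
  apply Finset.prod_pos
  intro k _
  exact lt_of_lt_of_le (by norm_num) (hd2 k)

lemma Dprod_dvd {d : ℕ → ℕ} {m n : ℕ} (h : m ≤ n) : Dprod d m ∣ Dprod d n := by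
  apply Finset.prod_dvd_prod_of_subset
  intro k hk
  simp only [Finset.mem_range] at *
  omega

lemma two_pow_le_Dprod {d : ℕ → ℕ} (hd2 : ∀ k, 2 ≤ d k) (n : ℕ) : 2 ^ n ≤ Dprod d n := by
  calc (2:ℕ) ^ n = ∏ _k ∈ Finset.range n, 2 := by
        rw [Finset.prod_const, Finset.card_range]
    _ ≤ ∏ k ∈ Finset.range n, d k := Finset.prod_le_prod' fun k _ => hd2 k

lemma Dprod_mono {d : ℕ → ℕ} (hd2 : ∀ k, 2 ≤ d k) {m n : ℕ} (h : m ≤ n) :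
    Dprod d m ≤ Dprod d n :=
  Nat.le_of_dvd (Dprod_pos hd2 n) (Dprod_dvd h)

open Classical in
/-- index of the largest `Dprod` dividing `q` -/
noncomputable def bestN (d : ℕ → ℕ) (q : ℕ) : ℕ := Nat.findGreatest (fun n => Dprod d n ∣ q) q

lemma Dprod_zero (d : ℕ → ℕ) : Dprod d 0 = 1 := by simp [Dprod]

lemma bestN_dvd (d : ℕ → ℕ) (q : ℕ) : Dprod d (bestN d q) ∣ q := by
  classical
  have h0 : Dprod d 0 ∣ q := by simp [Dprod_zero]
  exact Nat.findGreatest_spec (P := fun n => Dprod d n ∣ q) (Nat.zero_le q) h0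

lemma le_bestN {d : ℕ → ℕ} (hd2 : ∀ k, 2 ≤ d k) {q k : ℕ} (hq : 0 < q)
    (h : Dprod d k ∣ q) : k ≤ bestN d q := by
  classical
  have h1 : Dprod d k ≤ q := Nat.le_of_dvd hq h
  have h2 : 2 ^ k ≤ q := le_trans (two_pow_le_Dprod hd2 k) h1
  have h3 : k ≤ q := le_trans (Nat.le_of_lt (Nat.lt_two_pow_self (n := k))) h2
  exact Nat.le_findGreatest (P := fun n => Dprod d n ∣ q) h3 h

lemma pseudoAbs_eq {d : ℕ → ℕ} (hd2 : ∀ k, 2 ≤ d k) {q : ℕ} (hq : 0 < q) :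
    pseudoAbs d q = ((Dprod d (bestN d q) : ℝ))⁻¹ := by
  have hDpos : ∀ n, (0:ℝ) < (Dprod d n : ℝ) := fun n => by
    exact_mod_cast Dprod_pos hd2 n
  apply le_antisymm
  · apply csInf_le
    · exact ⟨0, by rintro y ⟨n, -, rfl⟩; positivity⟩
    · exact ⟨bestN d q, bestN_dvd d q, by rw [one_div]⟩
  · apply le_csInf
    · exact ⟨(Dprod d (bestN d q) : ℝ)⁻¹, bestN d q, bestN_dvd d q, by rw [one_div]⟩
    · rintro y ⟨n, hn, rfl⟩
      rw [one_div]
      apply inv_anti₀ (hDpos _)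
      exact_mod_cast Dprod_mono hd2 (le_bestN hd2 hq hn)



/-- Among three well-separated tiles in `[a, a+L]`, one avoids both balls `B(y₁,ρ)`, `B(y₂,ρ)`. -/
lemma tile3 (a L ρ y₁ y₂ : ℝ) (hL : 0 < L) (hρ0 : 0 ≤ ρ) (hρ : ρ ≤ L / 32) :
    ∃ a', a ≤ a' ∧ a' + L / 32 ≤ a + L ∧
      ∀ z, a' ≤ z → z ≤ a' + L / 32 → ρ < |z - y₁| ∧ ρ < |z - y₂| := by
  set Q : ℝ → ℝ → Prop := fun s y => s - ρ ≤ y ∧ y ≤ s + L / 32 + ρ with hQ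
  have hsep : ∀ y s₁ s₂ : ℝ, s₁ + L / 8 ≤ s₂ → Q s₁ y → Q s₂ y → False := by
    intro y s₁ s₂ hs h1 h2
    rcases h1 with ⟨-, h1b⟩
    rcases h2 with ⟨h2a, -⟩
    linarith
  have key : ∃ s, (s = a ∨ s = a + L / 8 ∨ s = a + L / 4) ∧ ¬ Q s y₁ ∧ ¬ Q s y₂ := by
    by_contra hcon
    push_neg at hcon
    have s01 : ∀ y, Q a y → Q (a + L/8) y → False := fun y => hsep y _ _ (by linarith)
    have s02 : ∀ y, Q a y → Q (a + L/4) y → False := fun y => hsep y _ _ (by linarith)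
    have s12 : ∀ y, Q (a + L/8) y → Q (a + L/4) y → False := fun y => hsep y _ _ (by linarith)
    have h0 : Q a y₁ ∨ Q a y₂ := by
      have := hcon a (Or.inl rfl); tauto
    have h1 : Q (a + L/8) y₁ ∨ Q (a + L/8) y₂ := by
      have := hcon (a + L/8) (Or.inr (Or.inl rfl)); tauto
    have h2 : Q (a + L/4) y₁ ∨ Q (a + L/4) y₂ := by
      have := hcon (a + L/4) (Or.inr (Or.inr rfl)); tauto
    rcases h0 with c0 | c0 <;> rcases h1 with c1 | c1 <;> rcases h2 with c2 | c2 <;>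
      first
        | exact s01 _ c0 c1
        | exact s02 _ c0 c2
        | exact s12 _ c1 c2
  obtain ⟨s, hs, hns1, hns2⟩ := key
  have havoid : ∀ y, ¬ Q s y → ∀ z, s ≤ z → z ≤ s + L / 32 → ρ < |z - y| := by
    intro y hny z hz1 hz2
    have hny' : y < s - ρ ∨ s + L / 32 + ρ < y := by
      by_contra hcc
      push_neg at hcc
      exact hny ⟨hcc.1, hcc.2⟩
    rcases hny' with h | h
    · calc ρ < z - y := by linarith
        _ ≤ |z - y| := le_abs_self _
    · calc ρ < y - z := by linarith
        _ ≤ |y - z| := le_abs_self _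
        _ = |z - y| := abs_sub_comm _ _
  refine ⟨s, ?_, ?_, fun z hz1 hz2 => ⟨havoid y₁ hns1 z hz1 hz2, havoid y₂ hns2 z hz1 hz2⟩⟩
  · rcases hs with rfl | rfl | rfl <;> linarith
  · rcases hs with rfl | rfl | rfl <;> linarith

/-- every small positive radius has a stage -/
lemma stage_exists (r : ℝ) (h1 : 0 < r) (h2 : r ≤ ((32:ℝ) ^ (1:ℕ))⁻¹) :
    ∃ t : ℕ, r ≤ ((32:ℝ) ^ (t+1))⁻¹ ∧ ((32:ℝ) ^ (t+2))⁻¹ < r := by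
  classical
  have h32 : (1:ℝ) < 32 := by norm_num
  have hex : ∃ n : ℕ, ¬ (r ≤ ((32:ℝ) ^ (n+1))⁻¹) := by
    obtain ⟨n, hn⟩ := pow_unbounded_of_one_lt r⁻¹ h32
    refine ⟨n, ?_⟩
    push_neg
    have hpow : (0:ℝ) < (32:ℝ) ^ n := by positivity
    have : ((32:ℝ) ^ n)⁻¹ < r := by
      rw [inv_lt_comm₀ hpow h1]
      exact hn
    calc ((32:ℝ) ^ (n+1))⁻¹ ≤ ((32:ℝ) ^ n)⁻¹ := by
          apply inv_anti₀ hpow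
          rw [pow_succ]
          nlinarith
      _ < r := this
  set N := Nat.find hex with hN
  have hspec : ¬ (r ≤ ((32:ℝ) ^ (N+1))⁻¹) := Nat.find_spec hex
  have hN0 : N ≠ 0 := by
    intro h
    rw [h] at hspec
    exact hspec h2
  refine ⟨N - 1, ?_, ?_⟩
  · have := Nat.find_min hex (m := N - 1) (by omega)
    push_neg at this
    exact this
  · have heq : N - 1 + 2 = N + 1 := by omega
    rw [heq]
    push_neg at hspec
    exact hspec


/-- THE KEY ARITHMETIC FACT: two distinct dangerous centres at the same stage are far apart. -/
lemma spacing (d : ℕ → ℕ) (hd2 : ∀ k, 2 ≤ d k)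
    (c i j : ℝ) (hi : 0 < i) (hj : 0 < j) (hij : i + j = 1)
    (hc : 0 < c) (hc26 : c ≤ ((2:ℝ)^(26:ℕ))⁻¹)
    (t : ℕ) (q q' : ℕ) (hq : 1 ≤ q) (hq' : 1 ≤ q') (p p' : ℤ)
    (n n' : ℕ) (hdn : Dprod d n ∣ q) (hdn' : Dprod d n' ∣ q')
    (hlow : ((q:ℝ)/c) ^ i ≤ (Dprod d n : ℝ))
    (hlow' : ((q':ℝ)/c) ^ i ≤ (Dprod d n' : ℝ))
    (hr1 : c ^ j * (q:ℝ) ^ (-(1+j)) ≤ ((32:ℝ)^(t+1))⁻¹)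
    (hr2 : ((32:ℝ)^(t+2))⁻¹ < c ^ j * (q:ℝ) ^ (-(1+j)))
    (hr1' : c ^ j * (q':ℝ) ^ (-(1+j)) ≤ ((32:ℝ)^(t+1))⁻¹)
    (hr2' : ((32:ℝ)^(t+2))⁻¹ < c ^ j * (q':ℝ) ^ (-(1+j)))
    (hne : (p:ℝ)/(q:ℝ) ≠ (p':ℝ)/(q':ℝ)) :
    ((32:ℝ)^t)⁻¹ + 2 * ((32:ℝ)^(t+1))⁻¹ < |(p:ℝ)/(q:ℝ) - (p':ℝ)/(q':ℝ)| := by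
  have hQ0 : (0:ℝ) < (q:ℝ) := by exact_mod_cast hq
  have hQ0' : (0:ℝ) < (q':ℝ) := by exact_mod_cast hq'
  -- the integer numerator
  set K : ℤ := p * (q':ℤ) - p' * (q:ℤ) with hK
  have hKne : K ≠ 0 := by
    intro h0
    apply hne
    rw [hK] at h0
    have h0' : p * (q':ℤ) = p' * (q:ℤ) := by linarith [sub_eq_zero.mp h0]
    rw [div_eq_div_iff (ne_of_gt hQ0) (ne_of_gt hQ0')]
    exact_mod_cast h0'
  set N : ℕ := min n n' with hN
  have hDdvdq : (Dprod d N : ℤ) ∣ (q:ℤ) := Int.natCast_dvd_natCast.mpr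
    (dvd_trans (Dprod_dvd (min_le_left n n')) hdn)
  have hDdvdq' : (Dprod d N : ℤ) ∣ (q':ℤ) := Int.natCast_dvd_natCast.mpr
    (dvd_trans (Dprod_dvd (min_le_right n n')) hdn')
  have hDdvdK : (Dprod d N : ℤ) ∣ K := by
    apply dvd_sub
    · exact Dvd.dvd.mul_left hDdvdq' p
    · exact Dvd.dvd.mul_left hDdvdq p'
  have hDK : (Dprod d N : ℝ) ≤ |(K:ℝ)| := by
    have h1 : (Dprod d N : ℤ) ≤ |K| := Int.le_of_dvd (abs_pos.mpr hKne) ((dvd_abs _ _).mpr hDdvdK)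
    calc (Dprod d N : ℝ) ≤ ((|K| : ℤ) : ℝ) := by exact_mod_cast h1
      _ = |(K:ℝ)| := by push_cast; rfl
  have habs : |(p:ℝ)/(q:ℝ) - (p':ℝ)/(q':ℝ)| = |(K:ℝ)| / ((q:ℝ)*(q':ℝ)) := by
    rw [hK]
    rw [div_sub_div _ _ (ne_of_gt hQ0) (ne_of_gt hQ0'), abs_div,
      abs_of_pos (mul_pos hQ0 hQ0')]
    push_cast
    ring_nf
  -- minimum of q, q'
  set m : ℝ := min (q:ℝ) (q':ℝ) with hm
  have hm0 : (0:ℝ) < m := lt_min hQ0 hQ0'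
  have hmD : (m/c) ^ i ≤ (Dprod d N : ℝ) := by
    rcases le_total n n' with h | h
    · have hNn : N = n := by rw [hN, min_eq_left h]
      rw [hNn]
      refine le_trans ?_ hlow
      apply Real.rpow_le_rpow (by positivity) ?_ hi.le
      gcongr
      exact min_le_left _ _
    · have hNn : N = n' := by rw [hN, min_eq_right h]
      rw [hNn]
      refine le_trans ?_ hlow'
      apply Real.rpow_le_rpow (by positivity) ?_ hi.le
      gcongr
      exact min_le_right _ _
  -- analytic core via logarithms
  have hL2 : (0:ℝ) < Real.log 2 := Real.log_pos (by norm_num)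
  have l32 : Real.log 32 = 5 * Real.log 2 := by
    rw [show (32:ℝ) = 2^(5:ℕ) by norm_num, Real.log_pow]; push_cast; ring
  set L2 := Real.log 2 with hL2def
  set lc := Real.log c with hlcdef
  set τ := (t:ℝ) with hτdef
  have derive : ∀ Q : ℕ, 1 ≤ Q →
      c ^ j * (Q:ℝ) ^ (-(1+j)) ≤ ((32:ℝ)^(t+1))⁻¹ →
      ((32:ℝ)^(t+2))⁻¹ < c ^ j * (Q:ℝ) ^ (-(1+j)) →
      (j*lc + (τ+1)*(5*L2) ≤ (1+j) * Real.log (Q:ℝ) ∧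
        (1+j) * Real.log (Q:ℝ) < j*lc + (τ+2)*(5*L2)) := by
    intro Q hQ1 ha hb
    have hQp : (0:ℝ) < (Q:ℝ) := by exact_mod_cast hQ1
    have hcj : (0:ℝ) < c ^ j := Real.rpow_pos_of_pos hc j
    have hQr : (0:ℝ) < (Q:ℝ) ^ (-(1+j)) := Real.rpow_pos_of_pos hQp _
    have e1 : Real.log (c ^ j * (Q:ℝ) ^ (-(1+j))) = j*lc + (-(1+j)) * Real.log (Q:ℝ) := by
      rw [Real.log_mul (ne_of_gt hcj) (ne_of_gt hQr), Real.log_rpow hc, Real.log_rpow hQp]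
    have e2 : Real.log (((32:ℝ)^(t+1))⁻¹) = -((τ+1) * (5*L2)) := by
      rw [Real.log_inv, Real.log_pow, l32, hτdef]; push_cast; ring
    have e3 : Real.log (((32:ℝ)^(t+2))⁻¹) = -((τ+2) * (5*L2)) := by
      rw [Real.log_inv, Real.log_pow, l32, hτdef]; push_cast; ring
    constructor
    · have h := Real.log_le_log (by positivity) ha
      rw [e1, e2] at h; linarith
    · have h := Real.log_lt_log (by positivity) hb
      rw [e3, e1] at h; linarith
  obtain ⟨G1, F2⟩ := derive q hq hr1 hr2
  obtain ⟨G1', F2'⟩ := derive q' hq' hr1' hr2'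
  set lq := Real.log (q:ℝ) with hlqdef
  set lq' := Real.log (q':ℝ) with hlqdef'
  set lm := Real.log m with hlmdef
  have F1 : j*lc + (τ+1)*(5*L2) ≤ (1+j) * lm := by
    rcases min_cases (q:ℝ) (q':ℝ) with ⟨he, -⟩ | ⟨he, -⟩
    · have hlm : lm = lq := by rw [hlmdef, hm, he]
      rw [hlm]; exact G1
    · have hlm : lm = lq' := by rw [hlmdef, hm, he]
      rw [hlm]; exact G1'
  have F4 : lc ≤ -(26*L2) := by
    have h := Real.log_le_log hc hc26
    rw [Real.log_inv, Real.log_pow] at h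
    rw [hlcdef, hL2def]
    push_cast at h
    linarith
  have hpos1 : (0:ℝ) < 2*((32:ℝ)^t)⁻¹ := by positivity
  have hpos2 : (0:ℝ) < (m/c)^i / ((q:ℝ)*(q':ℝ)) := by positivity
  have hlog : Real.log (2*((32:ℝ)^t)⁻¹) < Real.log ((m/c)^i / ((q:ℝ)*(q':ℝ))) := by
    have eL : Real.log (2*((32:ℝ)^t)⁻¹) = L2 - τ*(5*L2) := by
      rw [Real.log_mul two_ne_zero (by positivity), Real.log_inv, Real.log_pow, l32, hτdef,
        hL2def]
      push_cast; ring
    have eR : Real.log ((m/c)^i / ((q:ℝ)*(q':ℝ))) = i*(lm - lc) - (lq + lq') := by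
      rw [Real.log_div (by positivity) (by positivity), Real.log_rpow (by positivity),
        Real.log_div (ne_of_gt hm0) (ne_of_gt hc), Real.log_mul (ne_of_gt hQ0) (ne_of_gt hQ0')]
    rw [eL, eR]
    have h1j : (0:ℝ) < 1 + j := by linarith
    have hA : i * (j*lc + (τ+1)*(5*L2)) ≤ i * ((1+j) * lm) := mul_le_mul_of_nonneg_left F1 hi.le
    have hB : (i + 2*j) * (26*L2) ≤ (i + 2*j) * (-lc) :=
      mul_le_mul_of_nonneg_left (by linarith) (by linarith)
    have hT : (i + j) * (τ*L2) = τ*L2 := by rw [hij]; ring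
    have hjL2 : 0 < j * L2 := mul_pos hj hL2
    have hE : (i + j) * L2 = L2 := by rw [hij]; ring
    have hW : (1+j) * (L2 - τ*(5*L2)) < (1+j) * (i*(lm - lc) - (lq + lq')) := by
      linarith [hA, F2, F2', hB, hT, hE, hjL2, hL2]
    exact (mul_lt_mul_iff_right₀ h1j).mp hW
  have hmain : 2*((32:ℝ)^t)⁻¹ < (m/c)^i / ((q:ℝ)*(q':ℝ)) := by
    have h := Real.exp_lt_exp.mpr hlog
    rwa [Real.exp_log hpos1, Real.exp_log hpos2] at h
  rw [habs]
  have hfrac : (m/c)^i / ((q:ℝ)*(q':ℝ)) ≤ |(K:ℝ)| / ((q:ℝ)*(q':ℝ)) := by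
    gcongr
    exact le_trans hmD hDK
  have h32t : (2:ℝ)*((32:ℝ)^(t+1))⁻¹ ≤ ((32:ℝ)^t)⁻¹ := by
    rw [pow_succ, mul_inv]
    have hp : (0:ℝ) < ((32:ℝ)^t)⁻¹ := by positivity
    calc (2:ℝ)*(((32:ℝ)^t)⁻¹ * (32:ℝ)⁻¹) = ((32:ℝ)^t)⁻¹ * (2/32) := by ring
      _ ≤ ((32:ℝ)^t)⁻¹ * 1 := by gcongr <;> norm_num
      _ = ((32:ℝ)^t)⁻¹ := mul_one _
  calc ((32:ℝ)^t)⁻¹ + 2 * ((32:ℝ)^(t+1))⁻¹ ≤ 2*((32:ℝ)^t)⁻¹ := by linarith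
    _ < (m/c)^i / ((q:ℝ)*(q':ℝ)) := hmain
    _ ≤ |(K:ℝ)| / ((q:ℝ)*(q':ℝ)) := hfrac


/-- two dangerous centres of the same family, same stage, meeting a common window coincide -/
lemma center_unique (d : ℕ → ℕ) (hd2 : ∀ k, 2 ≤ d k)
    (c i j : ℝ) (hi : 0 < i) (hj : 0 < j) (hij : i + j = 1)
    (hc : 0 < c) (hc26 : c ≤ ((2:ℝ)^(26:ℕ))⁻¹)
    (t : ℕ) (a : ℝ)
    (q q' : ℕ) (hq : 1 ≤ q) (hq' : 1 ≤ q') (p p' : ℤ)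
    (hdang : ∃ n, Dprod d n ∣ q ∧ ((q:ℝ)/c) ^ i ≤ (Dprod d n : ℝ))
    (hdang' : ∃ n, Dprod d n ∣ q' ∧ ((q':ℝ)/c) ^ i ≤ (Dprod d n : ℝ))
    (hr1 : c ^ j * (q:ℝ) ^ (-(1+j)) ≤ ((32:ℝ)^(t+1))⁻¹)
    (hr2 : ((32:ℝ)^(t+2))⁻¹ < c ^ j * (q:ℝ) ^ (-(1+j)))
    (hr1' : c ^ j * (q':ℝ) ^ (-(1+j)) ≤ ((32:ℝ)^(t+1))⁻¹)
    (hr2' : ((32:ℝ)^(t+2))⁻¹ < c ^ j * (q':ℝ) ^ (-(1+j)))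
    (z z' : ℝ) (hz1 : a ≤ z) (hz2 : z ≤ a + ((32:ℝ)^t)⁻¹)
    (hz1' : a ≤ z') (hz2' : z' ≤ a + ((32:ℝ)^t)⁻¹)
    (hball : |z - (p:ℝ)/(q:ℝ)| ≤ c ^ j * (q:ℝ) ^ (-(1+j)))
    (hball' : |z' - (p':ℝ)/(q':ℝ)| ≤ c ^ j * (q':ℝ) ^ (-(1+j))) :
    (p:ℝ)/(q:ℝ) = (p':ℝ)/(q':ℝ) := by
  by_contra hne
  obtain ⟨n, hdn, hlow⟩ := hdang
  obtain ⟨n', hdn', hlow'⟩ := hdang'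
  have hsp := spacing d hd2 c i j hi hj hij hc hc26 t q q' hq hq' p p' n n' hdn hdn'
    hlow hlow' hr1 hr2 hr1' hr2' hne
  have h1 : |(p:ℝ)/(q:ℝ) - (p':ℝ)/(q':ℝ)| ≤
      |(p:ℝ)/(q:ℝ) - z| + |z - z'| + |z' - (p':ℝ)/(q':ℝ)| := by
    have e : (p:ℝ)/(q:ℝ) - (p':ℝ)/(q':ℝ) =
        ((p:ℝ)/(q:ℝ) - z) + (z - z') + (z' - (p':ℝ)/(q':ℝ)) := by ring
    rw [e]
    exact le_trans (abs_add_le _ _) (by gcongr; exact abs_add_le _ _)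
  have h2 : |z - z'| ≤ ((32:ℝ)^t)⁻¹ := abs_le.mpr ⟨by linarith, by linarith⟩
  have h3 : |(p:ℝ)/(q:ℝ) - z| ≤ ((32:ℝ)^(t+1))⁻¹ := by
    rw [abs_sub_comm]; exact le_trans hball hr1
  have h4 : |z' - (p':ℝ)/(q':ℝ)| ≤ ((32:ℝ)^(t+1))⁻¹ := le_trans hball' hr1'
  linarith

/-- The nested–interval construction of the common badly–approximable point. -/
lemma construction (d : ℕ → ℕ) (hd2 : ∀ k, 2 ≤ d k)
    (i₁ j₁ i₂ j₂ : ℝ) (hi₁ : 0 < i₁) (hj₁ : 0 < j₁) (hij₁ : i₁ + j₁ = 1)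
    (hi₂ : 0 < i₂) (hj₂ : 0 < j₂) (hij₂ : i₂ + j₂ = 1)
    (c : ℝ) (hc : 0 < c) (hc26 : c ≤ ((2:ℝ)^(26:ℕ))⁻¹)
    (hcj1 : c ^ j₁ ≤ ((32:ℝ)^(1:ℕ))⁻¹) (hcj2 : c ^ j₂ ≤ ((32:ℝ)^(1:ℕ))⁻¹) :
    ∃ x : ℝ, ∀ q : ℕ, 1 ≤ q → ∀ p : ℤ,
      ((∃ n, Dprod d n ∣ q ∧ ((q:ℝ)/c) ^ i₁ ≤ (Dprod d n : ℝ)) →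
          c ^ j₁ * (q:ℝ) ^ (-(1+j₁)) < |x - (p:ℝ)/(q:ℝ)|) ∧
      ((∃ n, Dprod d n ∣ q ∧ ((q:ℝ)/c) ^ i₂ ≤ (Dprod d n : ℝ)) →
          c ^ j₂ * (q:ℝ) ^ (-(1+j₂)) < |x - (p:ℝ)/(q:ℝ)|) := by
  classical
  -- one refinement step
  have step : ∀ (t : ℕ) (a : ℝ), ∃ a', a ≤ a' ∧
      a' + ((32:ℝ)^(t+1))⁻¹ ≤ a + ((32:ℝ)^t)⁻¹ ∧
      ∀ q : ℕ, 1 ≤ q → ∀ p : ℤ,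
        ((∃ n, Dprod d n ∣ q ∧ ((q:ℝ)/c) ^ i₁ ≤ (Dprod d n : ℝ)) →
          (c ^ j₁ * (q:ℝ) ^ (-(1+j₁)) ≤ ((32:ℝ)^(t+1))⁻¹ ∧
            ((32:ℝ)^(t+2))⁻¹ < c ^ j₁ * (q:ℝ) ^ (-(1+j₁))) →
          ∀ z, a' ≤ z → z ≤ a' + ((32:ℝ)^(t+1))⁻¹ →
            c ^ j₁ * (q:ℝ) ^ (-(1+j₁)) < |z - (p:ℝ)/(q:ℝ)|) ∧
        ((∃ n, Dprod d n ∣ q ∧ ((q:ℝ)/c) ^ i₂ ≤ (Dprod d n : ℝ)) →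
          (c ^ j₂ * (q:ℝ) ^ (-(1+j₂)) ≤ ((32:ℝ)^(t+1))⁻¹ ∧
            ((32:ℝ)^(t+2))⁻¹ < c ^ j₂ * (q:ℝ) ^ (-(1+j₂))) →
          ∀ z, a' ≤ z → z ≤ a' + ((32:ℝ)^(t+1))⁻¹ →
            c ^ j₂ * (q:ℝ) ^ (-(1+j₂)) < |z - (p:ℝ)/(q:ℝ)|) := by
    intro t a
    have hρeq : ((32:ℝ)^(t+1))⁻¹ = ((32:ℝ)^t)⁻¹ / 32 := by
      rw [pow_succ, mul_inv]; ring
    -- the (at most one) dangerous centre of each family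
    have hy₁ : ∃ y₁ : ℝ, ∀ (q : ℕ) (p : ℤ), 1 ≤ q →
        (∃ n, Dprod d n ∣ q ∧ ((q:ℝ)/c) ^ i₁ ≤ (Dprod d n : ℝ)) →
        (c ^ j₁ * (q:ℝ) ^ (-(1+j₁)) ≤ ((32:ℝ)^(t+1))⁻¹ ∧
          ((32:ℝ)^(t+2))⁻¹ < c ^ j₁ * (q:ℝ) ^ (-(1+j₁))) →
        (∃ z, a ≤ z ∧ z ≤ a + ((32:ℝ)^t)⁻¹ ∧
          |z - (p:ℝ)/(q:ℝ)| ≤ c ^ j₁ * (q:ℝ) ^ (-(1+j₁))) →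
        (p:ℝ)/(q:ℝ) = y₁ := by
      by_cases h : ∃ (q : ℕ) (p : ℤ), 1 ≤ q ∧
          (∃ n, Dprod d n ∣ q ∧ ((q:ℝ)/c) ^ i₁ ≤ (Dprod d n : ℝ)) ∧
          (c ^ j₁ * (q:ℝ) ^ (-(1+j₁)) ≤ ((32:ℝ)^(t+1))⁻¹ ∧
            ((32:ℝ)^(t+2))⁻¹ < c ^ j₁ * (q:ℝ) ^ (-(1+j₁))) ∧
          (∃ z, a ≤ z ∧ z ≤ a + ((32:ℝ)^t)⁻¹ ∧
            |z - (p:ℝ)/(q:ℝ)| ≤ c ^ j₁ * (q:ℝ) ^ (-(1+j₁)))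
      · obtain ⟨q₀, p₀, hq₀, hdang₀, hst₀, z₀, hz₀1, hz₀2, hb₀⟩ := h
        refine ⟨(p₀:ℝ)/(q₀:ℝ), ?_⟩
        rintro q p hq hdang hst ⟨z, hza, hzb, hb⟩
        exact center_unique d hd2 c i₁ j₁ hi₁ hj₁ hij₁ hc hc26 t a q q₀ hq hq₀ p p₀
          hdang hdang₀ hst.1 hst.2 hst₀.1 hst₀.2 z z₀ hza hzb hz₀1 hz₀2 hb hb₀
      · refine ⟨0, ?_⟩
        rintro q p hq hdang hst ⟨z, hza, hzb, hb⟩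
        exact absurd ⟨q, p, hq, hdang, hst, z, hza, hzb, hb⟩ h
    have hy₂ : ∃ y₂ : ℝ, ∀ (q : ℕ) (p : ℤ), 1 ≤ q →
        (∃ n, Dprod d n ∣ q ∧ ((q:ℝ)/c) ^ i₂ ≤ (Dprod d n : ℝ)) →
        (c ^ j₂ * (q:ℝ) ^ (-(1+j₂)) ≤ ((32:ℝ)^(t+1))⁻¹ ∧
          ((32:ℝ)^(t+2))⁻¹ < c ^ j₂ * (q:ℝ) ^ (-(1+j₂))) →
        (∃ z, a ≤ z ∧ z ≤ a + ((32:ℝ)^t)⁻¹ ∧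
          |z - (p:ℝ)/(q:ℝ)| ≤ c ^ j₂ * (q:ℝ) ^ (-(1+j₂))) →
        (p:ℝ)/(q:ℝ) = y₂ := by
      by_cases h : ∃ (q : ℕ) (p : ℤ), 1 ≤ q ∧
          (∃ n, Dprod d n ∣ q ∧ ((q:ℝ)/c) ^ i₂ ≤ (Dprod d n : ℝ)) ∧
          (c ^ j₂ * (q:ℝ) ^ (-(1+j₂)) ≤ ((32:ℝ)^(t+1))⁻¹ ∧
            ((32:ℝ)^(t+2))⁻¹ < c ^ j₂ * (q:ℝ) ^ (-(1+j₂))) ∧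
          (∃ z, a ≤ z ∧ z ≤ a + ((32:ℝ)^t)⁻¹ ∧
            |z - (p:ℝ)/(q:ℝ)| ≤ c ^ j₂ * (q:ℝ) ^ (-(1+j₂)))
      · obtain ⟨q₀, p₀, hq₀, hdang₀, hst₀, z₀, hz₀1, hz₀2, hb₀⟩ := h
        refine ⟨(p₀:ℝ)/(q₀:ℝ), ?_⟩
        rintro q p hq hdang hst ⟨z, hza, hzb, hb⟩
        exact center_unique d hd2 c i₂ j₂ hi₂ hj₂ hij₂ hc hc26 t a q q₀ hq hq₀ p p₀
          hdang hdang₀ hst.1 hst.2 hst₀.1 hst₀.2 z z₀ hza hzb hz₀1 hz₀2 hb hb₀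
      · refine ⟨0, ?_⟩
        rintro q p hq hdang hst ⟨z, hza, hzb, hb⟩
        exact absurd ⟨q, p, hq, hdang, hst, z, hza, hzb, hb⟩ h
    obtain ⟨y₁, hy₁⟩ := hy₁
    obtain ⟨y₂, hy₂⟩ := hy₂
    obtain ⟨a', ha1, ha2, ha3⟩ := tile3 a ((32:ℝ)^t)⁻¹ ((32:ℝ)^(t+1))⁻¹ y₁ y₂
      (by positivity) (by positivity) (le_of_eq hρeq)
    refine ⟨a', ha1, by linarith [hρeq], ?_⟩
    intro q hq p
    constructor
    · intro hdang hst z hza hzb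
      by_contra hcon
      push_neg at hcon
      have hzwin : a ≤ z ∧ z ≤ a + ((32:ℝ)^t)⁻¹ :=
        ⟨le_trans ha1 hza, by linarith [hρeq]⟩
      have hcc := hy₁ q p hq hdang hst ⟨z, hzwin.1, hzwin.2, hcon⟩
      have hfar := (ha3 z hza (by linarith [hρeq])).1
      rw [← hcc] at hfar
      exact absurd (le_trans hcon hst.1) (not_le.mpr hfar)
    · intro hdang hst z hza hzb
      by_contra hcon
      push_neg at hcon
      have hzwin : a ≤ z ∧ z ≤ a + ((32:ℝ)^t)⁻¹ :=
        ⟨le_trans ha1 hza, by linarith [hρeq]⟩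
      have hcc := hy₂ q p hq hdang hst ⟨z, hzwin.1, hzwin.2, hcon⟩
      have hfar := (ha3 z hza (by linarith [hρeq])).2
      rw [← hcc] at hfar
      exact absurd (le_trans hcon hst.1) (not_le.mpr hfar)
  -- iterate
  choose F hF using step
  let seq : ℕ → ℝ := fun t => Nat.rec (motive := fun _ => ℝ) 0 (fun t a => F t a) t
  have hseq : ∀ t, seq (t+1) = F t (seq t) := fun t => rfl
  have hchain : ∀ t u, t ≤ u → seq t ≤ seq u ∧
      seq u + ((32:ℝ)^u)⁻¹ ≤ seq t + ((32:ℝ)^t)⁻¹ := by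
    intro t u hu
    induction u, hu using Nat.le_induction with
    | base => exact ⟨le_rfl, le_rfl⟩
    | succ u hu ih =>
      have h1 := (hF u (seq u)).1
      have h2 := (hF u (seq u)).2.1
      rw [← hseq] at h1 h2
      exact ⟨le_trans ih.1 h1, le_trans h2 ih.2⟩
  have hbdd : BddAbove (Set.range seq) := by
    refine ⟨seq 0 + 1, ?_⟩
    rintro y ⟨u, rfl⟩
    have h := (hchain 0 u (Nat.zero_le u)).2
    have hp : (0:ℝ) < ((32:ℝ)^u)⁻¹ := by positivity
    have h0 : ((32:ℝ)^(0:ℕ))⁻¹ = 1 := by norm_num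
    rw [h0] at h
    linarith
  set x := sSup (Set.range seq) with hxdef
  have hxmem : ∀ t, seq t ≤ x ∧ x ≤ seq t + ((32:ℝ)^t)⁻¹ := by
    intro t
    constructor
    · exact le_csSup hbdd ⟨t, rfl⟩
    · refine csSup_le ⟨seq 0, ⟨0, rfl⟩⟩ ?_
      rintro y ⟨u, rfl⟩
      rcases le_total t u with h | h
      · have h2 := (hchain t u h).2
        have hp : (0:ℝ) < ((32:ℝ)^u)⁻¹ := by positivity
        linarith
      · have h2 := (hchain u t h).1
        have hp : (0:ℝ) < ((32:ℝ)^t)⁻¹ := by positivity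
        linarith
  refine ⟨x, ?_⟩
  intro q hq p
  have hqR : (1:ℝ) ≤ (q:ℝ) := by exact_mod_cast hq
  have hbig : ∀ js : ℝ, 0 < js → c ^ js ≤ ((32:ℝ)^(1:ℕ))⁻¹ →
      c ^ js * (q:ℝ) ^ (-(1+js)) ≤ ((32:ℝ)^(1:ℕ))⁻¹ := by
    intro js hjs hcjs
    calc c ^ js * (q:ℝ) ^ (-(1+js)) ≤ c ^ js * 1 :=
          mul_le_mul_of_nonneg_left
            (Real.rpow_le_one_of_one_le_of_nonpos hqR (by linarith))
            (Real.rpow_pos_of_pos hc js).le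
      _ = c ^ js := mul_one _
      _ ≤ _ := hcjs
  constructor
  · intro hdang
    have hrpos : 0 < c ^ j₁ * (q:ℝ) ^ (-(1+j₁)) := by positivity
    obtain ⟨t, ht1, ht2⟩ := stage_exists _ hrpos (hbig j₁ hj₁ hcj1)
    have hx1 := (hxmem (t+1)).1
    have hx2 := (hxmem (t+1)).2
    rw [hseq] at hx1 hx2
    exact ((hF t (seq t)).2.2 q hq p).1 hdang ⟨ht1, ht2⟩ x hx1 hx2
  · intro hdang
    have hrpos : 0 < c ^ j₂ * (q:ℝ) ^ (-(1+j₂)) := by positivity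
    obtain ⟨t, ht1, ht2⟩ := stage_exists _ hrpos (hbig j₂ hj₂ hcj2)
    have hx1 := (hxmem (t+1)).1
    have hx2 := (hxmem (t+1)).2
    rw [hseq] at hx1 hx2
    exact ((hF t (seq t)).2.2 q hq p).2 hdang ⟨ht1, ht2⟩ x hx1 hx2


lemma mem_BadD (d : ℕ → ℕ) (hd2 : ∀ k, 2 ≤ d k)
    (i j : ℝ) (hi : 0 < i) (hj : 0 < j)
    (c : ℝ) (hc : 0 < c) (x : ℝ)
    (havoid : ∀ q : ℕ, 1 ≤ q → ∀ p : ℤ,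
      (∃ n, Dprod d n ∣ q ∧ ((q:ℝ)/c) ^ i ≤ (Dprod d n : ℝ)) →
      c ^ j * (q:ℝ) ^ (-(1+j)) < |x - (p:ℝ)/(q:ℝ)|) :
    x ∈ BadD d i j := by
  refine ⟨c, hc, ?_⟩
  intro q hq
  have hq1 : 1 ≤ q := hq
  have hQ0 : (0:ℝ) < (q:ℝ) := by exact_mod_cast hq
  by_cases hdang : ∃ n, Dprod d n ∣ q ∧ ((q:ℝ)/c) ^ i ≤ (Dprod d n : ℝ)
  · -- the distance term wins
    set p : ℤ := round ((q:ℝ) * x) with hp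
    have h1 := havoid q hq1 p hdang
    have e1 : distNearestInt ((q:ℝ) * x) = (q:ℝ) * |x - (p:ℝ)/(q:ℝ)| := by
      simp only [distNearestInt, ← hp]
      rw [← abs_of_pos hQ0, ← abs_mul]
      congr 1
      field_simp
      rw [abs_of_pos hQ0]; ring
    have h2 : c ^ j * (q:ℝ) ^ (-j) < distNearestInt ((q:ℝ) * x) := by
      rw [e1]
      have hmul := mul_lt_mul_of_pos_left h1 hQ0
      calc c ^ j * (q:ℝ) ^ (-j) = (q:ℝ) * (c ^ j * (q:ℝ) ^ (-(1+j))) := by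
            rw [show (-j : ℝ) = 1 + -(1+j) by ring, Real.rpow_add hQ0, Real.rpow_one]; ring
        _ < _ := hmul
    have e2 : c ^ j * (q:ℝ) ^ (-j) = (c / (q:ℝ)) ^ j := by
      rw [Real.div_rpow hc.le hQ0.le, Real.rpow_neg hQ0.le, div_eq_mul_inv]
    rw [e2] at h2
    have h3 : ((c / (q:ℝ)) ^ j) ^ (1/j) < distNearestInt ((q:ℝ)*x) ^ (1/j) :=
      Real.rpow_lt_rpow (by positivity) h2 (by positivity)
    have e3 : ((c / (q:ℝ)) ^ j) ^ (1/j) = c / (q:ℝ) := by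
      rw [← Real.rpow_mul (by positivity), mul_one_div, div_self hj.ne', Real.rpow_one]
    rw [e3] at h3
    exact lt_of_lt_of_le h3 (le_max_right _ _)
  · -- the pseudo–absolute–value term wins
    push_neg at hdang
    have hbd := hdang (bestN d q) (bestN_dvd d q)
    have hpa : pseudoAbs d q = ((Dprod d (bestN d q) : ℝ))⁻¹ := pseudoAbs_eq hd2 hq
    have hD0 : (0:ℝ) < (Dprod d (bestN d q) : ℝ) := by
      exact_mod_cast Dprod_pos hd2 _
    have hqc : (0:ℝ) < (q:ℝ)/c := by positivity
    have h2 : (c/(q:ℝ)) ^ i < pseudoAbs d q := by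
      rw [hpa]
      have h3 : (((q:ℝ)/c) ^ i)⁻¹ < ((Dprod d (bestN d q) : ℝ))⁻¹ := by
        apply inv_strictAnti₀ hD0 hbd
      have e4 : (((q:ℝ)/c) ^ i)⁻¹ = (c/(q:ℝ))^i := by
        rw [← Real.inv_rpow hqc.le, inv_div]
      rwa [e4] at h3
    have h3 : ((c/(q:ℝ)) ^ i) ^ (1/i) < pseudoAbs d q ^ (1/i) :=
      Real.rpow_lt_rpow (by positivity) h2 (by positivity)
    have e5 : ((c/(q:ℝ)) ^ i) ^ (1/i) = c/(q:ℝ) := by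
      rw [← Real.rpow_mul (by positivity), mul_one_div, div_self hi.ne', Real.rpow_one]
    rw [e5] at h3
    exact lt_of_lt_of_le h3 (le_max_left _ _)

end MS

/-- The mixed Schmidt conjecture: for a bounded sequence `d` of integers `≥ 2` and two
admissible pairs `(i₁,j₁)`, `(i₂,j₂)`, the sets `Bad_𝒟(i₁,j₁)` and `Bad_𝒟(i₂,j₂)`
intersect. -/
theorem mixed_schmidt_conjecture (d : ℕ → ℕ) (hd2 : ∀ k, 2 ≤ d k) (hdbdd : ∃ M, ∀ k, d k ≤ M)
    (i₁ j₁ i₂ j₂ : ℝ)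
    (hi₁ : 0 < i₁) (hi₁' : i₁ < 1) (hj₁ : 0 < j₁) (hj₁' : j₁ < 1) (hij₁ : i₁ + j₁ = 1)
    (hi₂ : 0 < i₂) (hi₂' : i₂ < 1) (hj₂ : 0 < j₂) (hj₂' : j₂ < 1) (hij₂ : i₂ + j₂ = 1) :
    (BadD d i₁ j₁ ∩ BadD d i₂ j₂).Nonempty := by
  classical
  have h32pos : (0:ℝ) < ((32:ℝ)^(1:ℕ))⁻¹ := by norm_num
  set c : ℝ := min (min (((2:ℝ)^(26:ℕ))⁻¹) ((((32:ℝ)^(1:ℕ))⁻¹) ^ (1/j₁)))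
      ((((32:ℝ)^(1:ℕ))⁻¹) ^ (1/j₂)) with hcdef
  have hc : 0 < c :=
    lt_min (lt_min (by positivity) (Real.rpow_pos_of_pos h32pos _))
      (Real.rpow_pos_of_pos h32pos _)
  have hc26 : c ≤ ((2:ℝ)^(26:ℕ))⁻¹ := le_trans (min_le_left _ _) (min_le_left _ _)
  have hcj1 : c ^ j₁ ≤ ((32:ℝ)^(1:ℕ))⁻¹ := by
    have h1 : c ≤ (((32:ℝ)^(1:ℕ))⁻¹) ^ (1/j₁) := le_trans (min_le_left _ _) (min_le_right _ _)
    calc c ^ j₁ ≤ ((((32:ℝ)^(1:ℕ))⁻¹) ^ (1/j₁)) ^ j₁ := Real.rpow_le_rpow hc.le h1 hj₁.le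
      _ = ((32:ℝ)^(1:ℕ))⁻¹ := by
        rw [← Real.rpow_mul h32pos.le, one_div, inv_mul_cancel₀ hj₁.ne', Real.rpow_one]
  have hcj2 : c ^ j₂ ≤ ((32:ℝ)^(1:ℕ))⁻¹ := by
    have h1 : c ≤ (((32:ℝ)^(1:ℕ))⁻¹) ^ (1/j₂) := min_le_right _ _
    calc c ^ j₂ ≤ ((((32:ℝ)^(1:ℕ))⁻¹) ^ (1/j₂)) ^ j₂ := Real.rpow_le_rpow hc.le h1 hj₂.le
      _ = ((32:ℝ)^(1:ℕ))⁻¹ := by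
        rw [← Real.rpow_mul h32pos.le, one_div, inv_mul_cancel₀ hj₂.ne', Real.rpow_one]
  obtain ⟨x, hx⟩ := MS.construction d hd2 i₁ j₁ i₂ j₂ hi₁ hj₁ hij₁ hi₂ hj₂ hij₂
    c hc hc26 hcj1 hcj2
  refine ⟨x, ?_, ?_⟩
  · exact MS.mem_BadD d hd2 i₁ j₁ hi₁ hj₁ c hc x (fun q hq p hdang => (hx q hq p).1 hdang)
  · exact MS.mem_BadD d hd2 i₂ j₂ hi₂ hj₂ c hc x (fun q hq p hdang => (hx q hq p).2 hdang)
end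

section
/- Let $p$ and $q$ be two distinct prime numbers, and let $(i_1,j_1)$ and $(i_2,j_2)$ be two pairs of real numbers with $0 < i_s, j_s < 1$ and $i_s + j_s = 1$ for $s = 1,2$. Then $\mathrm{Bad}_p(i_1,j_1) \cap \mathrm{Bad}_q(i_2,j_2) \neq \emptyset$. -/
/-- The usual `p`-adic norm of a natural number: `|n|_p = p ^ (-v_p(n))`. -/
noncomputable def padicAbs (p n : ℕ) : ℝ := (p : ℝ) ^ (-(padicValNat p n : ℤ))

/-- The set of `p`-adic mixed `(i,j)`-badly approximable numbers `Bad_p(i,j)`. -/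
def Badp (p : ℕ) (i j : ℝ) : Set ℝ :=
  {x : ℝ | ∃ c : ℝ, 0 < c ∧ ∀ n : ℕ, 0 < n →
    max (padicAbs p n ^ (1 / i)) (distNearestInt ((n : ℝ) * x) ^ (1 / j)) > c / (n : ℝ)}

/-- the fixed small constant of the construction -/
noncomputable def blvC : ℝ := 1 / 131072

/-- naturals whose `R`-part is large (the "dangerous" denominators) -/
def blvS (R : ℕ) (i : ℝ) : Set ℕ := {n | 0 < n ∧ padicAbs R n ^ (1 / i) ≤ blvC / n}

/-- radius of the danger interval attached to `n` -/
noncomputable def blvRad (n : ℕ) (j : ℝ) : ℝ := (blvC / n) ^ j / n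

/-- the scale class of `n` -/
noncomputable def blvT (n : ℕ) (j : ℝ) : ℕ := ⌊Real.logb 16 (blvRad n j)⁻¹⌋₊

/-- danger centers at scale `t` -/
def blvD (R : ℕ) (i j : ℝ) (t : ℕ) : Set ℝ :=
  {y | ∃ n : ℕ, ∃ a : ℤ, n ∈ blvS R i ∧ blvT n j = t ∧ y = (a : ℝ) / n}

lemma blvC_pos : (0:ℝ) < blvC := by norm_num [blvC]

lemma blvRad_pos {n : ℕ} (hn : 0 < n) (j : ℝ) : 0 < blvRad n j := by
  have hn' : (0:ℝ) < n := by exact_mod_cast hn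
  exact div_pos (Real.rpow_pos_of_pos (div_pos blvC_pos hn') j) hn'

lemma blvRad_le_one {n : ℕ} (hn : 0 < n) {j : ℝ} (hj : 0 < j) : blvRad n j ≤ 1 := by
  have hn' : (1:ℝ) ≤ n := by exact_mod_cast hn
  have h1 : (blvC / n) ≤ 1 := by
    rw [div_le_one (by linarith)]
    calc blvC ≤ 1 := by norm_num [blvC]
    _ ≤ n := hn'
  have h2 : (blvC / n) ^ j ≤ 1 :=
    Real.rpow_le_one (le_of_lt (div_pos blvC_pos (by linarith))) h1 (le_of_lt hj)
  have hn0 : (0:ℝ) < n := by linarith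
  rw [blvRad, div_le_one hn0]
  linarith

lemma blvT_spec {n : ℕ} (hn : 0 < n) {j : ℝ} (hj : 0 < j) :
    blvRad n j ≤ (16:ℝ)⁻¹ ^ (blvT n j) ∧ (16:ℝ)⁻¹ ^ (blvT n j + 1) < blvRad n j := by
  set r := blvRad n j with hr
  have hr0 : 0 < r := blvRad_pos hn j
  have hr1 : r ≤ 1 := blvRad_le_one hn hj
  have hinv1 : (1:ℝ) ≤ r⁻¹ := (one_le_inv₀ hr0).mpr hr1
  have hL0 : 0 ≤ Real.logb 16 r⁻¹ := Real.logb_nonneg (by norm_num) hinv1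
  set t := blvT n j with htdef
  have htt : t = ⌊Real.logb 16 r⁻¹⌋₊ := rfl
  have hlogb : (16:ℝ) ^ Real.logb 16 r⁻¹ = r⁻¹ :=
    Real.rpow_logb (by norm_num) (by norm_num) (inv_pos.mpr hr0)
  constructor
  · have h1 : (t:ℝ) ≤ Real.logb 16 r⁻¹ := by rw [htt]; exact Nat.floor_le hL0
    have h2 : (16:ℝ) ^ (t:ℝ) ≤ r⁻¹ := by
      rw [← hlogb]; exact Real.rpow_le_rpow_of_exponent_le (by norm_num) h1
    rw [Real.rpow_natCast] at h2
    have h3 : r ≤ ((16:ℝ) ^ t)⁻¹ := by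
      rw [← inv_inv r]
      exact inv_anti₀ (by positivity) h2
    rwa [← inv_pow] at h3
  · have h1 : Real.logb 16 r⁻¹ < (t:ℝ) + 1 := by rw [htt]; exact Nat.lt_floor_add_one _
    have h2 : r⁻¹ < (16:ℝ) ^ ((t:ℝ) + 1) := by
      rw [← hlogb]; exact Real.rpow_lt_rpow_of_exponent_lt (by norm_num) h1
    have h2' : r⁻¹ < (16:ℝ) ^ (t + 1) := by
      rw [show ((t:ℝ) + 1) = ((t+1 : ℕ) : ℝ) by push_cast; ring] at h2
      rwa [Real.rpow_natCast] at h2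
    have h3 : ((16:ℝ) ^ (t+1))⁻¹ < r := by
      have := inv_strictAnti₀ (inv_pos.mpr hr0) h2'
      rwa [inv_inv] at this
    rwa [← inv_pow] at h3

lemma blv_F1 (R : ℕ) (hR : 2 ≤ R) {i : ℝ} (hi : 0 < i) {n : ℕ} (hn : n ∈ blvS R i) :
    ((n:ℝ) / blvC) ^ i ≤ (R:ℝ) ^ (padicValNat R n) := by
  obtain ⟨hn0, hle⟩ := hn
  set v := padicValNat R n with hv
  have hR1 : (1:ℝ) < R := by exact_mod_cast hR
  have hR0 : (0:ℝ) < R := by linarith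
  have hn0' : (0:ℝ) < n := by exact_mod_cast hn0
  have hcn : (0:ℝ) < blvC / n := div_pos blvC_pos hn0'
  -- rewrite padicAbs as rpow
  have h1 : padicAbs R n = (R:ℝ) ^ (-(v:ℝ)) := by
    rw [padicAbs, ← Real.rpow_intCast (R:ℝ) (-(v:ℤ))]
    push_cast
    ring_nf
  have h2 : (padicAbs R n) ^ (1/i) = (R:ℝ) ^ (-(v:ℝ) * (1/i)) := by
    rw [h1, ← Real.rpow_mul (le_of_lt hR0)]
  rw [h2] at hle
  -- raise to the power i
  have h3 : ((R:ℝ) ^ (-(v:ℝ) * (1/i))) ^ i ≤ (blvC / n) ^ i :=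
    Real.rpow_le_rpow (by positivity) hle (le_of_lt hi)
  have h4 : ((R:ℝ) ^ (-(v:ℝ) * (1/i))) ^ i = (R:ℝ) ^ (-(v:ℝ)) := by
    rw [← Real.rpow_mul (le_of_lt hR0)]
    congr 1
    field_simp
  rw [h4] at h3
  -- invert
  have h5 : ((blvC / n) ^ i)⁻¹ ≤ ((R:ℝ) ^ (-(v:ℝ)))⁻¹ :=
    inv_anti₀ (by positivity) h3
  have h6 : ((R:ℝ) ^ (-(v:ℝ)))⁻¹ = (R:ℝ) ^ (v:ℝ) := by
    rw [Real.rpow_neg (le_of_lt hR0), inv_inv]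
  have h7 : ((blvC / n) ^ i)⁻¹ = ((n:ℝ) / blvC) ^ i := by
    rw [← Real.inv_rpow (le_of_lt hcn), inv_div]
  rw [h6, h7] at h5
  rwa [Real.rpow_natCast] at h5

lemma blv_n_lower {n : ℕ} (hn : 0 < n) {j : ℝ} (hj : 0 < j) :
    blvC ^ j * 16 ^ (blvT n j) ≤ (n:ℝ) ^ ((1:ℝ) + j) := by
  have hn0 : (0:ℝ) < n := by exact_mod_cast hn
  have h := (blvT_spec hn hj).1
  set t := blvT n j
  rw [blvRad, Real.div_rpow (le_of_lt blvC_pos) (le_of_lt hn0), inv_pow, div_div] at h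
  have h16 : (0:ℝ) < (16:ℝ) ^ t := by positivity
  have hnj : (0:ℝ) < (n:ℝ) ^ j := Real.rpow_pos_of_pos hn0 j
  have h2 : blvC ^ j ≤ ((16:ℝ) ^ t)⁻¹ * ((n:ℝ) ^ j * n) := by
    rwa [div_le_iff₀ (by positivity)] at h
  rw [Real.rpow_add hn0, Real.rpow_one]
  calc blvC ^ j * 16 ^ t ≤ (((16:ℝ) ^ t)⁻¹ * ((n:ℝ) ^ j * n)) * 16 ^ t :=
        mul_le_mul_of_nonneg_right h2 h16.le
    _ = (n:ℝ) * (n:ℝ) ^ j := by field_simp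

lemma blv_n_upper {n : ℕ} (hn : 0 < n) {j : ℝ} (hj : 0 < j) :
    (n:ℝ) ^ ((1:ℝ) + j) < blvC ^ j * 16 ^ (blvT n j + 1) := by
  have hn0 : (0:ℝ) < n := by exact_mod_cast hn
  have h := (blvT_spec hn hj).2
  set t := blvT n j
  rw [blvRad, Real.div_rpow (le_of_lt blvC_pos) (le_of_lt hn0), inv_pow, div_div] at h
  have h16 : (0:ℝ) < (16:ℝ) ^ (t+1) := by positivity
  have hnj : (0:ℝ) < (n:ℝ) ^ j := Real.rpow_pos_of_pos hn0 j
  have h2 : ((16:ℝ) ^ (t+1))⁻¹ * ((n:ℝ) ^ j * n) < blvC ^ j := by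
    rwa [lt_div_iff₀ (by positivity)] at h
  rw [Real.rpow_add hn0, Real.rpow_one]
  calc (n:ℝ) * (n:ℝ) ^ j = (((16:ℝ) ^ (t+1))⁻¹ * ((n:ℝ) ^ j * n)) * 16 ^ (t+1) := by
        field_simp
    _ < blvC ^ j * 16 ^ (t+1) := mul_lt_mul_of_pos_right h2 h16

lemma blv_spacing (R : ℕ) (hR : 2 ≤ R) {i j : ℝ} (hi : 0 < i) (hj : 0 < j)
    (hij : i + j = 1) (t : ℕ) {n n' : ℕ} {a a' : ℤ}
    (hn : n ∈ blvS R i) (hn' : n' ∈ blvS R i)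
    (ht : blvT n j = t) (ht' : blvT n' j = t)
    (hne : (a:ℝ)/n ≠ (a':ℝ)/n') :
    512 * (16:ℝ)⁻¹ ^ t ≤ |(a:ℝ)/n - (a':ℝ)/n'| := by
  have hn0 : 0 < n := hn.1
  have hn0' : 0 < n' := hn'.1
  have hnR : (0:ℝ) < n := by exact_mod_cast hn0
  have hnR' : (0:ℝ) < n' := by exact_mod_cast hn0'
  have hRR : (0:ℝ) < R := by positivity
  have h1j : (0:ℝ) < 1 + j := by linarith
  set X : ℝ := blvC ^ j * 16 ^ t with hX
  have hXpos : 0 < X := by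
    have := Real.rpow_pos_of_pos blvC_pos j
    positivity
  set A : ℝ := X ^ (1/(1+j)) with hA
  have hApos : 0 < A := Real.rpow_pos_of_pos hXpos _
  have hA1j : A ^ ((1:ℝ)+j) = X := by
    rw [hA, ← Real.rpow_mul hXpos.le]
    rw [one_div_mul_cancel (by linarith : (1:ℝ)+j ≠ 0), Real.rpow_one]
  -- A ≤ n and n ≤ 16 A, similarly for n'
  have key_low : ∀ m : ℕ, 0 < m → blvT m j = t → A ≤ (m:ℝ) := by
    intro m hm htm
    have hmR : (0:ℝ) < m := by exact_mod_cast hm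
    have h := blv_n_lower hm hj
    rw [htm, ← hX] at h
    calc A = X ^ (1/(1+j)) := rfl
      _ ≤ ((m:ℝ) ^ ((1:ℝ)+j)) ^ (1/(1+j)) :=
          Real.rpow_le_rpow hXpos.le h (by positivity)
      _ = (m:ℝ) := by
          rw [← Real.rpow_mul hmR.le, mul_one_div_cancel (by linarith : (1:ℝ)+j ≠ 0),
            Real.rpow_one]
  have key_high : ∀ m : ℕ, 0 < m → blvT m j = t → (m:ℝ) ≤ 16 * A := by
    intro m hm htm
    have hmR : (0:ℝ) < m := by exact_mod_cast hm
    have h := blv_n_upper hm hj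
    rw [htm] at h
    rw [show blvC ^ j * 16 ^ (t+1) = 16 * X by rw [hX]; ring] at h
    have h2 : (16:ℝ) * X ≤ (16 * A) ^ ((1:ℝ)+j) := by
      rw [Real.mul_rpow (by norm_num) hApos.le, hA1j]
      have : (16:ℝ) = (16:ℝ) ^ (1:ℝ) := (Real.rpow_one _).symm
      nth_rewrite 1 [this]
      exact mul_le_mul_of_nonneg_right
        (Real.rpow_le_rpow_of_exponent_le (by norm_num) (by linarith)) hXpos.le
    have h3 : (m:ℝ) ^ ((1:ℝ)+j) ≤ (16 * A) ^ ((1:ℝ)+j) := le_trans h.le h2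
    calc (m:ℝ) = ((m:ℝ) ^ ((1:ℝ)+j)) ^ (1/(1+j)) := by
          rw [← Real.rpow_mul hmR.le, mul_one_div_cancel (by linarith : (1:ℝ)+j ≠ 0),
            Real.rpow_one]
      _ ≤ ((16*A) ^ ((1:ℝ)+j)) ^ (1/(1+j)) :=
          Real.rpow_le_rpow (by positivity) h3 (by positivity)
      _ = 16 * A := by
          rw [← Real.rpow_mul (by positivity), mul_one_div_cancel
            (by linarith : (1:ℝ)+j ≠ 0), Real.rpow_one]
  have hAn : A ≤ (n:ℝ) := key_low n hn0 ht
  have hAn' : A ≤ (n':ℝ) := key_low n' hn0' ht'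
  have hn16 : (n:ℝ) ≤ 16 * A := key_high n hn0 ht
  have hn16' : (n':ℝ) ≤ 16 * A := key_high n' hn0' ht'
  -- the numerator
  set N : ℤ := a * (n':ℤ) - a' * (n:ℤ) with hN
  have hNne : N ≠ 0 := by
    intro h0
    apply hne
    have h1 : a * (n':ℤ) = a' * (n:ℤ) := sub_eq_zero.mp (hN ▸ h0)
    have h2 : (a:ℝ) * (n':ℝ) = (a':ℝ) * (n:ℝ) := by exact_mod_cast congrArg (fun z : ℤ => (z:ℝ)) h1
    rw [div_eq_div_iff hnR.ne' hnR'.ne']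
    exact h2
  set v := padicValNat R n with hv
  set v' := padicValNat R n' with hv'
  have hdvd : (R:ℤ) ^ (min v v') ∣ N := by
    have d1 : (R:ℤ) ^ v ∣ (n:ℤ) := by exact_mod_cast Int.natCast_dvd_natCast.mpr pow_padicValNat_dvd
    have d2 : (R:ℤ) ^ v' ∣ (n':ℤ) := by exact_mod_cast Int.natCast_dvd_natCast.mpr pow_padicValNat_dvd
    apply dvd_sub
    · exact Dvd.dvd.mul_left (dvd_trans (pow_dvd_pow _ (min_le_right v v')) d2) a
    · exact Dvd.dvd.mul_left (dvd_trans (pow_dvd_pow _ (min_le_left v v')) d1) a'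
  have habs : ((R:ℝ)) ^ (min v v') ≤ |(N:ℝ)| := by
    have h1 : (R:ℤ) ^ (min v v') ≤ |N| :=
      Int.le_of_dvd (abs_pos.mpr hNne) ((dvd_abs _ _).mpr hdvd)
    calc ((R:ℝ)) ^ (min v v') = (((R:ℤ) ^ (min v v') : ℤ) : ℝ) := by push_cast; ring
      _ ≤ ((|N| : ℤ) : ℝ) := by exact_mod_cast h1
      _ = |(N:ℝ)| := by push_cast; ring
  -- lower bound (A/blvC)^i for the numerator
  have hmin : ((A / blvC) ^ i : ℝ) ≤ (R:ℝ) ^ (min v v') := by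
    have b1 : ((n:ℝ) / blvC) ^ i ≤ (R:ℝ) ^ v := blv_F1 R hR hi hn
    have b2 : ((n':ℝ) / blvC) ^ i ≤ (R:ℝ) ^ v' := blv_F1 R hR hi hn'
    have c1 : ((A / blvC) ^ i : ℝ) ≤ ((n:ℝ) / blvC) ^ i :=
      Real.rpow_le_rpow (le_of_lt (div_pos hApos blvC_pos))
        (div_le_div_of_nonneg_right hAn blvC_pos.le) hi.le
    have c2 : ((A / blvC) ^ i : ℝ) ≤ ((n':ℝ) / blvC) ^ i :=
      Real.rpow_le_rpow (le_of_lt (div_pos hApos blvC_pos))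
        (div_le_div_of_nonneg_right hAn' blvC_pos.le) hi.le
    rcases min_cases v v' with ⟨h, _⟩ | ⟨h, _⟩
    · rw [h]; exact le_trans c1 b1
    · rw [h]; exact le_trans c2 b2
  -- the distance identity
  have hsub : (a:ℝ)/n - (a':ℝ)/n' = (N:ℝ)/((n:ℝ)*n') := by
    rw [hN]; push_cast; field_simp
  have hNpos : (0:ℝ) < (A / blvC) ^ i := Real.rpow_pos_of_pos (div_pos hApos blvC_pos) i
  have heq : |(a:ℝ)/n - (a':ℝ)/n'| = |(N:ℝ)| / ((n:ℝ) * n') := by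
    rw [hsub, abs_div, abs_of_pos (mul_pos hnR hnR')]
  rw [heq]
  have step1 : ((A / blvC) ^ i : ℝ) / ((n:ℝ) * n') ≤ |(N:ℝ)| / ((n:ℝ) * n') :=
    div_le_div_of_nonneg_right (le_trans hmin habs) (mul_pos hnR hnR').le
  have step2 : ((A / blvC) ^ i : ℝ) / ((16*A) * (16*A)) ≤ ((A / blvC) ^ i : ℝ) / ((n:ℝ) * n') := by
    apply div_le_div_of_nonneg_left hNpos.le (mul_pos hnR hnR')
    exact mul_le_mul hn16 hn16' hnR'.le (by positivity)
  -- compute the left hand side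
  have hcomp : ((A / blvC) ^ i : ℝ) / ((16*A) * (16*A)) = 512 * (16:ℝ)⁻¹ ^ t := by
    have hAi : (0:ℝ) < A ^ i := Real.rpow_pos_of_pos hApos i
    have hci : (0:ℝ) < blvC ^ i := Real.rpow_pos_of_pos blvC_pos i
    have hcj : (0:ℝ) < blvC ^ j := Real.rpow_pos_of_pos blvC_pos j
    have h16t : (0:ℝ) < (16:ℝ)^t := by positivity
    have hcc : blvC ^ i * blvC ^ j = blvC := by
      rw [← Real.rpow_add blvC_pos, hij, Real.rpow_one]
    have hA2 : A ^ (2:ℝ) = A * A := by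
      rw [show (2:ℝ) = ((2:ℕ):ℝ) by norm_num, Real.rpow_natCast]; ring
    have hAe : A ^ i = X⁻¹ * (A * A) := by
      have e1 : A ^ (i - 2) = X⁻¹ := by
        rw [show i - 2 = -(1+j) by linarith, Real.rpow_neg hApos.le, hA1j]
      calc A ^ i = A ^ ((i-2) + 2) := by congr 1; ring
        _ = A ^ (i-2) * A ^ (2:ℝ) := Real.rpow_add hApos _ _
        _ = X⁻¹ * (A * A) := by rw [e1, hA2]
    have hcjne : blvC ^ j ≠ 0 := hcj.ne'
    have h1 : (blvC ^ j)⁻¹ = 131072 * blvC ^ i := by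
      have h2 : (131072 : ℝ) * (blvC ^ i * blvC ^ j) = 1 := by
        rw [hcc]; norm_num [blvC]
      have h3 : (131072 * blvC ^ i) * blvC ^ j = (blvC ^ j)⁻¹ * blvC ^ j := by
        rw [inv_mul_cancel₀ hcjne]; linarith [h2]
      exact (mul_right_cancel₀ hcjne h3).symm
    rw [Real.div_rpow hApos.le blvC_pos.le, hAe, hX, mul_inv, h1, inv_pow]
    have hAne : A ≠ 0 := hApos.ne'
    have hcine : blvC ^ i ≠ 0 := hci.ne'
    have h16ne : ((16:ℝ)^t) ≠ 0 := h16t.ne'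
    field_simp
    ring
  calc 512 * (16:ℝ)⁻¹ ^ t = ((A / blvC) ^ i : ℝ) / ((16*A) * (16*A)) := hcomp.symm
    _ ≤ ((A / blvC) ^ i : ℝ) / ((n:ℝ) * n') := step2
    _ ≤ |(N:ℝ)| / ((n:ℝ) * n') := step1

lemma blv_window (R : ℕ) (hR : 2 ≤ R) {i j : ℝ} (hi : 0 < i) (hj : 0 < j)
    (hij : i + j = 1) (t : ℕ) {u y y' : ℝ}
    (hy : y ∈ blvD R i j t) (hy' : y' ∈ blvD R i j t)
    (h1 : u ≤ y) (h2 : y ≤ u + 258 * (16:ℝ)⁻¹ ^ t)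
    (h1' : u ≤ y') (h2' : y' ≤ u + 258 * (16:ℝ)⁻¹ ^ t) : y = y' := by
  by_contra hne
  obtain ⟨n, a, hnS, hnT, rfl⟩ := hy
  obtain ⟨n', a', hnS', hnT', rfl⟩ := hy'
  have hsp := blv_spacing R hR hi hj hij t hnS hnS' hnT hnT' hne
  have hab : |(a:ℝ)/n - (a':ℝ)/n'| ≤ 258 * (16:ℝ)⁻¹ ^ t := by
    rw [abs_le]; constructor <;> linarith
  have hε : (0:ℝ) < (16:ℝ)⁻¹ ^ t := by positivity
  linarith

lemma blv_step (p q : ℕ) (hp : 2 ≤ p) (hq : 2 ≤ q) {i₁ j₁ i₂ j₂ : ℝ}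
    (hi₁ : 0 < i₁) (hj₁ : 0 < j₁) (hij₁ : i₁ + j₁ = 1)
    (hi₂ : 0 < i₂) (hj₂ : 0 < j₂) (hij₂ : i₂ + j₂ = 1) (t : ℕ) (u : ℝ) :
    ∃ u', u ≤ u' ∧ u' + 256 * (16:ℝ)⁻¹ ^ (t+1) ≤ u + 256 * (16:ℝ)⁻¹ ^ t ∧
      ∀ y ∈ blvD p i₁ j₁ t ∪ blvD q i₂ j₂ t, ∀ z, u' ≤ z →
        z ≤ u' + 256 * (16:ℝ)⁻¹ ^ (t+1) → (16:ℝ)⁻¹ ^ t < |z - y| := by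
  set ε : ℝ := (16:ℝ)⁻¹ ^ t with hεdef
  have hε : (0:ℝ) < ε := by positivity
  set w : ℝ := 256 * (16:ℝ)⁻¹ ^ (t+1) with hwdef
  have hw : w = 16 * ε := by rw [hwdef, hεdef, pow_succ]; ring
  set Bad : ℝ → ℝ → Prop := fun y v => ∃ z, v ≤ z ∧ z ≤ v + w ∧ |z - y| ≤ ε with hBad
  set Bad' : ℝ → Prop := fun y => ∃ z, u ≤ z ∧ z ≤ u + 256 * ε ∧ |z - y| ≤ ε with hBad'
  have hrep1 : ∃ y₀, ∀ y ∈ blvD p i₁ j₁ t, Bad' y → y = y₀ := by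
    by_cases h : ∃ y, y ∈ blvD p i₁ j₁ t ∧ Bad' y
    · obtain ⟨y₀, hy₀D, hy₀B⟩ := h
      refine ⟨y₀, fun y hyD hyB => ?_⟩
      obtain ⟨z, hz1, hz2, hz3⟩ := hyB
      obtain ⟨z', hz1', hz2', hz3'⟩ := hy₀B
      rw [abs_le] at hz3 hz3'
      exact blv_window p hp hi₁ hj₁ hij₁ t (u := u - ε) hyD hy₀D
        (by linarith [hz3.1, hz3.2]) (by linarith [hz3.1, hz3.2])
        (by linarith [hz3'.1, hz3'.2]) (by linarith [hz3'.1, hz3'.2])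
    · exact ⟨0, fun y hyD hyB => absurd ⟨y, hyD, hyB⟩ h⟩
  have hrep2 : ∃ y₀, ∀ y ∈ blvD q i₂ j₂ t, Bad' y → y = y₀ := by
    by_cases h : ∃ y, y ∈ blvD q i₂ j₂ t ∧ Bad' y
    · obtain ⟨y₀, hy₀D, hy₀B⟩ := h
      refine ⟨y₀, fun y hyD hyB => ?_⟩
      obtain ⟨z, hz1, hz2, hz3⟩ := hyB
      obtain ⟨z', hz1', hz2', hz3'⟩ := hy₀B
      rw [abs_le] at hz3 hz3'
      exact blv_window q hq hi₂ hj₂ hij₂ t (u := u - ε) hyD hy₀D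
        (by linarith [hz3.1, hz3.2]) (by linarith [hz3.1, hz3.2])
        (by linarith [hz3'.1, hz3'.2]) (by linarith [hz3'.1, hz3'.2])
    · exact ⟨0, fun y hyD hyB => absurd ⟨y, hyD, hyB⟩ h⟩
  obtain ⟨y₁, hy₁⟩ := hrep1
  obtain ⟨y₂, hy₂⟩ := hrep2
  have honebad : ∀ y v v', Bad y v → Bad y v' → v' ≤ v + w + 2 * ε := by
    rintro y v v' ⟨z, hz1, hz2, hz3⟩ ⟨z', hz1', hz2', hz3'⟩
    rw [abs_le] at hz3 hz3'
    linarith [hz3.1, hz3.2, hz3'.1, hz3'.2]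
  have hsel : ∃ v, u ≤ v ∧ v + w ≤ u + 256 * ε ∧ ¬ Bad y₁ v ∧ ¬ Bad y₂ v := by
    by_cases h1 : ¬ Bad y₁ u ∧ ¬ Bad y₂ u
    · exact ⟨u, le_refl u, by linarith, h1.1, h1.2⟩
    · by_cases h2 : ¬ Bad y₁ (u + 5*w) ∧ ¬ Bad y₂ (u + 5*w)
      · exact ⟨u + 5*w, by linarith, by linarith, h2.1, h2.2⟩
      · have hA : Bad y₁ u ∨ Bad y₂ u := by
          rcases not_and_or.mp h1 with h | h
          exacts [Or.inl (not_not.mp h), Or.inr (not_not.mp h)]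
        have hB : Bad y₁ (u + 5*w) ∨ Bad y₂ (u + 5*w) := by
          rcases not_and_or.mp h2 with h | h
          exacts [Or.inl (not_not.mp h), Or.inr (not_not.mp h)]
        refine ⟨u + 10*w, by linarith, by linarith, ?_, ?_⟩
        · intro b
          rcases hA with a1 | a2
          · have := honebad y₁ u (u + 10*w) a1 b; linarith
          · rcases hB with b1 | b2
            · have := honebad y₁ (u + 5*w) (u + 10*w) b1 b; linarith
            · have := honebad y₂ u (u + 5*w) a2 b2; linarith
        · intro b
          rcases hA with a1 | a2
          · rcases hB with b1 | b2
            · have := honebad y₁ u (u + 5*w) a1 b1; linarith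
            · have := honebad y₂ (u + 5*w) (u + 10*w) b2 b; linarith
          · have := honebad y₂ u (u + 10*w) a2 b; linarith
  obtain ⟨v, hv1, hv2, hvb1, hvb2⟩ := hsel
  refine ⟨v, hv1, hv2, ?_⟩
  intro y hy z hz1 hz2
  by_contra hcon
  push_neg at hcon
  have hzu : u ≤ z := le_trans hv1 hz1
  have hzu2 : z ≤ u + 256 * ε := by linarith
  rcases hy with hyD | hyD
  · have hyy : y = y₁ := hy₁ y hyD ⟨z, hzu, hzu2, hcon⟩
    exact hvb1 (hyy ▸ ⟨z, hz1, hz2, hcon⟩)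
  · have hyy : y = y₂ := hy₂ y hyD ⟨z, hzu, hzu2, hcon⟩
    exact hvb2 (hyy ▸ ⟨z, hz1, hz2, hcon⟩)

/-- For distinct primes `p, q` and admissible pairs `(i₁,j₁)`, `(i₂,j₂)`, the sets
`Bad_p(i₁,j₁)` and `Bad_q(i₂,j₂)` intersect. -/
theorem badp_inter_badq_nonempty (p q : ℕ) (hp : p.Prime) (hq : q.Prime) (hpq : p ≠ q)
    (i₁ j₁ i₂ j₂ : ℝ)
    (hi₁ : 0 < i₁) (hi₁' : i₁ < 1) (hj₁ : 0 < j₁) (hj₁' : j₁ < 1) (hij₁ : i₁ + j₁ = 1)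
    (hi₂ : 0 < i₂) (hi₂' : i₂ < 1) (hj₂ : 0 < j₂) (hj₂' : j₂ < 1) (hij₂ : i₂ + j₂ = 1) :
    (Badp p i₁ j₁ ∩ Badp q i₂ j₂).Nonempty := by
  have hp2 : 2 ≤ p := hp.two_le
  have hq2 : 2 ≤ q := hq.two_le
  have key : ∀ (t : ℕ) (u : ℝ), ∃ u', u ≤ u' ∧
      u' + 256 * (16:ℝ)⁻¹ ^ (t+1) ≤ u + 256 * (16:ℝ)⁻¹ ^ t ∧
      ∀ y ∈ blvD p i₁ j₁ t ∪ blvD q i₂ j₂ t, ∀ z, u' ≤ z →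
        z ≤ u' + 256 * (16:ℝ)⁻¹ ^ (t+1) → (16:ℝ)⁻¹ ^ t < |z - y| :=
    fun t u => blv_step p q hp2 hq2 hi₁ hj₁ hij₁ hi₂ hj₂ hij₂ t u
  choose g hg1 hg2 hg3 using key
  let f : ℕ → ℝ := fun t => Nat.rec (motive := fun _ => ℝ) 0 (fun t u => g t u) t
  have hfs : ∀ t, f (t+1) = g t (f t) := fun t => rfl
  have hmono : Monotone f := monotone_nat_of_le_succ (fun t => by rw [hfs]; exact hg1 t (f t))
  have hanti : ∀ t, f (t+1) + 256 * (16:ℝ)⁻¹ ^ (t+1) ≤ f t + 256 * (16:ℝ)⁻¹ ^ t := by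
    intro t; rw [hfs]; exact hg2 t (f t)
  have hantiton : Antitone (fun t => f t + 256 * (16:ℝ)⁻¹ ^ t) :=
    antitone_nat_of_succ_le hanti
  have hfe : ∀ s t : ℕ, f s ≤ f t + 256 * (16:ℝ)⁻¹ ^ t := by
    intro s t
    rcases le_total s t with h | h
    · exact le_trans (hmono h) (le_add_of_nonneg_right (by positivity))
    · exact le_trans (le_add_of_nonneg_right (by positivity) : f s ≤ f s + 256 * (16:ℝ)⁻¹ ^ s)
        (hantiton h)
  have hbdd : BddAbove (Set.range f) := ⟨f 0 + 256, by
    rintro _ ⟨s, rfl⟩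
    have := hfe s 0
    simpa using this⟩
  set x : ℝ := ⨆ t, f t with hxdef
  have hxl : ∀ t, f t ≤ x := fun t => le_ciSup hbdd t
  have hxu : ∀ t, x ≤ f t + 256 * (16:ℝ)⁻¹ ^ t := fun t => ciSup_le (fun s => hfe s t)
  have havoid : ∀ t, ∀ y ∈ blvD p i₁ j₁ t ∪ blvD q i₂ j₂ t, (16:ℝ)⁻¹ ^ t < |x - y| := by
    intro t y hy
    exact hg3 t (f t) y hy x (hxl (t+1)) (hxu (t+1))
  have main : ∀ (R : ℕ) (i j : ℝ), 2 ≤ R → 0 < i → 0 < j → i + j = 1 →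
      (∀ t, blvD R i j t ⊆ blvD p i₁ j₁ t ∪ blvD q i₂ j₂ t) →
      ∀ n : ℕ, 0 < n → padicAbs R n ^ (1/i) ≤ blvC / n →
      blvC / n < distNearestInt ((n:ℝ) * x) ^ (1/j) := by
    intro R i j hR2 hi hj hij hsub n hn hle
    have hnS : n ∈ blvS R i := ⟨hn, hle⟩
    have hnR : (0:ℝ) < n := by exact_mod_cast hn
    set t := blvT n j with htdef
    set a : ℤ := round ((n:ℝ) * x) with hadef
    have hyD : ((a:ℝ)/n) ∈ blvD R i j t := ⟨n, a, hnS, rfl, rfl⟩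
    have hlt : (16:ℝ)⁻¹ ^ t < |x - (a:ℝ)/n| := havoid t _ (hsub t hyD)
    have hrad : blvRad n j ≤ (16:ℝ)⁻¹ ^ t := (blvT_spec hn hj).1
    have h1 : blvRad n j < |x - (a:ℝ)/n| := lt_of_le_of_lt hrad hlt
    have h2 : distNearestInt ((n:ℝ)*x) = (n:ℝ) * |x - (a:ℝ)/n| := by
      simp only [distNearestInt, ← hadef]
      rw [show (n:ℝ)*x - (a:ℝ) = (n:ℝ) * (x - (a:ℝ)/n) by field_simp, abs_mul,
        abs_of_pos hnR]
    have hdist : (blvC/n) ^ j < distNearestInt ((n:ℝ) * x) := by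
      rw [h2]
      calc (blvC/(n:ℝ))^j = (n:ℝ) * blvRad n j := by rw [blvRad]; field_simp
        _ < (n:ℝ) * |x - (a:ℝ)/n| := (mul_lt_mul_iff_right₀ hnR).mpr h1
    have hcn : (0:ℝ) < blvC / n := div_pos blvC_pos hnR
    have h3 : ((blvC/(n:ℝ)) ^ j) ^ (1/j) < (distNearestInt ((n:ℝ)*x)) ^ (1/j) :=
      Real.rpow_lt_rpow (Real.rpow_pos_of_pos hcn j).le hdist (by positivity)
    rwa [← Real.rpow_mul hcn.le, mul_one_div_cancel hj.ne', Real.rpow_one] at h3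
  refine ⟨x, ⟨blvC, blvC_pos, ?_⟩, ⟨blvC, blvC_pos, ?_⟩⟩
  · intro n hn
    rcases le_or_gt (padicAbs p n ^ (1/i₁)) (blvC / n) with h | h
    · exact lt_of_lt_of_le
        (main p i₁ j₁ hp2 hi₁ hj₁ hij₁ (fun t => Set.subset_union_left) n hn h)
        (le_max_right _ _)
    · exact lt_of_lt_of_le h (le_max_left _ _)
  · intro n hn
    rcases le_or_gt (padicAbs q n ^ (1/i₂)) (blvC / n) with h | h
    · exact lt_of_lt_of_le
        (main q i₂ j₂ hq2 hi₂ hj₂ hij₂ (fun t => Set.subset_union_right) n hn h)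
        (le_max_right _ _)
    · exact lt_of_lt_of_le h (le_max_left _ _)
end

section
/- For each $n \in \mathbb{N}$, let $\mathcal{D}^{(n)}$ be a bounded sequence of integers $(d^{(n)}_k)_{k\ge 1}$ with every $d^{(n)}_k \ge 2$, and let $(i_n, j_n)$ be a pair of real numbers with $0 < i_n, j_n < 1$ and $i_n + j_n = 1$. Then the countable intersection $\bigcap_{n=1}^{\infty} \mathrm{Bad}_{\mathcal{D}^{(n)}}(i_n, j_n)$ is nonempty. -/
set_option maxHeartbeats 1000000


namespace BLV

open Finset Real
open scoped Classical

structure Hyp (d : ℕ → ℕ → ℕ) (i j : ℕ → ℝ) : Prop where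
  hd2 : ∀ n k, 2 ≤ d n k
  hi : ∀ n, 0 < i n
  hj : ∀ n, 0 < j n
  hij : ∀ n, i n + j n = 1

section
variable (d : ℕ → ℕ → ℕ) (i j : ℕ → ℝ)

/-- class exponents -/
noncomputable def bb (n : ℕ) : ℕ := n + 2 + (Finset.range (n+1)).sup fun k => ⌈j k / i k⌉₊

noncomputable def ell (s : ℕ) : ℝ := ((64:ℝ))⁻¹ ^ s

noncomputable def cc (n : ℕ) : ℝ := ell (bb i j n)

noncomputable def rho (n q : ℕ) : ℝ := (cc i j n / (q:ℝ)) ^ (j n) / (q:ℝ)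

def Dang (n q : ℕ) : Prop :=
  ∃ N, Dprod (d n) N ∣ q ∧ (q:ℝ) ≤ cc i j n * (Dprod (d n) N : ℝ) ^ (1 / i n)

def win (n q s : ℕ) : Prop := ell (s+2) ≤ rho i j n q ∧ rho i j n q < ell (s+1)

def Kill1 (n s a : ℕ) : Prop :=
  ∃ q : ℕ, ∃ p : ℤ, 0 < q ∧ Dang d i j n q ∧ win i j n q s ∧
    (a:ℝ) * ell (s+1) - rho i j n q ≤ (p:ℝ)/(q:ℝ) ∧
    (p:ℝ)/(q:ℝ) ≤ ((a:ℝ)+1) * ell (s+1) + rho i j n q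

def Kill (s a : ℕ) : Prop := ∃ n, Kill1 d i j n s a

def Cand (Ts : Finset ℕ) : Finset ℕ :=
  Ts.biUnion fun m => (Finset.range 64).image fun r => 64*m + r

noncomputable def T : ℕ → Finset ℕ
  | 0 => {0}
  | s+1 => (Cand (T s)).filter fun a => ¬ Kill d i j s a

end

section basic
variable {dd : ℕ → ℕ} {i j : ℕ → ℝ}

lemma Dprod_pos (hd2 : ∀ k, 2 ≤ dd k) (N : ℕ) : 0 < Dprod dd N :=
  Finset.prod_pos fun k _ => lt_of_lt_of_le two_pos (hd2 k)

lemma two_pow_le_Dprod (hd2 : ∀ k, 2 ≤ dd k) (N : ℕ) : 2^N ≤ Dprod dd N := by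
  induction N with
  | zero => simp [Dprod]
  | succ n ih =>
      rw [Dprod, Finset.prod_range_succ, pow_succ]
      exact Nat.mul_le_mul ih (hd2 n)

lemma Dprod_dvd (hd2 : ∀ k, 2 ≤ dd k) {N M : ℕ} (h : N ≤ M) : Dprod dd N ∣ Dprod dd M :=
  Finset.prod_dvd_prod_of_subset _ _ _ (Finset.range_subset_range.mpr h)

lemma Dprod_le {q N : ℕ} (hdvd : Dprod dd N ∣ q) (hq : 0 < q) : Dprod dd N ≤ q :=
  Nat.le_of_dvd hq hdvd

lemma one_le_Dprod (hd2 : ∀ k, 2 ≤ dd k) (N : ℕ) : 1 ≤ Dprod dd N := Dprod_pos hd2 N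

-- bb lemmas
lemma bb_ge (n : ℕ) : n + 2 ≤ bb i j n := Nat.le_add_right _ _

lemma bb_strictMono : StrictMono (bb i j) := by
  apply strictMono_nat_of_lt_succ
  intro n
  have h1 : (Finset.range (n+1)).sup (fun k => ⌈j k / i k⌉₊)
      ≤ (Finset.range (n+1+1)).sup (fun k => ⌈j k / i k⌉₊) :=
    Finset.sup_mono (Finset.range_subset_range.mpr (Nat.le_succ _))
  unfold bb; omega

lemma div_le_bb (n : ℕ) : j n / i n ≤ (bb i j n : ℝ) := by
  have h1 : ⌈j n / i n⌉₊ ≤ bb i j n :=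
    le_trans (Finset.le_sup (f := fun k => ⌈j k / i k⌉₊) (Finset.self_mem_range_succ n))
      (Nat.le_add_left _ _)
  calc j n / i n ≤ (⌈j n / i n⌉₊ : ℝ) := Nat.le_ceil _
    _ ≤ (bb i j n : ℝ) := by exact_mod_cast h1

-- ell lemmas
lemma ell_pos (s : ℕ) : 0 < ell s := pow_pos (by norm_num) s

lemma ell_succ (s : ℕ) : ell (s+1) = ell s * (64:ℝ)⁻¹ := pow_succ _ _

lemma ell_rpow (s : ℕ) : ell s = (64:ℝ) ^ (-(s:ℝ)) := by
  rw [Real.rpow_neg (by norm_num), Real.rpow_natCast]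
  rw [show ((64:ℝ)^s)⁻¹ = ((64:ℝ)⁻¹)^s from (inv_pow _ _).symm]
  rfl

lemma ell_le_ell_iff {s t : ℕ} : ell t ≤ ell s ↔ s ≤ t := by
  rw [ell_rpow, ell_rpow, Real.rpow_le_rpow_left_iff (by norm_num : (1:ℝ) < 64),
    neg_le_neg_iff, Nat.cast_le]

lemma ell_anti {s t : ℕ} (h : s ≤ t) : ell t ≤ ell s := ell_le_ell_iff.mpr h

lemma ell_le_one (s : ℕ) : ell s ≤ 1 := by
  have := ell_anti (Nat.zero_le s)
  simpa [ell] using this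

lemma ell_sub {k s : ℕ} (h : k ≤ s) : ell (s - k) = ell s * 64^k := by
  have h1 : ell s = ell (s-k) * ((64:ℝ))⁻¹ ^ k := by
    unfold ell
    rw [← pow_add]
    congr 1
    omega
  rw [h1, mul_assoc, inv_pow, inv_mul_cancel₀ (by positivity), mul_one]

end basic

section analytic
variable {d : ℕ → ℕ → ℕ} {i j : ℕ → ℝ} (H : Hyp d i j)

lemma cc_pos (n : ℕ) : 0 < cc i j n := ell_pos _

lemma cc_rpow (n : ℕ) : cc i j n = (64:ℝ) ^ (-(bb i j n : ℝ)) := ell_rpow _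

lemma rho_pos {n q : ℕ} (hq : 0 < q) : 0 < rho i j n q := by
  have hq' : (0:ℝ) < q := by exact_mod_cast hq
  exact div_pos (Real.rpow_pos_of_pos (div_pos (cc_pos _) hq') _) hq'

include H in
lemma rpow_i_eq (n : ℕ) {x : ℝ} (hx : 0 < x) :
    x ^ (i n) = x * (x⁻¹) ^ (j n) := by
  have hij := H.hij n
  have h1 : i n = 1 - j n := by linarith
  rw [h1, Real.rpow_sub hx, Real.rpow_one, Real.inv_rpow hx.le, div_eq_mul_inv]

include H in
lemma dang_D_lb (n : ℕ) {q D : ℝ} (hq : 0 ≤ q) (hD : 0 ≤ D)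
    (hle : q ≤ cc i j n * D ^ (1 / i n)) :
    (q / cc i j n) ^ (i n) ≤ D := by
  have hi := H.hi n
  have hc := cc_pos (i := i) (j := j) n
  have h1 : q / cc i j n ≤ D ^ (1 / i n) := by
    rw [div_le_iff₀ hc]
    rw [mul_comm]
    exact hle
  have h2 : (q / cc i j n) ^ (i n) ≤ (D ^ (1/i n)) ^ (i n) :=
    Real.rpow_le_rpow (by positivity) h1 hi.le
  rwa [← Real.rpow_mul hD, one_div_mul_cancel (ne_of_gt hi), Real.rpow_one] at h2

include H in
lemma dang_q_lb (n : ℕ) {q : ℕ} (hq : 0 < q) (hD : Dang d i j n q) :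
    (cc i j n)⁻¹ ≤ (q:ℝ) ^ (j n / i n) := by
  obtain ⟨N, hdvd, hle⟩ := hD
  have hi := H.hi n
  have hi' : i n ≠ 0 := ne_of_gt hi
  have hc := cc_pos (i := i) (j := j) n
  have hq0 : (0:ℝ) < q := by exact_mod_cast hq
  have hDq : (Dprod (d n) N : ℝ) ≤ (q:ℝ) := by
    exact_mod_cast Dprod_le hdvd hq
  have h1 : ((q:ℝ) / cc i j n) ^ (i n) ≤ (q:ℝ) :=
    le_trans (dang_D_lb H n hq0.le (by positivity) hle) hDq
  have h2 : (q:ℝ) / cc i j n ≤ (q:ℝ) ^ (1 / i n) := by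
    have h3 := Real.rpow_le_rpow (by positivity) h1 (by positivity : (0:ℝ) ≤ 1 / i n)
    rwa [← Real.rpow_mul (by positivity), mul_one_div_cancel hi', Real.rpow_one] at h3
  have h4 : ((q:ℝ) / cc i j n) / (q:ℝ) ≤ (q:ℝ) ^ (1 / i n) / (q:ℝ) := by
    gcongr
  have h5 : ((q:ℝ) / cc i j n) / (q:ℝ) = (cc i j n)⁻¹ := by
    field_simp
  have h6 : (q:ℝ) ^ (1 / i n) / (q:ℝ) = (q:ℝ) ^ (j n / i n) := by
    rw [show j n / i n = 1 / i n - 1 by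
      have hij := H.hij n
      field_simp
      linarith]
    rw [Real.rpow_sub hq0, Real.rpow_one]
  rw [h5, h6] at h4
  exact h4

include H in
lemma rho_le_ell (n : ℕ) {q : ℕ} (hq : 0 < q) (hD : Dang d i j n q) :
    rho i j n q ≤ ell (bb i j n + 1) := by
  have hi := H.hi n
  have hj := H.hj n
  have hij := H.hij n
  have hi' : i n ≠ 0 := ne_of_gt hi
  have hj' : j n ≠ 0 := ne_of_gt hj
  have hc := cc_pos (i := i) (j := j) n
  have hq0 : (0:ℝ) < q := by exact_mod_cast hq
  set c := cc i j n with hcdef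
  have hlb : c⁻¹ ≤ (q:ℝ) ^ (j n / i n) := dang_q_lb H n hq hD
  set e : ℝ := i n / j n * (1 + j n) with hedef
  have he : (0:ℝ) ≤ e := by positivity
  have h1 : (c⁻¹) ^ e ≤ (q:ℝ) ^ ((1:ℝ) + j n) := by
    have h2 := Real.rpow_le_rpow (by positivity) hlb he
    rwa [← Real.rpow_mul hq0.le,
      show j n / i n * e = 1 + j n by rw [hedef]; field_simp] at h2
  have hrho : rho i j n q = c ^ (j n) * (((q:ℝ) ^ ((1:ℝ) + j n))⁻¹) := by
    unfold rho
    rw [Real.div_rpow hc.le hq0.le, Real.rpow_add hq0, Real.rpow_one, div_div]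
    rw [div_eq_mul_inv]
    ring_nf
  have h3 : ((q:ℝ) ^ ((1:ℝ) + j n))⁻¹ ≤ ((c⁻¹) ^ e)⁻¹ := by
    apply inv_anti₀
    · exact Real.rpow_pos_of_pos (inv_pos.mpr hc) _
    · exact h1
  have h4 : ((c⁻¹) ^ e)⁻¹ = c ^ e := by
    rw [Real.inv_rpow hc.le, inv_inv]
  have h5 : rho i j n q ≤ c ^ (j n) * c ^ e := by
    rw [hrho]
    have hcj : (0:ℝ) ≤ c ^ (j n) := (Real.rpow_pos_of_pos hc _).le
    calc c ^ (j n) * (((q:ℝ) ^ ((1:ℝ) + j n))⁻¹) ≤ c ^ (j n) * ((c⁻¹) ^ e)⁻¹ :=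
          mul_le_mul_of_nonneg_left h3 hcj
      _ = c ^ (j n) * c ^ e := by rw [h4]
  have h6 : c ^ (j n) * c ^ e = c ^ ((1:ℝ) + i n / j n) := by
    rw [← Real.rpow_add hc]
    congr 1
    rw [hedef]
    field_simp
    linear_combination (j n) * hij
  have h7 : c ^ ((1:ℝ) + i n / j n) ≤ ell (bb i j n + 1) := by
    have hbij : (1:ℝ) ≤ (bb i j n : ℝ) * (i n / j n) := by
      have hdb := div_le_bb (i := i) (j := j) n
      calc (1:ℝ) = (j n / i n) * (i n / j n) := by field_simp
        _ ≤ (bb i j n : ℝ) * (i n / j n) :=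
            mul_le_mul_of_nonneg_right hdb (by positivity)
    rw [hcdef, cc_rpow, ← Real.rpow_mul (by norm_num : (0:ℝ) ≤ 64),
      ell_rpow]
    rw [Real.rpow_le_rpow_left_iff (by norm_num : (1:ℝ) < 64)]
    push_cast
    nlinarith [hbij]
  calc rho i j n q ≤ c ^ (j n) * c ^ e := h5
    _ = c ^ ((1:ℝ) + i n / j n) := h6
    _ ≤ ell (bb i j n + 1) := h7

include H in
lemma win_exists (n : ℕ) {q : ℕ} (hq : 0 < q) (hD : Dang d i j n q) :
    ∃ s, win i j n q s ∧ bb i j n ≤ s + 1 := by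
  have hρ := rho_pos (i := i) (j := j) (n := n) hq
  have hub := rho_le_ell H n hq hD
  have hex : ∃ k, ell k ≤ rho i j n q := by
    obtain ⟨k, hk⟩ := exists_pow_lt_of_lt_one hρ (by norm_num : (64:ℝ)⁻¹ < 1)
    exact ⟨k, hk.le⟩
  classical
  set k := Nat.find hex with hkdef
  have hk : ell k ≤ rho i j n q := Nat.find_spec hex
  have hkb : bb i j n + 1 ≤ k := ell_le_ell_iff.mp (le_trans hk hub)
  have hb2 : 2 ≤ bb i j n := le_trans (by omega) (bb_ge (i := i) (j := j) n)
  refine ⟨k - 2, ⟨?_, ?_⟩, by omega⟩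
  · rw [show k - 2 + 2 = k by omega]
    exact hk
  · have hlt : k - 2 + 1 < k := by omega
    exact lt_of_not_ge (Nat.find_min hex hlt)

include H in
lemma win_bb_le (n : ℕ) {q s : ℕ} (hq : 0 < q) (hD : Dang d i j n q)
    (hw : win i j n q s) : bb i j n ≤ s + 1 := by
  have hub := rho_le_ell H n hq hD
  have := ell_le_ell_iff.mp (le_trans hw.1 hub)
  omega

include H in
lemma key_sep (n : ℕ) (hd2 : ∀ k, 2 ≤ d n k) {q q' : ℕ} {p p' : ℤ}
    (hq : 0 < q) (hq' : 0 < q') (hle : q ≤ q')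
    (h1 : Dang d i j n q) (h2 : Dang d i j n q')
    (hne : (p:ℝ)/(q:ℝ) ≠ (p':ℝ)/(q':ℝ)) :
    rho i j n q' / cc i j n ≤ |(p:ℝ)/(q:ℝ) - (p':ℝ)/(q':ℝ)| := by
  have hi := H.hi n
  have hj := H.hj n
  have hc := cc_pos (i := i) (j := j) n
  have hq0 : (0:ℝ) < q := by exact_mod_cast hq
  have hq'0 : (0:ℝ) < q' := by exact_mod_cast hq'
  have hqR : (q:ℝ) ≤ (q':ℝ) := by exact_mod_cast hle
  obtain ⟨N, hNd, hNle⟩ := h1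
  obtain ⟨N', hN'd, hN'le⟩ := h2
  set D := Dprod (d n) (min N N') with hDdef
  have hDq : D ∣ q := dvd_trans (Dprod_dvd hd2 (min_le_left _ _)) hNd
  have hDq' : D ∣ q' := dvd_trans (Dprod_dvd hd2 (min_le_right _ _)) hN'd
  have hD1 : 1 ≤ D := one_le_Dprod hd2 _
  -- integer separation
  have hzne : p * (q':ℤ) - p' * (q:ℤ) ≠ 0 := by
    intro hcon
    apply hne
    rw [div_eq_div_iff (ne_of_gt hq0) (ne_of_gt hq'0)]
    have hcon' : p * (q':ℤ) = p' * (q:ℤ) := by omega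
    exact_mod_cast congrArg (fun z : ℤ => (z : ℝ)) hcon'
  have hdvd2 : (D:ℤ) ∣ p * (q':ℤ) - p' * (q:ℤ) := by
    apply dvd_sub
    · exact Dvd.dvd.mul_left (Int.natCast_dvd_natCast.mpr hDq') p
    · exact Dvd.dvd.mul_left (Int.natCast_dvd_natCast.mpr hDq) p'
  have hZ : (D:ℤ) ≤ |p * (q':ℤ) - p' * (q:ℤ)| :=
    Int.le_of_dvd (abs_pos.mpr hzne) ((dvd_abs _ _).mpr hdvd2)
  have habs : |(p:ℝ)/(q:ℝ) - (p':ℝ)/(q':ℝ)|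
      = |(p:ℝ)*(q':ℝ) - (p':ℝ)*(q:ℝ)| / ((q:ℝ)*(q':ℝ)) := by
    rw [div_sub_div _ _ (ne_of_gt hq0) (ne_of_gt hq'0), abs_div,
      abs_of_pos (by positivity : (0:ℝ) < (q:ℝ)*(q':ℝ))]
    ring_nf
  have hZR : (D:ℝ) ≤ |(p:ℝ)*(q':ℝ) - (p':ℝ)*(q:ℝ)| := by
    have : ((D:ℤ):ℝ) ≤ (|p * (q':ℤ) - p' * (q:ℤ)| : ℤ) := by exact_mod_cast hZ
    push_cast at this
    convert this using 2 <;> push_cast <;> ring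
  have hstep : (D:ℝ) / ((q:ℝ)*(q':ℝ)) ≤ |(p:ℝ)/(q:ℝ) - (p':ℝ)/(q':ℝ)| := by
    rw [habs]
    gcongr
  -- two cases
  rcases le_total N N' with hNN | hNN
  · have hminN : min N N' = N := min_eq_left hNN
    have hDlb : ((q:ℝ)/cc i j n) ^ (i n) ≤ (D:ℝ) := by
      apply dang_D_lb H n hq0.le (by positivity)
      rw [hDdef, hminN]
      exact hNle
    have hE2 : ((q:ℝ)/cc i j n) ^ (i n) / ((q:ℝ)*(q':ℝ))
        = (cc i j n/(q:ℝ)) ^ (j n) / ((q':ℝ) * cc i j n) := by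
      rw [rpow_i_eq H n (by positivity), inv_div]
      field_simp
    have hE1 : rho i j n q' / cc i j n
        = (cc i j n/(q':ℝ)) ^ (j n) / ((q':ℝ) * cc i j n) := by
      unfold rho
      field_simp
    have hmono : (cc i j n/(q':ℝ)) ^ (j n) ≤ (cc i j n/(q:ℝ)) ^ (j n) := by
      apply Real.rpow_le_rpow (by positivity) _ hj.le
      gcongr
    calc rho i j n q' / cc i j n
        = (cc i j n/(q':ℝ)) ^ (j n) / ((q':ℝ) * cc i j n) := hE1
      _ ≤ (cc i j n/(q:ℝ)) ^ (j n) / ((q':ℝ) * cc i j n) := by gcongr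
      _ = ((q:ℝ)/cc i j n) ^ (i n) / ((q:ℝ)*(q':ℝ)) := hE2.symm
      _ ≤ (D:ℝ) / ((q:ℝ)*(q':ℝ)) := by gcongr
      _ ≤ _ := hstep
  · have hminN : min N N' = N' := min_eq_right hNN
    have hDlb : ((q':ℝ)/cc i j n) ^ (i n) ≤ (D:ℝ) := by
      apply dang_D_lb H n hq'0.le (by positivity)
      rw [hDdef, hminN]
      exact hN'le
    have hE2 : ((q':ℝ)/cc i j n) ^ (i n) / ((q:ℝ)*(q':ℝ))
        = (cc i j n/(q':ℝ)) ^ (j n) / ((q:ℝ) * cc i j n) := by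
      rw [rpow_i_eq H n (by positivity), inv_div]
      field_simp
    have hE1 : rho i j n q' / cc i j n
        = (cc i j n/(q':ℝ)) ^ (j n) / ((q':ℝ) * cc i j n) := by
      unfold rho
      field_simp
    calc rho i j n q' / cc i j n
        = (cc i j n/(q':ℝ)) ^ (j n) / ((q':ℝ) * cc i j n) := hE1
      _ ≤ (cc i j n/(q':ℝ)) ^ (j n) / ((q:ℝ) * cc i j n) := by
          gcongr
      _ = ((q':ℝ)/cc i j n) ^ (i n) / ((q:ℝ)*(q':ℝ)) := hE2.symm
      _ ≤ (D:ℝ) / ((q:ℝ)*(q':ℝ)) := by gcongr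
      _ ≤ _ := hstep

end analytic

section counting

lemma four_points (S : Finset ℝ) (δ lo : ℝ) (hδ : 0 < δ)
    (hmem : ∀ u ∈ S, lo ≤ u ∧ u ≤ lo + 3*δ)
    (hsep : ∀ u ∈ S, ∀ v ∈ S, u ≠ v → δ ≤ |u - v|) : S.card ≤ 4 := by
  classical
  have h4 : (Finset.Icc (0:ℤ) 3).card = 4 := by decide
  rw [← h4]
  apply Finset.card_le_card_of_injOn (fun u => ⌊(u - lo)/δ⌋)
  · intro u hu
    obtain ⟨h1, h2⟩ := hmem u hu
    rw [Finset.mem_coe, Finset.mem_Icc]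
    constructor
    · apply Int.floor_nonneg.mpr
      apply div_nonneg (by linarith) hδ.le
    · have : (u - lo)/δ ≤ 3 := by
        rw [div_le_iff₀ hδ]
        linarith
      calc ⌊(u - lo)/δ⌋ ≤ ⌊(3:ℝ)⌋ := Int.floor_le_floor this
        _ = 3 := by norm_num
  · intro u hu v hv huv
    by_contra hne
    have h1 := hsep u hu v hv hne
    have h2 : |(u - lo)/δ - (v - lo)/δ| < 1 := Int.abs_sub_lt_one_of_floor_eq_floor huv
    rw [div_sub_div_same, show u - lo - (v - lo) = u - v by ring, abs_div,
      abs_of_pos hδ, div_lt_one hδ] at h2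
    linarith

lemma four_children (L u : ℝ) (hL : 0 < L) (S : Finset ℕ)
    (h : ∀ a ∈ S, (a:ℝ) * L ≤ u + L ∧ u - L ≤ ((a:ℝ)+1) * L) : S.card ≤ 4 := by
  classical
  have h4 : (Finset.Icc (⌊u/L⌋ - 2) (⌊u/L⌋ + 1)).card = 4 := by
    rw [Int.card_Icc]
    omega
  rw [← h4]
  refine Finset.card_le_card_of_injOn (fun a => (a:ℤ)) ?_ ?_
  · intro a ha
    obtain ⟨h1, h2⟩ := h a ha
    show (a:ℤ) ∈ Finset.Icc (⌊u/L⌋ - 2) (⌊u/L⌋ + 1)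
    rw [Finset.mem_Icc]
    constructor
    · -- ⌊u/L⌋ - 2 ≤ a  from u/L ≤ a + 2
      have : u/L ≤ (a:ℝ) + 2 := by
        rw [div_le_iff₀ hL]
        nlinarith
      have hfle : ⌊u/L⌋ ≤ ⌊(a:ℝ) + 2⌋ := Int.floor_le_floor this
      have : ⌊((a:ℕ):ℝ) + 2⌋ = (a:ℤ) + 2 := by
        rw [show ((a:ℕ):ℝ) + 2 = (((a:ℤ) + 2 : ℤ) : ℝ) by push_cast; ring, Int.floor_intCast]
      omega
    · -- a ≤ ⌊u/L⌋ + 1  from a ≤ u/L + 1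
      have haR : (a:ℝ) ≤ u/L + 1 := by
        rw [← sub_le_iff_le_add]
        rw [le_div_iff₀ hL]
        nlinarith
      have : (a:ℤ) - 1 ≤ ⌊u/L⌋ := by
        apply Int.le_floor.mpr
        push_cast
        linarith
      omega
  · intro a _ b _ hab
    have hab' : (a:ℤ) = (b:ℤ) := hab
    exact_mod_cast hab'


end counting

section tree
variable {d : ℕ → ℕ → ℕ} {i j : ℕ → ℝ}

lemma T_succ (d : ℕ → ℕ → ℕ) (i j : ℕ → ℝ) (s : ℕ) :
    T d i j (s+1) = (Cand (T d i j s)).filter (fun a => ¬ Kill d i j s a) := rfl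

lemma cand_div {Ts : Finset ℕ} {a : ℕ} (ha : a ∈ Cand Ts) : a / 64 ∈ Ts := by
  unfold Cand at ha
  rw [Finset.mem_biUnion] at ha
  obtain ⟨m, hm, ha⟩ := ha
  rw [Finset.mem_image] at ha
  obtain ⟨r, hr, rfl⟩ := ha
  rw [Finset.mem_range] at hr
  have : (64*m + r) / 64 = m := by omega
  rw [this]
  exact hm

lemma card_cand (Ts : Finset ℕ) : (Cand Ts).card = 64 * Ts.card := by
  unfold Cand
  rw [Finset.card_biUnion]
  · have hc : ∀ m, ((Finset.range 64).image fun r => 64*m + r).card = 64 := by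
      intro m
      rw [Finset.card_image_of_injective _ (fun x y h => by omega)]
      simp
    rw [Finset.sum_congr rfl (fun m _ => hc m), Finset.sum_const, smul_eq_mul, mul_comm]
  · intro x hx y hy hxy
    simp only [Finset.disjoint_left, Finset.mem_image, Finset.mem_range]
    rintro a ⟨r, hr, rfl⟩ ⟨r', hr', he⟩
    omega

lemma anc : ∀ (k : ℕ) {s m : ℕ}, k ≤ s → m ∈ T d i j s → m / 64^k ∈ T d i j (s - k) := by
  intro k
  induction k with
  | zero => intro s m _ hm; simpa using hm
  | succ k ih =>
      intro s m hks hm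
      obtain ⟨s', rfl⟩ : ∃ s'', s = s''+1 := ⟨s-1, by omega⟩
      rw [T_succ] at hm
      have h1 : m ∈ Cand (T d i j s') := (Finset.mem_filter.mp hm).1
      have h2 : m / 64 ∈ T d i j s' := cand_div h1
      have h3 := ih (by omega : k ≤ s') h2
      have h4 : m / 64 / 64^k = m / 64^(k+1) := by
        rw [Nat.div_div_eq_div_mul]
        congr 1
        rw [pow_succ]
        ring
      rw [h4] at h3
      rw [show s' + 1 - (k+1) = s' - k by omega]
      exact h3

end tree

section fiber
variable {d : ℕ → ℕ → ℕ} {i j : ℕ → ℝ}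

lemma fiber16 (H : Hyp d i j) (n s A : ℕ) (S : Finset ℕ)
    (hS : ∀ a ∈ S, Kill1 d i j n s a ∧ a / 64^(bb i j n - 1) = A) : S.card ≤ 16 := by
  classical
  rcases S.eq_empty_or_nonempty with rfl | ⟨a₀, ha₀⟩
  · simp
  obtain ⟨q₀, p₀, hq₀, hD₀, hw₀, _, _⟩ := (hS a₀ ha₀).1
  have hb1 : bb i j n ≤ s + 1 := win_bb_le H n hq₀ hD₀ hw₀
  have hb2 : 2 ≤ bb i j n := le_trans (by omega) (bb_ge (i := i) (j := j) n)
  choose! Q P hQpos hQdang hQwin hlb hub using fun a (ha : a ∈ S) => (hS a ha).1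
  set B := bb i j n - 1 with hBdef
  have hBs : B ≤ s + 1 := by omega
  set L := ell (s+1) with hLdef
  have hL : 0 < L := ell_pos _
  set Δ := ell (s+1-B) with hΔdef
  have hΔ : 0 < Δ := ell_pos _
  have hΔL : Δ = 64^B * L := by
    rw [hΔdef, hLdef, ell_sub hBs]
    ring
  have hLΔ : L ≤ Δ := by
    rw [hΔL]
    have h64 : (1:ℝ) ≤ 64^B := by
      have := pow_le_pow_left₀ (by norm_num : (0:ℝ) ≤ 1) (by norm_num : (1:ℝ) ≤ 64) B
      simpa using this
    nlinarith [hL]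
  set Φ : ℕ → ℝ := fun a => (P a : ℝ)/(Q a : ℝ) with hΦdef
  -- separation constant
  have hsepΔ : ell (s+2) / cc i j n = Δ := by
    have hbs2 : bb i j n ≤ s + 2 := by omega
    have h1 : ell ((s+2) - bb i j n) = ell (s+2) * 64 ^ (bb i j n) := ell_sub hbs2
    have h2 : (s+2) - bb i j n = s+1-B := by omega
    rw [hΔdef, ← h2, h1]
    unfold cc ell
    rw [div_eq_mul_inv]
    simp [inv_pow]
  -- centers lie in a window of width ≤ 3Δ
  set lo := (A:ℝ) * Δ - L with hlodef
  have hmem : ∀ a ∈ S, lo ≤ Φ a ∧ Φ a ≤ lo + 3*Δ := by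
    intro a ha
    have hdiv := (hS a ha).2
    have hA1 : A * 64^B ≤ a := by
      have := Nat.div_mul_le_self a (64^B)
      rw [hdiv] at this
      exact this
    have hA2 : a < (A+1) * 64^B := by
      have hmod := Nat.div_add_mod a (64^B)
      rw [hdiv] at hmod
      have hlt := Nat.mod_lt a (pow_pos (by norm_num : 0 < 64) B)
      calc a = 64^B * A + a % 64^B := hmod.symm
        _ < 64^B * A + 64^B := by omega
        _ = (A+1) * 64^B := by ring
    have hA1R : (A:ℝ) * Δ ≤ (a:ℝ) * L := by
      rw [hΔL]
      have : ((A * 64^B : ℕ):ℝ) ≤ (a:ℝ) := by exact_mod_cast hA1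
      push_cast at this
      nlinarith [hL]
    have hA2R : ((a:ℝ)+1) * L ≤ ((A:ℝ)+1) * Δ := by
      rw [hΔL]
      have : ((a:ℝ)+1) ≤ ((A+1) * 64^B : ℕ) := by exact_mod_cast hA2
      push_cast at this
      nlinarith [hL]
    have hρpos := rho_pos (i := i) (j := j) (n := n) (hQpos a ha)
    have hρlt : rho i j n (Q a) < L := (hQwin a ha).2
    constructor
    · calc lo = (A:ℝ) * Δ - L := rfl
        _ ≤ (a:ℝ) * L - rho i j n (Q a) := by linarith [hA1R]
        _ ≤ Φ a := hlb a ha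
    · calc Φ a ≤ ((a:ℝ)+1) * L + rho i j n (Q a) := hub a ha
        _ ≤ ((A:ℝ)+1) * Δ + L := by linarith [hA2R]
        _ ≤ lo + 3*Δ := by
            rw [hlodef]
            have : L ≤ Δ := hLΔ
            linarith
  -- separation of distinct centers
  have hsep : ∀ a ∈ S, ∀ a' ∈ S, Φ a ≠ Φ a' → Δ ≤ |Φ a - Φ a'| := by
    intro a ha a' ha' hne
    have key : ∀ x y : ℕ, x ∈ S → y ∈ S → Q x ≤ Q y → Φ x ≠ Φ y → Δ ≤ |Φ x - Φ y| := by
      intro x y hx hy hQle hne'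
      have h1 := key_sep H n (H.hd2 n) (hQpos x hx) (hQpos y hy) hQle
        (hQdang x hx) (hQdang y hy) hne'
      have h2 : Δ ≤ rho i j n (Q y) / cc i j n := by
        rw [← hsepΔ]
        gcongr
        · exact (cc_pos (i := i) (j := j) n).le
        · exact (hQwin y hy).1
      exact le_trans h2 h1
    rcases le_total (Q a) (Q a') with hc | hc
    · exact key a a' ha ha' hc hne
    · rw [abs_sub_comm]
      exact key a' a ha' ha hc (Ne.symm hne)
  -- image of centers has ≤ 4 elements
  have himg : (S.image Φ).card ≤ 4 := by
    apply four_points (S.image Φ) Δ lo hΔ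
    · intro u hu
      rw [Finset.mem_image] at hu
      obtain ⟨a, ha, rfl⟩ := hu
      exact hmem a ha
    · intro u hu v hv huv
      rw [Finset.mem_image] at hu hv
      obtain ⟨a, ha, rfl⟩ := hu
      obtain ⟨a', ha', rfl⟩ := hv
      exact hsep a ha a' ha' huv
  -- each fiber has ≤ 4 elements
  have hfib : ∀ u ∈ S.image Φ, (S.filter (fun a => Φ a = u)).card ≤ 4 := by
    intro u _
    apply four_children L u hL
    intro a ha
    rw [Finset.mem_filter] at ha
    obtain ⟨haS, hau⟩ := ha
    have hρpos := rho_pos (i := i) (j := j) (n := n) (hQpos a haS)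
    have hρlt : rho i j n (Q a) < L := (hQwin a haS).2
    have hau' : (P a : ℝ)/(Q a : ℝ) = u := hau
    have h1 := hlb a haS
    have h2 := hub a haS
    rw [hau'] at h1 h2
    constructor
    · linarith
    · linarith
  calc S.card = ∑ u ∈ S.image Φ, (S.filter (fun a => Φ a = u)).card :=
        Finset.card_eq_sum_card_image Φ S
    _ ≤ ∑ u ∈ S.image Φ, 4 := Finset.sum_le_sum hfib
    _ = (S.image Φ).card * 4 := by rw [Finset.sum_const, smul_eq_mul]
    _ ≤ 4 * 4 := by
        have := himg
        omega
    _ = 16 := by norm_num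

end fiber

section bounds
variable {d : ℕ → ℕ → ℕ} {i j : ℕ → ℝ}

noncomputable def V (d : ℕ → ℕ → ℕ) (i j : ℕ → ℝ) (s : ℕ) : ℕ := (T d i j s).card

lemma family_bound (H : Hyp d i j) (n s : ℕ) :
    ((Cand (T d i j s)).filter (fun a => Kill1 d i j n s a)).card
      ≤ 16 * V d i j (s + 2 - bb i j n) := by
  classical
  set F := (Cand (T d i j s)).filter (fun a => Kill1 d i j n s a) with hF
  rcases F.eq_empty_or_nonempty with hFe | ⟨a₀, ha₀⟩
  · rw [hFe]; simp
  have hK₀ : Kill1 d i j n s a₀ := (Finset.mem_filter.mp ha₀).2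
  obtain ⟨q₀, p₀, hq₀, hD₀, hw₀, -, -⟩ := hK₀
  have hb1 : bb i j n ≤ s + 1 := win_bb_le H n hq₀ hD₀ hw₀
  have hb2 : 2 ≤ bb i j n := le_trans (by omega) (bb_ge (i := i) (j := j) n)
  set B := bb i j n - 1 with hBdef
  set g : ℕ → ℕ := fun a => a / 64^B with hgdef
  have himg : F.image g ⊆ T d i j (s + 2 - bb i j n) := by
    intro A hA
    rw [Finset.mem_image] at hA
    obtain ⟨a, ha, rfl⟩ := hA
    have haC : a ∈ Cand (T d i j s) := (Finset.mem_filter.mp ha).1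
    have h1 : a / 64 ∈ T d i j s := cand_div haC
    have h2 : (a / 64) / 64^(B-1) ∈ T d i j (s - (B-1)) := anc (B-1) (by omega) h1
    have h3 : (a/64)/64^(B-1) = a / 64^B := by
      rw [Nat.div_div_eq_div_mul]
      congr 1
      rw [← pow_succ']
      congr 1
      omega
    rw [h3] at h2
    rw [show s - (B-1) = s + 2 - bb i j n by omega] at h2
    exact h2
  calc F.card = ∑ A ∈ F.image g, (F.filter (fun a => g a = A)).card :=
        Finset.card_eq_sum_card_image g F
    _ ≤ ∑ _A ∈ F.image g, 16 := by
        apply Finset.sum_le_sum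
        intro A _
        apply fiber16 H n s A
        intro a ha
        rw [Finset.mem_filter] at ha
        exact ⟨(Finset.mem_filter.mp ha.1).2, ha.2⟩
    _ = (F.image g).card * 16 := by rw [Finset.sum_const, smul_eq_mul]
    _ ≤ V d i j (s + 2 - bb i j n) * 16 := by
        have := Finset.card_le_card himg
        unfold V
        omega
    _ = 16 * V d i j (s + 2 - bb i j n) := by ring

lemma kills_bound (H : Hyp d i j) (s : ℕ) :
    ((Cand (T d i j s)).filter (fun a => Kill d i j s a)).card
      ≤ 16 * ∑ t ∈ Finset.Icc 1 s, V d i j t := by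
  classical
  set K := (Cand (T d i j s)).filter (fun a => Kill d i j s a) with hK
  set Act := (Finset.range (s+2)).filter
      (fun n => ((Cand (T d i j s)).filter (fun a => Kill1 d i j n s a)).Nonempty) with hAct
  have hActbb : ∀ n ∈ Act, 2 ≤ bb i j n ∧ bb i j n ≤ s + 1 := by
    intro n hn
    rw [hAct, Finset.mem_filter] at hn
    obtain ⟨a, ha⟩ := hn.2
    have hK1 : Kill1 d i j n s a := (Finset.mem_filter.mp ha).2
    obtain ⟨q, p, hq, hD, hw, -, -⟩ := hK1
    exact ⟨le_trans (by omega) (bb_ge (i := i) (j := j) n), win_bb_le H n hq hD hw⟩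
  have hsub : K ⊆ Act.biUnion
      (fun n => (Cand (T d i j s)).filter (fun a => Kill1 d i j n s a)) := by
    intro a ha
    rw [hK, Finset.mem_filter] at ha
    obtain ⟨haC, n, hKn⟩ := ha
    have hmem : a ∈ (Cand (T d i j s)).filter (fun a => Kill1 d i j n s a) :=
      Finset.mem_filter.mpr ⟨haC, hKn⟩
    apply Finset.mem_biUnion.mpr
    refine ⟨n, ?_, hmem⟩
    rw [hAct, Finset.mem_filter]
    refine ⟨?_, ⟨a, hmem⟩⟩
    rw [Finset.mem_range]
    obtain ⟨q, p, hq, hD, hw, -, -⟩ := hKn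
    have hb1 := win_bb_le H n hq hD hw
    have hbn := bb_ge (i := i) (j := j) n
    omega
  have hcard : K.card ≤ ∑ n ∈ Act, 16 * V d i j (s + 2 - bb i j n) := by
    calc K.card ≤ (Act.biUnion
        (fun n => (Cand (T d i j s)).filter (fun a => Kill1 d i j n s a))).card :=
          Finset.card_le_card hsub
      _ ≤ ∑ n ∈ Act, ((Cand (T d i j s)).filter (fun a => Kill1 d i j n s a)).card :=
          Finset.card_biUnion_le
      _ ≤ ∑ n ∈ Act, 16 * V d i j (s + 2 - bb i j n) :=
          Finset.sum_le_sum (fun n _ => family_bound H n s)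
  have hinj : ∀ nx ∈ Act, ∀ ny ∈ Act,
      s + 2 - bb i j nx = s + 2 - bb i j ny → nx = ny := by
    intro nx hx ny hy hxy
    obtain ⟨h1, h2⟩ := hActbb nx hx
    obtain ⟨h3, h4⟩ := hActbb ny hy
    have : bb i j nx = bb i j ny := by omega
    exact (bb_strictMono (i := i) (j := j)).injective this
  have hsum2 : ∑ n ∈ Act, 16 * V d i j (s + 2 - bb i j n)
      = ∑ t ∈ Act.image (fun n => s + 2 - bb i j n), 16 * V d i j t :=
    (Finset.sum_image (f := fun t => 16 * V d i j t) hinj).symm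
  have hsub2 : Act.image (fun n => s + 2 - bb i j n) ⊆ Finset.Icc 1 s := by
    intro t ht
    rw [Finset.mem_image] at ht
    obtain ⟨n, hn, rfl⟩ := ht
    obtain ⟨h1, h2⟩ := hActbb n hn
    rw [Finset.mem_Icc]
    omega
  calc K.card ≤ ∑ n ∈ Act, 16 * V d i j (s + 2 - bb i j n) := hcard
    _ = ∑ t ∈ Act.image (fun n => s + 2 - bb i j n), 16 * V d i j t := hsum2
    _ ≤ ∑ t ∈ Finset.Icc 1 s, 16 * V d i j t :=
        Finset.sum_le_sum_of_subset hsub2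
    _ = 16 * ∑ t ∈ Finset.Icc 1 s, V d i j t := by rw [Finset.mul_sum]

lemma V_rec (H : Hyp d i j) (s : ℕ) :
    64 * V d i j s ≤ V d i j (s+1) + 16 * ∑ t ∈ Finset.Icc 1 s, V d i j t := by
  classical
  have hV1 : V d i j (s+1) = ((Cand (T d i j s)).filter (fun a => ¬ Kill d i j s a)).card := by
    unfold V
    rw [T_succ]
  have hsplit := Finset.card_filter_add_card_filter_not
    (s := Cand (T d i j s)) (p := fun a => Kill d i j s a)
  have hcc : (Cand (T d i j s)).card = 64 * V d i j s := card_cand _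
  have h2 := kills_bound H s
  omega

lemma V_growth (H : Hyp d i j) : ∀ s, 32 * V d i j s ≤ V d i j (s+1) ∧
    ∑ t ∈ Finset.Icc 1 s, V d i j t ≤ 2 * V d i j s := by
  intro s
  induction s with
  | zero =>
      have hV0 : V d i j 0 = 1 := by
        unfold V T
        rfl
      have hrec := V_rec H 0
      simp only [Finset.Icc_self, Finset.Icc_eq_empty_of_lt (by omega : (0:ℕ) < 1)] at hrec ⊢
      constructor
      · simp only [Finset.sum_empty] at hrec
        omega
      · simp
  | succ s ih =>
      obtain ⟨ih1, ih2⟩ := ih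
      have hsum : ∑ t ∈ Finset.Icc 1 (s+1), V d i j t
          = ∑ t ∈ Finset.Icc 1 s, V d i j t + V d i j (s+1) := by
        rw [Finset.sum_Icc_succ_top (by omega : 1 ≤ s+1)]
      constructor
      · have hrec := V_rec H (s+1)
        rw [hsum] at hrec
        omega
      · rw [hsum]
        omega

lemma V_pos (H : Hyp d i j) : ∀ s, 1 ≤ V d i j s := by
  intro s
  induction s with
  | zero =>
      have hV0 : V d i j 0 = 1 := by
        unfold V T
        rfl
      omega
  | succ s ih =>
      have := (V_growth H s).1
      omega

end bounds

section final
variable {d : ℕ → ℕ → ℕ} {i j : ℕ → ℝ}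

noncomputable def CS (d : ℕ → ℕ → ℕ) (i j : ℕ → ℝ) (s : ℕ) : Set ℝ :=
  ⋃ a ∈ T d i j s, Set.Icc ((a:ℝ) * ell s) (((a:ℝ)+1) * ell s)

lemma CS_nonempty (H : Hyp d i j) (s : ℕ) : (CS d i j s).Nonempty := by
  have h1 := V_pos H s
  unfold V at h1
  obtain ⟨a, ha⟩ := Finset.card_pos.mp (show 0 < (T d i j s).card by omega)
  refine ⟨(a:ℝ) * ell s, ?_⟩
  apply Set.mem_iUnion₂.mpr
  refine ⟨a, ha, ?_⟩
  constructor
  · exact le_refl _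
  · nlinarith [ell_pos s]

lemma CS_closed (s : ℕ) : IsClosed (CS d i j s) :=
  Set.Finite.isClosed_biUnion (Finset.finite_toSet _) (fun _ _ => isClosed_Icc)

lemma CS_compact (s : ℕ) : IsCompact (CS d i j s) :=
  Set.Finite.isCompact_biUnion (Finset.finite_toSet _) (fun _ _ => isCompact_Icc)

lemma CS_desc (s : ℕ) : CS d i j (s+1) ⊆ CS d i j s := by
  intro x hx
  obtain ⟨a, ha, hxa⟩ := Set.mem_iUnion₂.mp hx
  have haT := ha
  rw [T_succ, Finset.mem_filter] at haT
  have haC := haT.1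
  unfold Cand at haC
  rw [Finset.mem_biUnion] at haC
  obtain ⟨m, hm, hmem⟩ := haC
  rw [Finset.mem_image] at hmem
  obtain ⟨r, hr, rfl⟩ := hmem
  rw [Finset.mem_range] at hr
  apply Set.mem_iUnion₂.mpr
  refine ⟨m, hm, ?_⟩
  have hL := ell_pos (s+1)
  have hEll : ell s = 64 * ell (s+1) := by
    rw [ell_succ s]
    ring
  have hr' : (r:ℝ) ≤ 63 := by exact_mod_cast Nat.lt_succ_iff.mp hr
  have hrpos : (0:ℝ) ≤ (r:ℝ) := by positivity
  have hcast : ((64*m + r : ℕ):ℝ) = 64*(m:ℝ) + (r:ℝ) := by push_cast; ring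
  obtain ⟨hx1, hx2⟩ := hxa
  rw [hcast] at hx1 hx2
  constructor
  · calc (m:ℝ) * ell s = 64*(m:ℝ) * ell (s+1) := by rw [hEll]; ring
      _ ≤ (64*(m:ℝ) + (r:ℝ)) * ell (s+1) := by nlinarith
      _ ≤ x := hx1
  · calc x ≤ (64*(m:ℝ) + (r:ℝ) + 1) * ell (s+1) := hx2
      _ ≤ ((m:ℝ)+1) * ell s := by rw [hEll]; nlinarith

lemma exists_x (H : Hyp d i j) : ∃ x : ℝ, ∀ s, x ∈ CS d i j s := by
  have h := IsCompact.nonempty_iInter_of_sequence_nonempty_isCompact_isClosed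
    (CS d i j) (fun s => CS_desc s) (fun s => CS_nonempty H s)
    (CS_compact 0) (fun s => CS_closed s)
  obtain ⟨x, hx⟩ := h
  exact ⟨x, fun s => Set.mem_iInter.mp hx s⟩

lemma avoid (H : Hyp d i j) {x : ℝ} (hx : ∀ s, x ∈ CS d i j s)
    {n q : ℕ} (hq : 0 < q) (hD : Dang d i j n q) (p : ℤ) :
    rho i j n q < |x - (p:ℝ)/(q:ℝ)| := by
  obtain ⟨s, hw, -⟩ := win_exists H n hq hD
  have hxs := hx (s+1)
  obtain ⟨a, ha, hxa⟩ := Set.mem_iUnion₂.mp hxs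
  have haT := ha
  rw [T_succ, Finset.mem_filter] at haT
  have hnk : ¬ Kill d i j s a := haT.2
  have hnk1 : ¬ Kill1 d i j n s a := fun h => hnk ⟨n, h⟩
  by_contra hcon
  push_neg at hcon
  apply hnk1
  refine ⟨q, p, hq, hD, hw, ?_, ?_⟩
  · have h1 : (a:ℝ) * ell (s+1) ≤ x := hxa.1
    have h2 := abs_le.mp hcon
    linarith [h2.1, h2.2]
  · have h1 : x ≤ ((a:ℝ)+1) * ell (s+1) := hxa.2
    have h2 := abs_le.mp hcon
    linarith [h2.1, h2.2]

lemma pseudoAbs_mem (dd : ℕ → ℕ) (hd2 : ∀ k, 2 ≤ dd k) {q : ℕ} (hq : 0 < q) :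
    pseudoAbs dd q ∈ {x : ℝ | ∃ n : ℕ, Dprod dd n ∣ q ∧ x = 1 / (Dprod dd n : ℝ)} := by
  apply Set.Nonempty.csInf_mem
  · refine ⟨1, 0, ?_, ?_⟩
    · simp [Dprod]
    · simp [Dprod]
  · have hsub : {x : ℝ | ∃ n : ℕ, Dprod dd n ∣ q ∧ x = 1 / (Dprod dd n : ℝ)}
        ⊆ (fun n => 1 / (Dprod dd n : ℝ)) '' (Set.Iic q) := by
      rintro x ⟨n, hdvd, rfl⟩
      refine ⟨n, ?_, rfl⟩
      have h1 : n < 2^n := Nat.lt_two_pow_self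
      have h2 : 2^n ≤ Dprod dd n := two_pow_le_Dprod hd2 n
      have h3 : Dprod dd n ≤ q := Dprod_le hdvd hq
      simp only [Set.mem_Iic]
      omega
    exact Set.Finite.subset ((Set.finite_Iic q).image _) hsub

lemma mem_badD (H : Hyp d i j) {x : ℝ} (hx : ∀ s, x ∈ CS d i j s) (n : ℕ) :
    x ∈ BadD (d n) (i n) (j n) := by
  refine ⟨cc i j n, cc_pos n, ?_⟩
  intro q hq
  have hq0 : (0:ℝ) < q := by exact_mod_cast hq
  have hi := H.hi n
  have hj := H.hj n
  have hc := cc_pos (i := i) (j := j) n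
  by_cases hD : Dang d i j n q
  · -- use the distance-to-nearest-integer part
    set p : ℤ := round ((q:ℝ) * x) with hp
    have h1 : rho i j n q < |x - (p:ℝ)/(q:ℝ)| := avoid H hx hq hD p
    have h2 : distNearestInt ((q:ℝ) * x) = (q:ℝ) * |x - (p:ℝ)/(q:ℝ)| := by
      unfold distNearestInt
      rw [← abs_of_pos hq0, ← abs_mul]
      congr 1
      rw [abs_of_pos hq0, ← hp]
      field_simp
    have h3 : (cc i j n / (q:ℝ)) ^ (j n) < distNearestInt ((q:ℝ) * x) := by
      rw [h2]
      calc (cc i j n / (q:ℝ)) ^ (j n) = (q:ℝ) * rho i j n q := by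
            unfold rho
            field_simp
        _ < (q:ℝ) * |x - (p:ℝ)/(q:ℝ)| := (mul_lt_mul_iff_right₀ hq0).mpr h1
    have h4 : cc i j n / (q:ℝ) < distNearestInt ((q:ℝ) * x) ^ (1 / j n) := by
      have hpos : (0:ℝ) < (cc i j n / (q:ℝ)) ^ (j n) :=
        Real.rpow_pos_of_pos (by positivity) _
      have h5 := Real.rpow_lt_rpow hpos.le h3 (by positivity : (0:ℝ) < 1 / j n)
      rwa [← Real.rpow_mul (by positivity), mul_one_div_cancel (ne_of_gt hj),
        Real.rpow_one] at h5
    exact lt_of_lt_of_le h4 (le_max_right _ _)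
  · -- use the pseudo-absolute-value part
    obtain ⟨N, hdvd, hPA⟩ := pseudoAbs_mem (d n) (H.hd2 n) hq
    have hnd : ¬ ((q:ℝ) ≤ cc i j n * (Dprod (d n) N : ℝ) ^ (1 / i n)) :=
      fun h => hD ⟨N, hdvd, h⟩
    push_neg at hnd
    have hD1 : (1:ℝ) ≤ (Dprod (d n) N : ℝ) := by
      exact_mod_cast one_le_Dprod (H.hd2 n) N
    have hD0 : (0:ℝ) < (Dprod (d n) N : ℝ) := by linarith
    have h6 : (Dprod (d n) N : ℝ) ^ (1/ i n) < (q:ℝ)/cc i j n := by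
      rw [lt_div_iff₀ hc, mul_comm]
      exact hnd
    have h5 : (Dprod (d n) N : ℝ) < ((q:ℝ)/cc i j n) ^ (i n) := by
      calc (Dprod (d n) N : ℝ) = ((Dprod (d n) N : ℝ) ^ (1/i n)) ^ (i n) := by
            rw [← Real.rpow_mul (by positivity), one_div_mul_cancel (ne_of_gt hi),
              Real.rpow_one]
        _ < ((q:ℝ)/cc i j n) ^ (i n) := Real.rpow_lt_rpow (by positivity) h6 hi
    have h7 : (cc i j n / (q:ℝ)) ^ (i n) < pseudoAbs (d n) q := by
      rw [hPA, show cc i j n / (q:ℝ) = (((q:ℝ)/cc i j n))⁻¹ by rw [inv_div],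
        Real.inv_rpow (by positivity), one_div]
      exact inv_strictAnti₀ hD0 h5
    have h8 : cc i j n / (q:ℝ) < pseudoAbs (d n) q ^ (1/ i n) := by
      have hpos : (0:ℝ) < (cc i j n/(q:ℝ)) ^ (i n) :=
        Real.rpow_pos_of_pos (by positivity) _
      have h9 := Real.rpow_lt_rpow hpos.le h7 (by positivity : (0:ℝ) < 1/ i n)
      rwa [← Real.rpow_mul (by positivity), mul_one_div_cancel (ne_of_gt hi),
        Real.rpow_one] at h9
    exact lt_of_lt_of_le h8 (le_max_left _ _)

end final

end BLV

/-- The countable intersection of the sets `Bad_{𝒟⁽ⁿ⁾}(iₙ, jₙ)` is nonempty. -/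
theorem iInter_badD_nonempty (d : ℕ → ℕ → ℕ)
    (hd2 : ∀ n k, 2 ≤ d n k) (hdbdd : ∀ n, ∃ M, ∀ k, d n k ≤ M)
    (i j : ℕ → ℝ)
    (hi : ∀ n, 0 < i n) (hi' : ∀ n, i n < 1) (hj : ∀ n, 0 < j n) (hj' : ∀ n, j n < 1)
    (hij : ∀ n, i n + j n = 1) :
    (⋂ n : ℕ, BadD (d n) (i n) (j n)).Nonempty := by
  have H : BLV.Hyp d i j := ⟨hd2, hi, hj, hij⟩
  obtain ⟨x, hx⟩ := BLV.exists_x H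
  exact ⟨x, Set.mem_iInter.mpr (fun n => BLV.mem_badD H hx n)⟩
end

section
/- Let $\mathcal{D}$ be a bounded sequence of integers $(d_k)_{k\ge 1}$ with every $d_k \ge 2$, and let $(i,j)$ be a pair of real numbers with $0 < i,j < 1$ and $i+j=1$. Then the Hausdorff dimension of $\mathrm{Bad} \cap \mathrm{Bad}_{\mathcal{D}}(i,j)$ equals $1$, where $\mathrm{Bad}$ is the classical set of badly approximable numbers; in particular $\mathrm{Bad} \cap \mathrm{Bad}_{\mathcal{D}}(i,j) \neq \emptyset$. -/
/-- The classical set of badly approximable numbers. -/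
def Bad : Set ℝ :=
  {x : ℝ | ∃ c : ℝ, 0 < c ∧ ∀ q : ℕ, 0 < q → distNearestInt ((q : ℝ) * x) > c / (q : ℝ)}

section prelim
variable {d : ℕ → ℕ} (hd2 : ∀ k, 2 ≤ d k)

lemma Dprod_succ (n : ℕ) : Dprod d (n+1) = Dprod d n * d n := Finset.prod_range_succ _ _

lemma Dprod_zero : Dprod d 0 = 1 := rfl

include hd2 in
lemma two_pow_le_Dprod (n : ℕ) : 2 ^ n ≤ Dprod d n := by
  induction n with
  | zero => simp [Dprod_zero]
  | succ n ih =>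
    rw [Dprod_succ, pow_succ]
    exact Nat.mul_le_mul ih (hd2 n)

include hd2 in
lemma Dprod_pos (n : ℕ) : 0 < Dprod d n :=
  lt_of_lt_of_le (by positivity : 0 < 2 ^ n) (two_pow_le_Dprod hd2 n)

lemma Dprod_dvd_Dprod {m n : ℕ} (h : m ≤ n) : Dprod d m ∣ Dprod d n :=
  Finset.prod_dvd_prod_of_subset _ _ _ (Finset.range_subset_range.2 h)

include hd2 in
lemma Dprod_le_Dprod {m n : ℕ} (h : m ≤ n) : Dprod d m ≤ Dprod d n :=
  Nat.le_of_dvd (Dprod_pos hd2 n) (Dprod_dvd_Dprod h)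

include hd2 in
lemma pseudoAbs_lb {q : ℕ} (hq : 0 < q) :
    ∃ N : ℕ, Dprod d N ∣ q ∧ (1 : ℝ) / (Dprod d N : ℝ) ≤ pseudoAbs d q := by
  set P : ℕ → Prop := fun n => Dprod d n ∣ q with hP
  have hle : ∀ n, P n → n ≤ q := by
    intro n hn
    have h1 : 2 ^ n ≤ q := le_trans (two_pow_le_Dprod hd2 n) (Nat.le_of_dvd hq hn)
    exact le_trans (Nat.le_of_lt (Nat.lt_two_pow_self (n := n))) h1
  classical
  set N := Nat.findGreatest P q with hN
  have hPN : P N := by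
    have h0 : P 0 := by simp [hP, Dprod_zero]
    exact Nat.findGreatest_spec (Nat.zero_le q) h0
  refine ⟨N, hPN, ?_⟩
  have hne : {x : ℝ | ∃ n : ℕ, Dprod d n ∣ q ∧ x = 1 / (Dprod d n : ℝ)}.Nonempty := by
    exact ⟨1, 0, by simp [Dprod_zero], by simp [Dprod_zero]⟩
  apply le_csInf hne
  rintro x ⟨n, hdvd, rfl⟩
  have hnN : n ≤ N := Nat.le_findGreatest (hle n hdvd) hdvd
  have := Dprod_le_Dprod hd2 hnN
  have h1 : (0:ℝ) < (Dprod d n : ℝ) := by exact_mod_cast Dprod_pos hd2 n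
  apply one_div_le_one_div_of_le h1 (by exact_mod_cast this)

end prelim

structure Ctx where
  d : ℕ → ℕ
  hd2 : ∀ k, 2 ≤ d k
  i : ℝ
  j : ℝ
  hi : 0 < i
  hj : 0 < j
  hij : i + j = 1
  R : ℕ
  hR : 20 ≤ R
  hRe : Even R

namespace Ctx
variable (C : Ctx)

noncomputable def c : ℝ := (C.R : ℝ) ^ (-(5 + 1/C.j))
noncomputable def cj : ℝ := C.c ^ C.j
def S : ℕ := C.R / 2 - 8

lemma hS2 : 2 ≤ C.S := by have := C.hR; unfold S; omega

lemma hR0 : (0:ℝ) < (C.R:ℝ) := by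
  have h := C.hR
  exact_mod_cast (by omega : 0 < C.R)

lemma hR1 : (1:ℝ) < (C.R:ℝ) := by
  have := C.hR; exact_mod_cast by omega

lemma c_pos : 0 < C.c := Real.rpow_pos_of_pos C.hR0 _

lemma cj_pos : 0 < C.cj := Real.rpow_pos_of_pos C.c_pos _

lemma c_le_rpow5 : C.c ≤ (C.R:ℝ) ^ (-5 : ℝ) := by
  apply Real.rpow_le_rpow_of_exponent_le C.hR1.le
  have hj := C.hj
  have : 0 ≤ 1/C.j := by positivity
  linarith

lemma c_le_inv5 : C.c * (C.R:ℝ)^(5:ℕ) ≤ 1 := by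
  have h := C.c_le_rpow5
  have h2 : (C.R:ℝ) ^ (-5 : ℝ) * (C.R:ℝ)^(5:ℕ) = 1 := by
    rw [← Real.rpow_natCast (C.R:ℝ) 5, ← Real.rpow_add C.hR0]
    norm_num
  calc C.c * (C.R:ℝ)^(5:ℕ) ≤ (C.R:ℝ)^(-5:ℝ) * (C.R:ℝ)^(5:ℕ) := by
        apply mul_le_mul_of_nonneg_right h (by positivity)
    _ = 1 := h2

lemma two_c_R2_lt_one : 2 * C.c * (C.R:ℝ)^2 < 1 := by
  have h := C.c_le_inv5
  have hc := C.c_pos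
  have h20 : (20:ℝ) ≤ (C.R:ℝ) := by exact_mod_cast C.hR
  have h3 : (8000:ℝ) ≤ (C.R:ℝ)^3 := by
    have := pow_le_pow_left₀ (by norm_num : (0:ℝ) ≤ 20) h20 3
    norm_num at this
    linarith
  have key : C.c * (C.R:ℝ)^2 * 8000 ≤ 1 := by
    have h4 : C.c * (C.R:ℝ)^2 * 8000 ≤ C.c * (C.R:ℝ)^2 * (C.R:ℝ)^3 := by
      apply mul_le_mul_of_nonneg_left h3
      positivity
    calc C.c * (C.R:ℝ)^2 * 8000 ≤ C.c * (C.R:ℝ)^2 * (C.R:ℝ)^3 := h4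
      _ = C.c * (C.R:ℝ)^(5:ℕ) := by ring
      _ ≤ 1 := h
  nlinarith [mul_pos hc (pow_pos C.hR0 2)]

lemma cR_le_one : C.c * (C.R:ℝ) ≤ 1 := by
  have h := C.c_le_inv5
  have hc := C.c_pos
  have h1 : (1:ℝ) ≤ (C.R:ℝ)^4 := one_le_pow₀ C.hR1.le
  calc C.c * (C.R:ℝ) ≤ C.c * (C.R:ℝ) * (C.R:ℝ)^4 := by
        apply le_mul_of_one_le_right (by positivity) h1
    _ = C.c * (C.R:ℝ)^(5:ℕ) := by ring
    _ ≤ 1 := h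

lemma c_le_one : C.c ≤ 1 := by
  have := C.cR_le_one
  have := C.hR1
  have := C.c_pos
  nlinarith

lemma cj_eq : C.cj = (C.R:ℝ) ^ (-(5*C.j + 1)) := by
  unfold cj c
  rw [← Real.rpow_mul C.hR0.le]
  congr 1
  have h1 : 1/C.j * C.j = 1 := one_div_mul_cancel C.hj.ne'
  ring_nf
  ring_nf at h1
  nlinarith [h1]

lemma cjR_le_one : C.cj * (C.R:ℝ) ≤ 1 := by
  have h : C.cj * (C.R:ℝ) = (C.R:ℝ) ^ (-(5*C.j)) := by
    rw [C.cj_eq]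
    nth_rewrite 2 [show (C.R:ℝ) = (C.R:ℝ)^(1:ℝ) by rw [Real.rpow_one]]
    rw [← Real.rpow_add C.hR0]
    ring_nf
  rw [h]
  apply Real.rpow_le_one_of_one_le_of_nonpos C.hR1.le
  have := C.hj
  linarith

lemma cj_le_one : C.cj ≤ 1 := by
  have := C.cjR_le_one
  have := C.hR1
  have := C.cj_pos
  nlinarith

/-- Dangerous denominators: those where the pseudo-absolute-value term can fail. -/
def Dangerous (q : ℕ) : Prop :=
  ∃ m : ℕ, Dprod C.d m ∣ q ∧ (q:ℝ) ≤ C.c * (Dprod C.d m : ℝ) ^ (1/C.i)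

def Dang1 (n q : ℕ) : Prop :=
  0 < q ∧ C.c * (C.R:ℝ)^(n+1) ≤ (q:ℝ)^2 ∧ (q:ℝ)^2 < C.c * (C.R:ℝ)^(n+2)

def Dang2 (n q : ℕ) : Prop :=
  0 < q ∧ C.Dangerous q ∧ C.cj * (C.R:ℝ)^(n+1) ≤ (q:ℝ) ^ (1+C.j) ∧
    (q:ℝ) ^ (1+C.j) < C.cj * (C.R:ℝ)^(n+2)

noncomputable def rad1 (q : ℕ) : ℝ := C.c / (q:ℝ)^2
noncomputable def rad2 (q : ℕ) : ℝ := C.cj / (q:ℝ) ^ (1+C.j)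

end Ctx

lemma rat_dist_ge {p p' : ℤ} {q q' : ℕ} (hq : 0 < q) (hq' : 0 < q')
    (hne : (p:ℝ)/(q:ℝ) ≠ (p':ℝ)/(q':ℝ)) {D : ℕ} (hD : 0 < D)
    (hdq : (D:ℤ) ∣ p * q' - p' * q) :
    (D:ℝ) / ((q:ℝ) * (q':ℝ)) ≤ |(p:ℝ)/(q:ℝ) - (p':ℝ)/(q':ℝ)| := by
  have hq0 : (0:ℝ) < (q:ℝ) := by exact_mod_cast hq
  have hq'0 : (0:ℝ) < (q':ℝ) := by exact_mod_cast hq'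
  have hnum : p * (q':ℤ) - p' * (q:ℤ) ≠ 0 := by
    intro h0
    apply hne
    have hpq : p * (q':ℤ) = p' * (q:ℤ) := by omega
    rw [div_eq_div_iff hq0.ne' hq'0.ne']
    have hpq' : (p:ℝ) * (q':ℝ) = (p':ℝ) * (q:ℝ) := by exact_mod_cast hpq
    linarith [hpq']
  have h1 : (D:ℤ) ≤ |p * q' - p' * q| :=
    Int.le_of_dvd (abs_pos.mpr hnum) ((dvd_abs _ _).mpr hdq)
  have h2 : (p:ℝ)/(q:ℝ) - (p':ℝ)/(q':ℝ) = ((p * q' - p' * q : ℤ) : ℝ) / ((q:ℝ)*(q':ℝ)) := by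
    push_cast
    field_simp
    try ring
  rw [h2, abs_div, abs_of_pos (mul_pos hq0 hq'0)]
  gcongr
  exact_mod_cast h1

namespace Ctx
variable (C : Ctx)

lemma spacing1 {n q q' : ℕ} {p p' : ℤ} (h : C.Dang1 n q) (h' : C.Dang1 n q')
    (hne : (p:ℝ)/(q:ℝ) ≠ (p':ℝ)/(q':ℝ)) :
    2 / (C.R:ℝ)^n < |(p:ℝ)/(q:ℝ) - (p':ℝ)/(q':ℝ)| := by
  obtain ⟨hq, hl, hu⟩ := h
  obtain ⟨hq', hl', hu'⟩ := h'
  have hq0 : (0:ℝ) < (q:ℝ) := by exact_mod_cast hq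
  have hq'0 : (0:ℝ) < (q':ℝ) := by exact_mod_cast hq'
  have hd := rat_dist_ge hq hq' hne one_pos (one_dvd _)
  have hc := C.c_pos
  have hX : (0:ℝ) < C.c * (C.R:ℝ)^(n+2) := by
    have := C.hR0; positivity
  have h4 : (q:ℝ)^2 * (q':ℝ)^2 < (C.c * (C.R:ℝ)^(n+2)) * (C.c * (C.R:ℝ)^(n+2)) :=
    mul_lt_mul'' hu hu' (sq_nonneg _) (sq_nonneg _)
  have hqq : (q:ℝ) * (q':ℝ) < C.c * (C.R:ℝ)^(n+2) := by
    nlinarith [h4, hX, mul_pos hq0 hq'0]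
  have hsplit : (C.R:ℝ)^(n+2) = (C.R:ℝ)^n * (C.R:ℝ)^2 := by rw [pow_add]
  have h2c := C.two_c_R2_lt_one
  have hRn : (0:ℝ) < (C.R:ℝ)^n := pow_pos C.hR0 n
  have key : 2 * ((q:ℝ) * (q':ℝ)) < 1 * (C.R:ℝ)^n := by
    calc 2 * ((q:ℝ)*(q':ℝ)) < 2 * (C.c * (C.R:ℝ)^(n+2)) := by linarith
      _ = (2 * C.c * (C.R:ℝ)^2) * (C.R:ℝ)^n := by rw [hsplit]; ring
      _ < 1 * (C.R:ℝ)^n := mul_lt_mul_of_pos_right h2c hRn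
  have hfin : 2 / (C.R:ℝ)^n < 1 / ((q:ℝ)*(q':ℝ)) :=
    (div_lt_div_iff₀ hRn (mul_pos hq0 hq'0)).mpr (by linarith)
  calc 2 / (C.R:ℝ)^n < 1 / ((q:ℝ)*(q':ℝ)) := hfin
    _ ≤ _ := by simpa using hd

lemma spacing2_aux {n q q' : ℕ} {p p' : ℤ} (h : C.Dang2 n q) (h' : C.Dang2 n q')
    {m m' : ℕ} (hm : Dprod C.d m ∣ q) (hqm : (q:ℝ) ≤ C.c * (Dprod C.d m : ℝ) ^ (1/C.i))
    (hm' : Dprod C.d m' ∣ q') (hmm : m ≤ m')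
    (hne : (p:ℝ)/(q:ℝ) ≠ (p':ℝ)/(q':ℝ)) :
    2 / (C.R:ℝ)^n < |(p:ℝ)/(q:ℝ) - (p':ℝ)/(q':ℝ)| := by
  obtain ⟨hq, -, hl, hu⟩ := h
  obtain ⟨hq', -, hl', hu'⟩ := h'
  have hq0 : (0:ℝ) < (q:ℝ) := by exact_mod_cast hq
  have hq'0 : (0:ℝ) < (q':ℝ) := by exact_mod_cast hq'
  have hc := C.c_pos
  have hcj := C.cj_pos
  have hi := C.hi
  have hj := C.hj
  have hR0 := C.hR0
  have hD : 0 < Dprod C.d m := Dprod_pos C.hd2 m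
  have hD0 : (0:ℝ) < (Dprod C.d m : ℝ) := by exact_mod_cast hD
  have hdvd' : Dprod C.d m ∣ q' := dvd_trans (Dprod_dvd_Dprod hmm) hm'
  have hdq : ((Dprod C.d m : ℕ):ℤ) ∣ p * q' - p' * q := by
    apply dvd_sub
    · exact Dvd.dvd.mul_left (Int.natCast_dvd_natCast.mpr hdvd') p
    · exact Dvd.dvd.mul_left (Int.natCast_dvd_natCast.mpr hm) p'
  have base := rat_dist_ge hq hq' hne hD hdq
  have hQD : ((q:ℝ)/C.c) ^ C.i ≤ (Dprod C.d m : ℝ) := by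
    have h0 : (q:ℝ)/C.c ≤ (Dprod C.d m : ℝ)^(1/C.i) := by
      rw [div_le_iff₀ hc]
      calc (q:ℝ) ≤ C.c * (Dprod C.d m : ℝ)^(1/C.i) := hqm
        _ = (Dprod C.d m : ℝ)^(1/C.i) * C.c := by ring
    have h1 : ((q:ℝ)/C.c) ^ C.i ≤ ((Dprod C.d m : ℝ)^(1/C.i)) ^ C.i :=
      Real.rpow_le_rpow (by positivity) h0 hi.le
    calc ((q:ℝ)/C.c) ^ C.i ≤ ((Dprod C.d m : ℝ)^(1/C.i)) ^ C.i := h1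
      _ = (Dprod C.d m : ℝ) := by
          rw [← Real.rpow_mul hD0.le, one_div_mul_cancel hi.ne', Real.rpow_one]
  set X := C.cj * (C.R:ℝ)^(n+2) with hXdef
  have hX : (0:ℝ) < X := by positivity
  have h1j : (0:ℝ) < 1 + C.j := by linarith
  have hQX : (q:ℝ) ^ C.j * (q':ℝ) ≤ X := by
    have e1 : (q:ℝ) ^ C.j = ((q:ℝ)^(1+C.j))^(C.j/(1+C.j)) := by
      rw [← Real.rpow_mul hq0.le]
      congr 1
      field_simp
      try ring
    have e2 : (q':ℝ) = ((q':ℝ)^(1+C.j))^(1/(1+C.j)) := by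
      rw [← Real.rpow_mul hq'0.le]
      rw [mul_one_div, div_self h1j.ne', Real.rpow_one]
    have b1 : ((q:ℝ)^(1+C.j))^(C.j/(1+C.j)) ≤ X^(C.j/(1+C.j)) :=
      Real.rpow_le_rpow (by positivity) hu.le (by positivity)
    have b2 : ((q':ℝ)^(1+C.j))^(1/(1+C.j)) ≤ X^(1/(1+C.j)) :=
      Real.rpow_le_rpow (by positivity) hu'.le (by positivity)
    calc (q:ℝ) ^ C.j * (q':ℝ) ≤ X^(C.j/(1+C.j)) * X^(1/(1+C.j)) := by
          rw [e1, e2]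
          exact mul_le_mul b1 b2 (by positivity) (by positivity)
      _ = X ^ (C.j/(1+C.j) + 1/(1+C.j)) := (Real.rpow_add hX _ _).symm
      _ = X ^ (1:ℝ) := by
          congr 1
          field_simp
          try ring
      _ = X := Real.rpow_one X
  have hsplit : (C.R:ℝ)^(n+2) = (C.R:ℝ)^n * (C.R:ℝ)^2 := by rw [pow_add]
  have hRn : (0:ℝ) < (C.R:ℝ)^n := pow_pos C.hR0 n
  have hqi : (0:ℝ) < (q:ℝ) ^ C.i := Real.rpow_pos_of_pos hq0 _
  have hci : (0:ℝ) < C.c ^ C.i := Real.rpow_pos_of_pos hc _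
  have hQQ : (q:ℝ) * (q':ℝ) ≤ (q:ℝ)^C.i * X := by
    have e3 : (q:ℝ)^C.i * ((q:ℝ)^C.j * (q':ℝ)) = (q:ℝ) * (q':ℝ) := by
      rw [← mul_assoc, ← Real.rpow_add hq0, C.hij, Real.rpow_one]
    calc (q:ℝ) * (q':ℝ) = (q:ℝ)^C.i * ((q:ℝ)^C.j * (q':ℝ)) := e3.symm
      _ ≤ (q:ℝ)^C.i * X := mul_le_mul_of_nonneg_left hQX hqi.le
  have hcij : C.c ^ C.i * C.cj = C.c := by
    rw [cj, ← Real.rpow_add hc, C.hij, Real.rpow_one]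
  have h2c := C.two_c_R2_lt_one
  have key : 2 * (C.c^C.i * ((q:ℝ) * (q':ℝ))) < (q:ℝ)^C.i * (C.R:ℝ)^n := by
    have hh := mul_le_mul_of_nonneg_left hQQ hci.le
    calc 2 * (C.c^C.i * ((q:ℝ) * (q':ℝ))) ≤ 2 * (C.c^C.i * ((q:ℝ)^C.i * X)) := by linarith
      _ = (q:ℝ)^C.i * ((2 * (C.c^C.i * C.cj) * (C.R:ℝ)^2) * (C.R:ℝ)^n) := by
          rw [hXdef, hsplit]; ring
      _ = (q:ℝ)^C.i * ((2 * C.c * (C.R:ℝ)^2) * (C.R:ℝ)^n) := by rw [hcij]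
      _ < (q:ℝ)^C.i * (1 * (C.R:ℝ)^n) :=
          mul_lt_mul_of_pos_left (mul_lt_mul_of_pos_right h2c hRn) hqi
      _ = (q:ℝ)^C.i * (C.R:ℝ)^n := by ring
  have step1 : 2 / (C.R:ℝ)^n < (q:ℝ)^C.i / (C.c^C.i * ((q:ℝ)*(q':ℝ))) := by
    rw [div_lt_div_iff₀ hRn (by positivity)]
    linarith [key]
  have step2 : (q:ℝ)^C.i / (C.c^C.i * ((q:ℝ)*(q':ℝ))) ≤ (Dprod C.d m : ℝ) / ((q:ℝ)*(q':ℝ)) := by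
    rw [div_le_div_iff₀ (by positivity) (by positivity)]
    have expand : ((q:ℝ)/C.c)^C.i = (q:ℝ)^C.i / C.c^C.i := Real.div_rpow hq0.le hc.le C.i
    have h6 : (q:ℝ)^C.i ≤ (Dprod C.d m:ℝ) * C.c^C.i := by
      rw [expand, div_le_iff₀ hci] at hQD
      linarith
    calc (q:ℝ)^C.i * ((q:ℝ)*(q':ℝ)) ≤ ((Dprod C.d m:ℝ) * C.c^C.i) * ((q:ℝ)*(q':ℝ)) :=
          mul_le_mul_of_nonneg_right h6 (by positivity)
      _ = (Dprod C.d m:ℝ) * (C.c^C.i * ((q:ℝ)*(q':ℝ))) := by ring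
  linarith [base, step1, step2]

lemma spacing2 {n q q' : ℕ} {p p' : ℤ} (h : C.Dang2 n q) (h' : C.Dang2 n q')
    (hne : (p:ℝ)/(q:ℝ) ≠ (p':ℝ)/(q':ℝ)) :
    2 / (C.R:ℝ)^n < |(p:ℝ)/(q:ℝ) - (p':ℝ)/(q':ℝ)| := by
  obtain ⟨m, hm, hqm⟩ := h.2.1
  obtain ⟨m', hm', hqm'⟩ := h'.2.1
  rcases le_total m m' with hmm | hmm
  · exact C.spacing2_aux h h' hm hqm hm' hmm hne
  · rw [abs_sub_comm]
    exact C.spacing2_aux h' h hm' hqm' hm hmm (Ne.symm hne)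

end Ctx

namespace Ctx
variable (C : Ctx)

noncomputable def len (n : ℕ) : ℝ := ((C.R:ℝ)^n)⁻¹

lemma len_pos (n : ℕ) : 0 < C.len n := by
  have := C.hR0; unfold len; positivity

def Avoids (n : ℕ) (a : ℝ) (t : ℕ) (z ρ : ℝ) : Prop :=
  ρ + C.len (n+1)/2 < |a + ((t:ℝ) + 1/2) * C.len (n+1) - z|

def Good (n : ℕ) (a : ℝ) (t : ℕ) : Prop :=
  ∀ p : ℤ, ∀ q : ℕ, (C.Dang1 n q → C.Avoids n a t ((p:ℝ)/(q:ℝ)) (C.rad1 q)) ∧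
    (C.Dang2 n q → C.Avoids n a t ((p:ℝ)/(q:ℝ)) (C.rad2 q))

lemma rad1_pos {q : ℕ} (hq : 0 < q) : 0 < C.rad1 q := by
  have hq0 : (0:ℝ) < (q:ℝ) := by exact_mod_cast hq
  have := C.c_pos
  unfold rad1; positivity

lemma rad2_pos {q : ℕ} (hq : 0 < q) : 0 < C.rad2 q := by
  have hq0 : (0:ℝ) < (q:ℝ) := by exact_mod_cast hq
  have := C.cj_pos
  unfold rad2
  positivity

lemma rad1_le {n q : ℕ} (h : C.Dang1 n q) : C.rad1 q ≤ C.len (n+1) := by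
  obtain ⟨hq, hl, -⟩ := h
  have hq0 : (0:ℝ) < (q:ℝ) := by exact_mod_cast hq
  have hc := C.c_pos
  have hRp : (0:ℝ) < (C.R:ℝ)^(n+1) := pow_pos C.hR0 _
  unfold rad1 len
  rw [div_le_iff₀ (by positivity), inv_mul_eq_div, le_div_iff₀ hRp]
  calc C.c * (C.R:ℝ)^(n+1) ≤ (q:ℝ)^2 := hl
    _ = (q:ℝ)^2 := rfl
  -- done

lemma rad2_le {n q : ℕ} (h : C.Dang2 n q) : C.rad2 q ≤ C.len (n+1) := by
  obtain ⟨hq, -, hl, -⟩ := h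
  have hq0 : (0:ℝ) < (q:ℝ) := by exact_mod_cast hq
  have hcj := C.cj_pos
  have hRp : (0:ℝ) < (C.R:ℝ)^(n+1) := pow_pos C.hR0 _
  have hqj : (0:ℝ) < (q:ℝ)^(1+C.j) := Real.rpow_pos_of_pos hq0 _
  unfold rad2 len
  rw [div_le_iff₀ hqj, inv_mul_eq_div, le_div_iff₀ hRp]
  linarith

/-- The window property: a digit blocked by a dangerous interval pins down the
center's location. -/
lemma window {n : ℕ} {a : ℝ} {t : ℕ} {z ρ : ℝ} (ht : t < C.R)
    (hρ0 : 0 < ρ) (hρ : ρ ≤ C.len (n+1)) (hav : ¬ C.Avoids n a t z ρ) :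
    a + ((t:ℝ) - 1) * C.len (n+1) ≤ z ∧ z ≤ a + ((t:ℝ) + 2) * C.len (n+1) := by
  unfold Avoids at hav
  push_neg at hav
  have h1 := abs_le.mp hav
  have hl := C.len_pos (n+1)
  constructor <;> nlinarith [h1.1, h1.2]

lemma center_window {n : ℕ} {a : ℝ} {t : ℕ} {z ρ : ℝ} (ht : t < C.R)
    (hρ0 : 0 < ρ) (hρ : ρ ≤ C.len (n+1)) (hav : ¬ C.Avoids n a t z ρ)
    {t' : ℕ} {z' ρ' : ℝ} (ht' : t' < C.R) (hρ0' : 0 < ρ') (hρ' : ρ' ≤ C.len (n+1))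
    (hav' : ¬ C.Avoids n a t' z' ρ') :
    |z - z'| ≤ 2 / (C.R:ℝ)^n := by
  obtain ⟨h1, h2⟩ := C.window ht hρ0 hρ hav
  obtain ⟨h1', h2'⟩ := C.window ht' hρ0' hρ' hav'
  have hl := C.len_pos (n+1)
  have htR : (t:ℝ) ≤ (C.R:ℝ) - 1 := by
    have : (t:ℝ) + 1 ≤ (C.R:ℝ) := by exact_mod_cast ht
    linarith
  have htR' : (t':ℝ) ≤ (C.R:ℝ) - 1 := by
    have : (t':ℝ) + 1 ≤ (C.R:ℝ) := by exact_mod_cast ht'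
    linarith
  have hkey : (C.R:ℝ) * C.len (n+1) = ((C.R:ℝ)^n)⁻¹ := by
    unfold len
    rw [pow_succ, mul_inv, mul_comm ((C.R:ℝ)^n)⁻¹ ((C.R:ℝ))⁻¹, ← mul_assoc,
      mul_inv_cancel₀ C.hR0.ne', one_mul]
  have h20 : (20:ℝ) ≤ (C.R:ℝ) := by exact_mod_cast C.hR
  have httl : ((C.R:ℝ) + 2) * C.len (n+1) ≤ 2 / (C.R:ℝ)^n := by
    have hRn : (0:ℝ) < (C.R:ℝ)^n := pow_pos C.hR0 n
    have e1 : ((C.R:ℝ) + 2) * C.len (n+1) ≤ (2 * (C.R:ℝ)) * C.len (n+1) :=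
      mul_le_mul_of_nonneg_right (by linarith) hl.le
    calc ((C.R:ℝ) + 2) * C.len (n+1) ≤ 2 * ((C.R:ℝ) * C.len (n+1)) := by linarith [e1]
      _ = 2 * ((C.R:ℝ)^n)⁻¹ := by rw [hkey]
      _ = 2 / (C.R:ℝ)^n := by ring
  have ht'0 : (0:ℝ) ≤ (t':ℝ) := Nat.cast_nonneg t'
  have ht00 : (0:ℝ) ≤ (t:ℝ) := Nat.cast_nonneg t
  rw [abs_le]
  constructor
  · have hd1 : z' - z ≤ ((t':ℝ) - t + 3) * C.len (n+1) := by linarith [h2', h1]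
    have hd2 : ((t':ℝ) - t + 3) * C.len (n+1) ≤ ((C.R:ℝ) + 2) * C.len (n+1) :=
      mul_le_mul_of_nonneg_right (by linarith) hl.le
    linarith
  · have hd1 : z - z' ≤ ((t:ℝ) - t' + 3) * C.len (n+1) := by linarith [h2, h1']
    have hd2 : ((t:ℝ) - t' + 3) * C.len (n+1) ≤ ((C.R:ℝ) + 2) * C.len (n+1) :=
      mul_le_mul_of_nonneg_right (by linarith) hl.le
    linarith

lemma card_even_range : (C.R : ℕ)/2 ≤ ((Finset.range C.R).filter (fun t => Even t)).card := by
  classical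
  have himg : (Finset.range (C.R/2)).image (fun s => 2*s) ⊆
      (Finset.range C.R).filter (fun t => Even t) := by
    intro t ht
    simp only [Finset.mem_image, Finset.mem_range] at ht
    obtain ⟨s, hs, rfl⟩ := ht
    simp only [Finset.mem_filter, Finset.mem_range]
    exact ⟨by omega, ⟨s, by omega⟩⟩
  have hcard : ((Finset.range (C.R/2)).image (fun s => 2*s)).card = C.R/2 := by
    rw [Finset.card_image_of_injective _ (fun a b h => by omega)]
    exact Finset.card_range _
  calc C.R/2 = ((Finset.range (C.R/2)).image (fun s => 2*s)).card := hcard.symm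
    _ ≤ _ := Finset.card_le_card himg

lemma exists_goodset (n : ℕ) (a : ℝ) :
    ∃ T : Finset ℕ, C.S ≤ T.card ∧ ∀ t ∈ T, t < C.R ∧ Even t ∧ C.Good n a t := by
  classical
  set Bd1 : Finset ℕ := (Finset.range C.R).filter
    (fun t => ∃ p : ℤ, ∃ q : ℕ, C.Dang1 n q ∧ ¬ C.Avoids n a t ((p:ℝ)/(q:ℝ)) (C.rad1 q))
    with hBd1
  set Bd2 : Finset ℕ := (Finset.range C.R).filter
    (fun t => ∃ p : ℤ, ∃ q : ℕ, C.Dang2 n q ∧ ¬ C.Avoids n a t ((p:ℝ)/(q:ℝ)) (C.rad2 q))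
    with hBd2
  set Ev : Finset ℕ := (Finset.range C.R).filter (fun t => Even t) with hEv
  refine ⟨Ev \ (Bd1 ∪ Bd2), ?_, ?_⟩
  · -- cardinality
    have h1 : Bd1.card ≤ 4 := by
      rcases Finset.eq_empty_or_nonempty Bd1 with he | hne
      · rw [he]; simp
      · set t0 := Bd1.min' hne with ht0
        have hsub : Bd1 ⊆ Finset.Icc t0 (t0 + 3) := by
          intro t htmem
          have hmin : t0 ≤ t := Finset.min'_le _ _ htmem
          have ht0mem := Bd1.min'_mem hne
          obtain ⟨htR', p, q, hD, hav⟩ := Finset.mem_filter.mp htmem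
          obtain ⟨htR0', p', q', hD', hav'⟩ := Finset.mem_filter.mp ht0mem
          have htR : t < C.R := Finset.mem_range.mp htR'
          have htR0 : t0 < C.R := Finset.mem_range.mp htR0'
          have hwz := C.window htR (C.rad1_pos hD.1) (C.rad1_le hD) hav
          have hwz' := C.window htR0 (C.rad1_pos hD'.1) (C.rad1_le hD') hav'
          have hcw := C.center_window htR (C.rad1_pos hD.1) (C.rad1_le hD) hav
            htR0 (C.rad1_pos hD'.1) (C.rad1_le hD') hav'
          have hzz : (p:ℝ)/(q:ℝ) = (p':ℝ)/(q':ℝ) := by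
            by_contra hnezz
            exact absurd hcw (not_le.mpr (C.spacing1 hD hD' hnezz))
          have hl := C.len_pos (n+1)
          have : (t:ℝ) - 1 ≤ (t0:ℝ) + 2 := by
            rw [hzz] at hwz
            nlinarith [hwz.1, hwz'.2]
          have hreal : (t:ℝ) ≤ ((t0:ℕ):ℝ) + 3 := by linarith
          have hnat : t ≤ t0 + 3 := by exact_mod_cast hreal
          exact Finset.mem_Icc.mpr ⟨hmin, hnat⟩
        calc Bd1.card ≤ (Finset.Icc t0 (t0+3)).card := Finset.card_le_card hsub
          _ = 4 := by rw [Nat.card_Icc]; omega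
    have h2 : Bd2.card ≤ 4 := by
      rcases Finset.eq_empty_or_nonempty Bd2 with he | hne
      · rw [he]; simp
      · set t0 := Bd2.min' hne with ht0
        have hsub : Bd2 ⊆ Finset.Icc t0 (t0 + 3) := by
          intro t htmem
          have hmin : t0 ≤ t := Finset.min'_le _ _ htmem
          have ht0mem := Bd2.min'_mem hne
          obtain ⟨htR', p, q, hD, hav⟩ := Finset.mem_filter.mp htmem
          obtain ⟨htR0', p', q', hD', hav'⟩ := Finset.mem_filter.mp ht0mem
          have htR : t < C.R := Finset.mem_range.mp htR'
          have htR0 : t0 < C.R := Finset.mem_range.mp htR0'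
          have hwz := C.window htR (C.rad2_pos hD.1) (C.rad2_le hD) hav
          have hwz' := C.window htR0 (C.rad2_pos hD'.1) (C.rad2_le hD') hav'
          have hcw := C.center_window htR (C.rad2_pos hD.1) (C.rad2_le hD) hav
            htR0 (C.rad2_pos hD'.1) (C.rad2_le hD') hav'
          have hzz : (p:ℝ)/(q:ℝ) = (p':ℝ)/(q':ℝ) := by
            by_contra hnezz
            exact absurd hcw (not_le.mpr (C.spacing2 hD hD' hnezz))
          have hl := C.len_pos (n+1)
          have : (t:ℝ) - 1 ≤ (t0:ℝ) + 2 := by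
            rw [hzz] at hwz
            nlinarith [hwz.1, hwz'.2]
          have hreal : (t:ℝ) ≤ ((t0:ℕ):ℝ) + 3 := by linarith
          have hnat : t ≤ t0 + 3 := by exact_mod_cast hreal
          exact Finset.mem_Icc.mpr ⟨hmin, hnat⟩
        calc Bd2.card ≤ (Finset.Icc t0 (t0+3)).card := Finset.card_le_card hsub
          _ = 4 := by rw [Nat.card_Icc]; omega
    have hEvcard := C.card_even_range
    have hUcard : (Bd1 ∪ Bd2).card ≤ 8 := by
      calc (Bd1 ∪ Bd2).card ≤ Bd1.card + Bd2.card := Finset.card_union_le _ _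
        _ ≤ 8 := by omega
    have hsd : Ev.card ≤ (Ev \ (Bd1 ∪ Bd2)).card + (Bd1 ∪ Bd2).card :=
      Finset.card_le_card_sdiff_add_card
    have : C.R/2 ≤ Ev.card := hEvcard
    unfold S
    omega
  · intro t htmem
    rw [Finset.mem_sdiff, Finset.mem_union] at htmem
    obtain ⟨htEv, htBd⟩ := htmem
    rw [hEv, Finset.mem_filter, Finset.mem_range] at htEv
    push_neg at htBd
    obtain ⟨hBd1', hBd2'⟩ := htBd
    refine ⟨htEv.1, htEv.2, ?_⟩
    intro p q
    constructor
    · intro hD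
      by_contra hav
      exact hBd1' (by
        rw [hBd1, Finset.mem_filter, Finset.mem_range]
        exact ⟨htEv.1, p, q, hD, hav⟩)
    · intro hD
      by_contra hav
      exact hBd2' (by
        rw [hBd2, Finset.mem_filter, Finset.mem_range]
        exact ⟨htEv.1, p, q, hD, hav⟩)

end Ctx

namespace Ctx

noncomputable def goodT (C : Ctx) (n : ℕ) (a : ℝ) : Finset ℕ := (C.exists_goodset n a).choose

lemma goodT_card (C : Ctx) (n : ℕ) (a : ℝ) : C.S ≤ (C.goodT n a).card :=
  (C.exists_goodset n a).choose_spec.1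

lemma goodT_mem (C : Ctx) {n : ℕ} {a : ℝ} {t : ℕ} (h : t ∈ C.goodT n a) :
    t < C.R ∧ Even t ∧ C.Good n a t :=
  (C.exists_goodset n a).choose_spec.2 t h

noncomputable def pick (C : Ctx) (n : ℕ) (a : ℝ) : Fin C.S ↪o ℕ :=
  (C.goodT n a).orderEmbOfCardLe (C.goodT_card n a)

lemma pick_mem (C : Ctx) (n : ℕ) (a : ℝ) (s : Fin C.S) : C.pick n a s ∈ C.goodT n a :=
  Finset.orderEmbOfCardLe_mem _ _ _

noncomputable def A (C : Ctx) (σ : ℕ → Fin C.S) : ℕ → ℝ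
  | 0 => 0
  | n+1 => C.A σ n + (C.pick n (C.A σ n) (σ n) : ℝ) * C.len (n+1)

noncomputable def dig (C : Ctx) (σ : ℕ → Fin C.S) (n : ℕ) : ℕ := C.pick n (C.A σ n) (σ n)

lemma A_succ (C : Ctx) (σ : ℕ → Fin C.S) (n : ℕ) :
    C.A σ (n+1) = C.A σ n + (C.dig σ n : ℝ) * C.len (n+1) := rfl

lemma dig_mem (C : Ctx) (σ : ℕ → Fin C.S) (n : ℕ) :
    C.dig σ n ∈ C.goodT n (C.A σ n) := C.pick_mem n (C.A σ n) (σ n)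

lemma dig_lt (C : Ctx) (σ : ℕ → Fin C.S) (n : ℕ) : C.dig σ n < C.R :=
  (C.goodT_mem (C.dig_mem σ n)).1

lemma dig_even (C : Ctx) (σ : ℕ → Fin C.S) (n : ℕ) : Even (C.dig σ n) :=
  (C.goodT_mem (C.dig_mem σ n)).2.1

lemma dig_good (C : Ctx) (σ : ℕ → Fin C.S) (n : ℕ) : C.Good n (C.A σ n) (C.dig σ n) :=
  (C.goodT_mem (C.dig_mem σ n)).2.2

lemma dig_nonneg (C : Ctx) (σ : ℕ → Fin C.S) (n : ℕ) : (0:ℝ) ≤ (C.dig σ n : ℝ) :=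
  Nat.cast_nonneg _

lemma term_le (C : Ctx) (σ : ℕ → Fin C.S) (n : ℕ) :
    (C.dig σ n : ℝ) * C.len (n+1) ≤ ((C.R:ℝ) - 1) * C.len (n+1) := by
  have h := C.dig_lt σ n
  have : (C.dig σ n : ℝ) ≤ (C.R:ℝ) - 1 := by
    have : (C.dig σ n : ℝ) + 1 ≤ (C.R:ℝ) := by exact_mod_cast h
    linarith
  exact mul_le_mul_of_nonneg_right this (C.len_pos (n+1)).le

lemma len_eq_geom (C : Ctx) (n : ℕ) : C.len n = ((C.R:ℝ)⁻¹)^n := by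
  unfold len; rw [inv_pow]

lemma invR_lt_one (C : Ctx) : (C.R:ℝ)⁻¹ < 1 := by
  rw [inv_lt_one_iff₀]; right; exact C.hR1

lemma R_mul_len_succ (C : Ctx) (n : ℕ) : (C.R:ℝ) * C.len (n+1) = C.len n := by
  unfold len
  rw [pow_succ, mul_inv, mul_comm ((C.R:ℝ)^n)⁻¹ ((C.R:ℝ))⁻¹, ← mul_assoc,
    mul_inv_cancel₀ C.hR0.ne', one_mul]

lemma invR_nonneg (C : Ctx) : (0:ℝ) ≤ (C.R:ℝ)⁻¹ := inv_nonneg.mpr (Nat.cast_nonneg _)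

lemma len_shift (C : Ctx) (n k : ℕ) :
    ((C.R:ℝ) - 1) * C.len (k+n+1) = (((C.R:ℝ) - 1) * C.len (n+1)) * ((C.R:ℝ)⁻¹)^k := by
  rw [C.len_eq_geom, C.len_eq_geom, show k+n+1 = (n+1)+k by omega, pow_add]
  ring

lemma summable_geom_tail (C : Ctx) (n : ℕ) :
    Summable (fun k : ℕ => ((C.R:ℝ) - 1) * C.len (k+n+1)) := by
  apply Summable.congr
    ((summable_geometric_of_lt_one C.invR_nonneg C.invR_lt_one).mul_left
      (((C.R:ℝ) - 1) * C.len (n+1)))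
  intro k
  exact (C.len_shift n k).symm

lemma summable_terms (C : Ctx) (σ : ℕ → Fin C.S) :
    Summable (fun n => (C.dig σ n : ℝ) * C.len (n+1)) := by
  apply Summable.of_nonneg_of_le
    (fun n => mul_nonneg (Nat.cast_nonneg _) (C.len_pos (n+1)).le)
    (fun n => C.term_le σ n)
  have := C.summable_geom_tail 0
  apply Summable.congr ((summable_geometric_of_lt_one C.invR_nonneg C.invR_lt_one).mul_left
      (((C.R:ℝ) - 1) * C.len 1))
  intro k
  have := C.len_shift 0 k
  rw [show k + 0 + 1 = k + 1 by omega] at this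
  exact this.symm

noncomputable def F (C : Ctx) (σ : ℕ → Fin C.S) : ℝ := ∑' n, (C.dig σ n : ℝ) * C.len (n+1)

lemma A_eq_partial (C : Ctx) (σ : ℕ → Fin C.S) (n : ℕ) :
    C.A σ n = ∑ k ∈ Finset.range n, (C.dig σ k : ℝ) * C.len (k+1) := by
  induction n with
  | zero => simp [A]
  | succ n ih => rw [Finset.sum_range_succ, ← ih, C.A_succ]

lemma tail_eq (C : Ctx) (σ : ℕ → Fin C.S) (n : ℕ) :
    C.F σ = C.A σ n + ∑' k, (C.dig σ (k+n) : ℝ) * C.len (k+n+1) := by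
  rw [C.A_eq_partial σ n]
  exact (Summable.sum_add_tsum_nat_add n (C.summable_terms σ)).symm

lemma tsum_geom_tail (C : Ctx) (n : ℕ) :
    ∑' k : ℕ, ((C.R:ℝ) - 1) * C.len (k+n+1) = C.len n := by
  rw [tsum_congr (C.len_shift n), tsum_mul_left,
    tsum_geometric_of_lt_one C.invR_nonneg C.invR_lt_one]
  have hR := C.hR1
  have hR0 := C.hR0
  have hlen := C.len_pos (n+1)
  have hR1ne : (C.R:ℝ) - 1 ≠ 0 := by linarith
  have e : 1 - (C.R:ℝ)⁻¹ = ((C.R:ℝ) - 1) / (C.R:ℝ) := by field_simp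
  rw [e, inv_div]
  rw [show ((C.R:ℝ)-1) * C.len (n+1) * ((C.R:ℝ)/((C.R:ℝ)-1)) = (C.R:ℝ) * C.len (n+1) by
    field_simp]
  exact C.R_mul_len_succ n

lemma F_bounds (C : Ctx) (σ : ℕ → Fin C.S) (n : ℕ) :
    C.A σ n ≤ C.F σ ∧ C.F σ ≤ C.A σ n + C.len n := by
  have htail := C.tail_eq σ n
  have hsum : Summable (fun k => (C.dig σ (k+n) : ℝ) * C.len (k+n+1)) :=
    (summable_nat_add_iff n).mpr (C.summable_terms σ)
  constructor
  · have h0 : 0 ≤ ∑' k, (C.dig σ (k+n) : ℝ) * C.len (k+n+1) :=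
      tsum_nonneg (fun k => mul_nonneg (Nat.cast_nonneg _) (C.len_pos _).le)
    linarith [htail]
  · have hle : ∑' k, (C.dig σ (k+n) : ℝ) * C.len (k+n+1)
        ≤ ∑' k, ((C.R:ℝ) - 1) * C.len (k+n+1) := by
      exact Summable.tsum_le_tsum (fun k => C.term_le σ (k+n)) hsum (C.summable_geom_tail n)
    rw [C.tsum_geom_tail n] at hle
    linarith [htail]

end Ctx

namespace Ctx

lemma A_prefix (C : Ctx) {σ τ : ℕ → Fin C.S} (n : ℕ) (h : ∀ k < n, σ k = τ k) :
    C.A σ n = C.A τ n := by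
  induction n with
  | zero => rfl
  | succ n ih =>
    have hA := ih (fun k hk => h k (by omega))
    rw [C.A_succ, C.A_succ]
    unfold dig
    rw [hA, h n (Nat.lt_succ_self n)]

lemma sep_aux (C : Ctx) {σ τ : ℕ → Fin C.S} {n : ℕ} (hpre : ∀ k < n, σ k = τ k)
    (hlt : C.dig σ n < C.dig τ n) : C.F σ + C.len (n+1) ≤ C.F τ := by
  have hA := C.A_prefix n hpre
  have heσ := C.dig_even σ n
  have heτ := C.dig_even τ n
  have h2 : C.dig σ n + 2 ≤ C.dig τ n := by
    obtain ⟨a, ha⟩ := heσ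
    obtain ⟨b, hb⟩ := heτ
    omega
  have h2' : (C.dig σ n : ℝ) + 2 ≤ (C.dig τ n : ℝ) := by exact_mod_cast h2
  have hub := (C.F_bounds σ (n+1)).2
  have hlb := (C.F_bounds τ (n+1)).1
  rw [C.A_succ] at hub
  rw [C.A_succ] at hlb
  rw [hA] at hub
  have hl := C.len_pos (n+1)
  nlinarith [mul_le_mul_of_nonneg_right h2' hl.le]

lemma sep (C : Ctx) {σ τ : ℕ → Fin C.S} {n : ℕ} (hpre : ∀ k < n, σ k = τ k)
    (hne : σ n ≠ τ n) : C.len (n+1) ≤ |C.F σ - C.F τ| := by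
  have hdig : C.dig σ n ≠ C.dig τ n := by
    unfold dig
    rw [C.A_prefix n hpre]
    exact fun h => hne ((C.pick n (C.A τ n)).injective h)
  have hl := C.len_pos (n+1)
  rcases lt_or_gt_of_ne hdig with h | h
  · have hs := C.sep_aux hpre h
    rw [abs_sub_comm, abs_of_nonneg (by linarith)]
    linarith
  · have hpre' : ∀ k < n, τ k = σ k := fun k hk => (hpre k hk).symm
    have hs := C.sep_aux hpre' h
    rw [abs_of_nonneg (by linarith)]
    linarith

lemma F_inj (C : Ctx) : Function.Injective C.F := by
  intro σ τ h
  by_contra hne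
  have hex : ∃ n, σ n ≠ τ n := by
    by_contra h2
    push_neg at h2
    exact hne (funext h2)
  have h1 : σ (Nat.find hex) ≠ τ (Nat.find hex) := Nat.find_spec hex
  have hpre : ∀ k < Nat.find hex, σ k = τ k := fun k hk =>
    of_not_not (Nat.find_min hex hk)
  have := C.sep hpre h1
  rw [h, sub_self, abs_zero] at this
  linarith [C.len_pos (Nat.find hex + 1)]

lemma F_near_mid (C : Ctx) (σ : ℕ → Fin C.S) (n : ℕ) :
    |C.F σ - (C.A σ n + ((C.dig σ n : ℝ) + 1/2) * C.len (n+1))| ≤ C.len (n+1)/2 := by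
  have hub := (C.F_bounds σ (n+1)).2
  have hlb := (C.F_bounds σ (n+1)).1
  rw [C.A_succ] at hub hlb
  have hexp : ((C.dig σ n : ℝ) + 1/2) * C.len (n+1)
      = (C.dig σ n : ℝ) * C.len (n+1) + C.len (n+1)/2 := by ring
  rw [abs_le]
  constructor <;> [skip; skip] <;> rw [hexp] <;> [linarith; linarith]

lemma F_avoid1 (C : Ctx) (σ : ℕ → Fin C.S) {n q : ℕ} (hD : C.Dang1 n q) (p : ℤ) :
    C.rad1 q < |C.F σ - (p:ℝ)/(q:ℝ)| := by
  have hav := ((C.dig_good σ n) p q).1 hD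
  unfold Avoids at hav
  have hmid := C.F_near_mid σ n
  set mid := C.A σ n + ((C.dig σ n : ℝ) + 1/2) * C.len (n+1) with hmiddef
  have htri : |mid - (p:ℝ)/(q:ℝ)| ≤ |mid - C.F σ| + |C.F σ - (p:ℝ)/(q:ℝ)| :=
    abs_sub_le _ _ _
  rw [abs_sub_comm] at hmid
  linarith

lemma F_avoid2 (C : Ctx) (σ : ℕ → Fin C.S) {n q : ℕ} (hD : C.Dang2 n q) (p : ℤ) :
    C.rad2 q < |C.F σ - (p:ℝ)/(q:ℝ)| := by
  have hav := ((C.dig_good σ n) p q).2 hD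
  unfold Avoids at hav
  have hmid := C.F_near_mid σ n
  set mid := C.A σ n + ((C.dig σ n : ℝ) + 1/2) * C.len (n+1) with hmiddef
  have htri : |mid - (p:ℝ)/(q:ℝ)| ≤ |mid - C.F σ| + |C.F σ - (p:ℝ)/(q:ℝ)| :=
    abs_sub_le _ _ _
  rw [abs_sub_comm] at hmid
  linarith

lemma exists_level (C : Ctx) {y b : ℝ} (hy : 1 ≤ y) (hb : 0 < b) (hbR : b * (C.R:ℝ) ≤ 1) :
    ∃ n : ℕ, b * (C.R:ℝ)^(n+1) ≤ y ∧ y < b * (C.R:ℝ)^(n+2) := by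
  have hbR0 : (0:ℝ) < b * (C.R:ℝ) := mul_pos hb C.hR0
  have hx : (0:ℝ) < y / (b * (C.R:ℝ)) := div_pos (by linarith) hbR0
  obtain ⟨m, hm1, hm2⟩ := exists_mem_Ico_zpow hx C.hR1
  have hx1 : (1:ℝ) ≤ y / (b * (C.R:ℝ)) := by
    rw [le_div_iff₀ hbR0]
    linarith
  have hm0 : 0 ≤ m := by
    by_contra hneg
    push_neg at hneg
    have hm1le : m + 1 ≤ 0 := by omega
    have : (C.R:ℝ) ^ (m+1) ≤ 1 := zpow_le_one_of_nonpos₀ C.hR1.le hm1le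
    have := lt_of_lt_of_le hm2 this
    linarith
  set n := m.toNat with hn
  have hmn : m = (n:ℤ) := (Int.toNat_of_nonneg hm0).symm
  rw [hmn] at hm1 hm2
  rw [zpow_natCast] at hm1
  have hm2' : y / (b * (C.R:ℝ)) < (C.R:ℝ)^(n+1) := by
    have : ((n:ℤ) + 1) = ((n+1 : ℕ) : ℤ) := by push_cast; ring
    rw [this, zpow_natCast] at hm2
    exact_mod_cast hm2
  refine ⟨n, ?_, ?_⟩
  · rw [le_div_iff₀ hbR0] at hm1
    calc b * (C.R:ℝ)^(n+1) = (C.R:ℝ)^n * (b * (C.R:ℝ)) := by rw [pow_succ]; ring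
      _ ≤ y := hm1
  · rw [div_lt_iff₀ hbR0] at hm2'
    calc y < (C.R:ℝ)^(n+1) * (b * (C.R:ℝ)) := hm2'
      _ = b * (C.R:ℝ)^(n+2) := by rw [pow_succ, pow_succ]; ring

lemma dist_scale (C : Ctx) {q : ℕ} (hq : 0 < q) (x : ℝ) (p : ℤ) :
    |(q:ℝ) * x - (p:ℝ)| = (q:ℝ) * |x - (p:ℝ)/(q:ℝ)| := by
  have hq0 : (0:ℝ) < (q:ℝ) := by exact_mod_cast hq
  rw [show (q:ℝ) * |x - (p:ℝ)/(q:ℝ)| = |(q:ℝ)| * |x - (p:ℝ)/(q:ℝ)| by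
    rw [abs_of_pos hq0], ← abs_mul]
  congr 1
  field_simp
  try ring

theorem F_mem_Bad (C : Ctx) (σ : ℕ → Fin C.S) : C.F σ ∈ Bad := by
  refine ⟨C.c, C.c_pos, ?_⟩
  intro q hq
  have hq0 : (0:ℝ) < (q:ℝ) := by exact_mod_cast hq
  have hq1 : (1:ℝ) ≤ (q:ℝ)^2 := by
    have : (1:ℝ) ≤ (q:ℝ) := by exact_mod_cast hq
    nlinarith
  obtain ⟨n, hl, hu⟩ := C.exists_level hq1 C.c_pos C.cR_le_one
  have hD : C.Dang1 n q := ⟨hq, hl, hu⟩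
  set x := C.F σ
  set p := round ((q:ℝ) * x) with hp
  have havoid := C.F_avoid1 σ hD p
  unfold distNearestInt
  rw [← hp, C.dist_scale hq x p]
  have hrad : C.rad1 q = C.c / (q:ℝ)^2 := rfl
  rw [hrad] at havoid
  have step : C.c / (q:ℝ) = (q:ℝ) * (C.c / (q:ℝ)^2) := by
    field_simp
  rw [gt_iff_lt, step]
  exact mul_lt_mul_of_pos_left havoid hq0

theorem F_mem_BadD (C : Ctx) (σ : ℕ → Fin C.S) : C.F σ ∈ BadD C.d C.i C.j := by
  refine ⟨C.c, C.c_pos, ?_⟩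
  intro q hq
  have hq0 : (0:ℝ) < (q:ℝ) := by exact_mod_cast hq
  have hq1 : (1:ℝ) ≤ (q:ℝ) := by exact_mod_cast hq
  have hc := C.c_pos
  have hi := C.hi
  have hj := C.hj
  obtain ⟨N, hNdvd, hNle⟩ := pseudoAbs_lb C.hd2 hq
  have hD0 : (0:ℝ) < (Dprod C.d N : ℝ) := by exact_mod_cast Dprod_pos C.hd2 N
  by_cases hcase : (q:ℝ) ≤ C.c * (Dprod C.d N : ℝ)^(1/C.i)
  · -- q is dangerous; use the distNearestInt component
    rw [gt_iff_lt, lt_max_iff]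
    right
    have hdang : C.Dangerous q := ⟨N, hNdvd, hcase⟩
    have hqj1 : (1:ℝ) ≤ (q:ℝ)^(1+C.j) := by
      have h0 : (q:ℝ)^(0:ℝ) ≤ (q:ℝ)^(1+C.j) :=
        Real.rpow_le_rpow_of_exponent_le hq1 (by linarith)
      rwa [Real.rpow_zero] at h0
    obtain ⟨n, hl, hu⟩ := C.exists_level hqj1 C.cj_pos C.cjR_le_one
    have hD : C.Dang2 n q := ⟨hq, hdang, hl, hu⟩
    set x := C.F σ
    set p := round ((q:ℝ) * x) with hp
    have havoid := C.F_avoid2 σ hD p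
    have hrad : C.rad2 q = C.cj / (q:ℝ)^(1+C.j) := rfl
    rw [hrad] at havoid
    have hdni : (C.c / (q:ℝ))^C.j < distNearestInt ((q:ℝ) * x) := by
      unfold distNearestInt
      rw [← hp, C.dist_scale hq x p]
      have e1 : (C.c / (q:ℝ))^C.j = (q:ℝ) * (C.cj / (q:ℝ)^(1+C.j)) := by
        rw [Real.div_rpow hc.le hq0.le]
        rw [show (1:ℝ) + C.j = 1 + C.j from rfl]
        rw [Real.rpow_add hq0, Real.rpow_one]
        unfold cj
        field_simp
      rw [e1]
      exact mul_lt_mul_of_pos_left havoid hq0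
    have hbase : (0:ℝ) ≤ (C.c / (q:ℝ))^C.j := (Real.rpow_pos_of_pos (by positivity) _).le
    have h2 : ((C.c / (q:ℝ))^C.j)^(1/C.j) < (distNearestInt ((q:ℝ) * x))^(1/C.j) :=
      Real.rpow_lt_rpow hbase hdni (by positivity)
    have h3 : ((C.c / (q:ℝ))^C.j)^(1/C.j) = C.c / (q:ℝ) := by
      rw [← Real.rpow_mul (by positivity : (0:ℝ) ≤ C.c / (q:ℝ))]
      rw [mul_one_div_cancel hj.ne', Real.rpow_one]
    rwa [h3] at h2
  · -- q is safe; use the pseudoAbs component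
    rw [gt_iff_lt, lt_max_iff]
    left
    push_neg at hcase
    have h1 : C.c / (q:ℝ) < (1/(Dprod C.d N : ℝ))^(1/C.i) := by
      have hpow : (0:ℝ) < (Dprod C.d N : ℝ)^(1/C.i) := Real.rpow_pos_of_pos hD0 _
      rw [show (1/(Dprod C.d N : ℝ))^(1/C.i) = 1/((Dprod C.d N : ℝ)^(1/C.i)) by
        rw [Real.div_rpow zero_le_one hD0.le, Real.one_rpow]]
      rw [div_lt_div_iff₀ hq0 hpow]
      linarith [hcase]
    have h2 : (1/(Dprod C.d N : ℝ))^(1/C.i) ≤ (pseudoAbs C.d q)^(1/C.i) :=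
      Real.rpow_le_rpow (by positivity) hNle (by positivity)
    linarith

end Ctx

section geom
variable {B : ℝ} (hB : 1 < B)

include hB

lemma geom_inv_nonneg : (0:ℝ) ≤ B⁻¹ := inv_nonneg.mpr (by linarith)

lemma geom_inv_lt_one : B⁻¹ < 1 := by
  rw [inv_lt_one_iff₀]; right; exact hB

lemma geom_shift (n k : ℕ) :
    (B - 1) * (B⁻¹)^(k+n+1) = ((B - 1) * (B⁻¹)^(n+1)) * (B⁻¹)^k := by
  rw [show k+n+1 = (n+1)+k by omega, pow_add]
  ring

lemma geom_tail_summable (n : ℕ) : Summable (fun k : ℕ => (B - 1) * (B⁻¹)^(k+n+1)) := by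
  apply Summable.congr
    ((summable_geometric_of_lt_one (geom_inv_nonneg hB) (geom_inv_lt_one hB)).mul_left
      ((B - 1) * (B⁻¹)^(n+1)))
  intro k
  exact (geom_shift hB n k).symm

lemma geom_tail_eq (n : ℕ) : ∑' k : ℕ, (B - 1) * (B⁻¹)^(k+n+1) = (B⁻¹)^n := by
  have hB0 : (0:ℝ) < B := by linarith
  have hB1ne : B - 1 ≠ 0 := by linarith
  rw [tsum_congr (geom_shift hB n), tsum_mul_left,
    tsum_geometric_of_lt_one (geom_inv_nonneg hB) (geom_inv_lt_one hB)]
  have e : 1 - B⁻¹ = (B - 1) / B := by field_simp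
  rw [e, inv_div]
  rw [show (B-1) * (B⁻¹)^(n+1) * (B/(B-1)) = B * (B⁻¹)^(n+1) by field_simp; try ring]
  rw [pow_succ, ← mul_assoc, mul_comm B ((B⁻¹)^n), mul_assoc, mul_inv_cancel₀ hB0.ne', mul_one]

lemma digit_sum_summable {f : ℕ → ℝ} (h0 : ∀ k, 0 ≤ f k)
    (h1 : ∀ k, f k ≤ (B - 1) * (B⁻¹)^(k+1)) : Summable f := by
  apply Summable.of_nonneg_of_le h0 h1
  apply Summable.congr
    ((summable_geometric_of_lt_one (geom_inv_nonneg hB) (geom_inv_lt_one hB)).mul_left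
      ((B - 1) * (B⁻¹)^(0+1)))
  intro k
  have := (geom_shift hB 0 k).symm
  rw [show k+0+1 = k+1 by omega] at this
  exact this

lemma digit_sum_bounds {f : ℕ → ℝ} (h0 : ∀ k, 0 ≤ f k)
    (h1 : ∀ k, f k ≤ (B - 1) * (B⁻¹)^(k+1)) (n : ℕ) :
    (∑ k ∈ Finset.range n, f k) ≤ (∑' k, f k) ∧
      (∑' k, f k) ≤ (∑ k ∈ Finset.range n, f k) + (B⁻¹)^n := by
  have hsummable := digit_sum_summable hB h0 h1
  have htail := (Summable.sum_add_tsum_nat_add n hsummable).symm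
  have hsum : Summable (fun k => f (k+n)) := (summable_nat_add_iff n).mpr hsummable
  constructor
  · have ht0 : 0 ≤ ∑' k, f (k+n) := tsum_nonneg (fun k => h0 _)
    linarith
  · have hle : ∑' k, f (k+n) ≤ ∑' k, (B - 1) * (B⁻¹)^(k+n+1) := by
      apply Summable.tsum_le_tsum _ hsum (geom_tail_summable hB n)
      intro k
      exact h1 (k+n)
    rw [geom_tail_eq hB n] at hle
    linarith

end geom

namespace Ctx

lemma hS0 (C : Ctx) : (0:ℝ) < (C.S:ℝ) := by
  have := C.hS2; exact_mod_cast (by omega : 0 < C.S)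

lemma hS1 (C : Ctx) : (1:ℝ) < (C.S:ℝ) := by
  have := C.hS2; exact_mod_cast (by omega : 1 < C.S)

noncomputable def e (C : Ctx) (σ : ℕ → Fin C.S) : ℝ :=
  ∑' n, ((σ n : ℕ) : ℝ) * (((C.S:ℝ))⁻¹)^(n+1)

lemma e_term_nonneg (C : Ctx) (σ : ℕ → Fin C.S) (k : ℕ) :
    0 ≤ ((σ k : ℕ) : ℝ) * (((C.S:ℝ))⁻¹)^(k+1) := by
  have := C.hS0
  positivity

lemma e_term_le (C : Ctx) (σ : ℕ → Fin C.S) (k : ℕ) :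
    ((σ k : ℕ) : ℝ) * (((C.S:ℝ))⁻¹)^(k+1) ≤ ((C.S:ℝ) - 1) * (((C.S:ℝ))⁻¹)^(k+1) := by
  have h : ((σ k : ℕ) : ℝ) ≤ (C.S:ℝ) - 1 := by
    have : ((σ k : ℕ) : ℝ) + 1 ≤ (C.S:ℝ) := by exact_mod_cast (σ k).2
    linarith
  apply mul_le_mul_of_nonneg_right h
  have := C.hS0
  positivity

lemma e_bounds (C : Ctx) (σ : ℕ → Fin C.S) (n : ℕ) :
    (∑ k ∈ Finset.range n, ((σ k : ℕ) : ℝ) * (((C.S:ℝ))⁻¹)^(k+1)) ≤ C.e σ ∧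
      C.e σ ≤ (∑ k ∈ Finset.range n, ((σ k : ℕ) : ℝ) * (((C.S:ℝ))⁻¹)^(k+1)) + (((C.S:ℝ))⁻¹)^n :=
  digit_sum_bounds C.hS1 (C.e_term_nonneg σ) (C.e_term_le σ) n

lemma e_prefix_close (C : Ctx) {σ τ : ℕ → Fin C.S} {n : ℕ} (h : ∀ k < n, σ k = τ k) :
    |C.e σ - C.e τ| ≤ (((C.S:ℝ))⁻¹)^n := by
  have hP : (∑ k ∈ Finset.range n, ((σ k : ℕ) : ℝ) * (((C.S:ℝ))⁻¹)^(k+1))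
      = ∑ k ∈ Finset.range n, ((τ k : ℕ) : ℝ) * (((C.S:ℝ))⁻¹)^(k+1) := by
    apply Finset.sum_congr rfl
    intro k hk
    rw [h k (Finset.mem_range.mp hk)]
  have h1 := C.e_bounds σ n
  have h2 := C.e_bounds τ n
  rw [hP] at h1
  rw [abs_le]
  constructor <;> linarith [h1.1, h1.2, h2.1, h2.2]

lemma e_mem_Icc (C : Ctx) (σ : ℕ → Fin C.S) : 0 ≤ C.e σ ∧ C.e σ ≤ 1 := by
  have h := C.e_bounds σ 0
  simp only [Finset.range_zero, Finset.sum_empty, pow_zero] at h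
  exact ⟨by linarith [h.1], by linarith [h.2]⟩

lemma e_surj (C : Ctx) {t : ℝ} (ht0 : 0 ≤ t) (ht1 : t < 1) : ∃ σ, C.e σ = t := by
  have hB1 : (1:ℝ) < (C.S:ℝ) := C.hS1
  have hB0 : (0:ℝ) < (C.S:ℝ) := C.hS0
  set B : ℝ := (C.S:ℝ) with hBdef
  have hdig_nonneg : ∀ n : ℕ, 0 ≤ ⌊t * B^(n+1)⌋ - (C.S:ℤ) * ⌊t * B^n⌋ := by
    intro n
    have h1 : ((C.S:ℤ) * ⌊t * B^n⌋ : ℤ) ≤ ⌊t * B^(n+1)⌋ := by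
      apply Int.le_floor.mpr
      push_cast
      calc ((C.S:ℝ)) * (⌊t * B^n⌋ : ℝ) = (⌊t * B^n⌋ : ℝ) * B := by rw [hBdef]; ring
        _ ≤ (t * B^n) * B := mul_le_mul_of_nonneg_right (Int.floor_le _) hB0.le
        _ = t * B^(n+1) := by rw [pow_succ]; ring
    omega
  have hdig_lt : ∀ n : ℕ, ⌊t * B^(n+1)⌋ - (C.S:ℤ) * ⌊t * B^n⌋ < (C.S:ℤ) := by
    intro n
    have h1 : ⌊t * B^(n+1)⌋ < (C.S:ℤ) * ⌊t * B^n⌋ + (C.S:ℤ) := by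
      apply Int.floor_lt.mpr
      push_cast
      calc t * B^(n+1) = (t * B^n) * B := by rw [pow_succ]; ring
        _ < ((⌊t * B^n⌋ : ℝ) + 1) * B := by
            apply mul_lt_mul_of_pos_right (Int.lt_floor_add_one _) hB0
        _ = (C.S:ℝ) * (⌊t * B^n⌋:ℝ) + (C.S:ℝ) := by rw [hBdef]; ring
    omega
  set σt : ℕ → Fin C.S := fun n =>
    ⟨(⌊t * B^(n+1)⌋ - (C.S:ℤ) * ⌊t * B^n⌋).toNat, by
      have h1 := hdig_nonneg n
      have h2 := hdig_lt n
      omega⟩ with hσt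
  have hcast : ∀ n : ℕ, ((σt n : ℕ) : ℝ) = (⌊t * B^(n+1)⌋ : ℝ) - (C.S:ℝ) * (⌊t * B^n⌋ : ℝ) := by
    intro n
    have h1 := hdig_nonneg n
    have h2 : ((⌊t * B^(n+1)⌋ - (C.S:ℤ) * ⌊t * B^n⌋).toNat : ℤ)
        = ⌊t * B^(n+1)⌋ - (C.S:ℤ) * ⌊t * B^n⌋ := Int.toNat_of_nonneg h1
    rw [hσt]
    exact_mod_cast congrArg (fun z : ℤ => (z:ℝ)) h2
  have hpartial : ∀ n : ℕ,
      (∑ k ∈ Finset.range n, ((σt k : ℕ) : ℝ) * ((B:ℝ)⁻¹)^(k+1)) = (⌊t * B^n⌋ : ℝ) / B^n := by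
    intro n
    induction n with
    | zero =>
      have h0 : ⌊t⌋ = 0 := Int.floor_eq_zero_iff.mpr ⟨ht0, ht1⟩
      simp [h0]
    | succ n ih =>
      rw [Finset.sum_range_succ, ih, hcast n]
      have hBn : (0:ℝ) < B^n := pow_pos hB0 n
      have hBn1 : (0:ℝ) < B^(n+1) := pow_pos hB0 (n+1)
      rw [inv_pow, pow_succ]
      field_simp
      ring
  have hclose : ∀ n : ℕ, |t - (⌊t * B^n⌋ : ℝ) / B^n| ≤ ((B:ℝ)⁻¹)^n := by
    intro n
    have hBn : (0:ℝ) < B^n := pow_pos hB0 n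
    have hf1 : (⌊t * B^n⌋ : ℝ) ≤ t * B^n := Int.floor_le _
    have hf2 : t * B^n < (⌊t * B^n⌋ : ℝ) + 1 := Int.lt_floor_add_one _
    rw [abs_le, inv_pow]
    have hd1 : (⌊t * B^n⌋ : ℝ)/B^n ≤ t := by
      rw [div_le_iff₀ hBn]
      exact hf1
    have hd2 : t ≤ (⌊t * B^n⌋ : ℝ)/B^n + (B^n)⁻¹ := by
      have h3 : t ≤ ((⌊t * B^n⌋ : ℝ) + 1)/B^n := by
        rw [le_div_iff₀ hBn]
        linarith
      have he : ((⌊t * B^n⌋ : ℝ) + 1)/B^n = (⌊t * B^n⌋ : ℝ)/B^n + (B^n)⁻¹ := by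
        rw [add_div, one_div]
      linarith
    have hp : (0:ℝ) ≤ (B^n)⁻¹ := by positivity
    constructor <;> linarith
  refine ⟨σt, ?_⟩
  have hub : ∀ n : ℕ, |C.e σt - t| ≤ 2 * ((B:ℝ)⁻¹)^n := by
    intro n
    have hb := C.e_bounds σt n
    rw [hpartial n] at hb
    have hc := hclose n
    rw [abs_le] at hc ⊢
    constructor <;> linarith [hb.1, hb.2, hc.1, hc.2]
  have hlim : Filter.Tendsto (fun n : ℕ => 2 * ((B:ℝ)⁻¹)^n) Filter.atTop (nhds 0) := by
    have := (tendsto_pow_atTop_nhds_zero_of_lt_one (geom_inv_nonneg hB1)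
      (geom_inv_lt_one hB1)).const_mul (2:ℝ)
    simpa using this
  have habs : |C.e σt - t| ≤ 0 :=
    ge_of_tendsto hlim (Filter.Eventually.of_forall hub)
  have := abs_nonneg (C.e σt - t)
  have h0 : |C.e σt - t| = 0 := le_antisymm habs this
  rw [abs_eq_zero, sub_eq_zero] at h0
  exact h0

end Ctx

open scoped ENNReal NNReal

namespace Ctx

noncomputable def alpha (C : Ctx) : ℝ := Real.log (C.S:ℝ) / Real.log (C.R:ℝ)

lemma logR_pos (C : Ctx) : 0 < Real.log (C.R:ℝ) := Real.log_pos C.hR1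

lemma logS_pos (C : Ctx) : 0 < Real.log (C.S:ℝ) := Real.log_pos C.hS1

lemma alpha_pos (C : Ctx) : 0 < C.alpha := div_pos C.logS_pos C.logR_pos

lemma rpow_alpha (C : Ctx) : (C.R:ℝ) ^ C.alpha = (C.S:ℝ) := by
  rw [Real.rpow_def_of_pos C.hR0]
  unfold alpha
  rw [mul_div_assoc', mul_comm, mul_div_assoc, div_self C.logR_pos.ne', mul_one]
  exact Real.exp_log C.hS0

lemma len_rpow_alpha (C : Ctx) (n : ℕ) :
    (C.len n) ^ C.alpha = (((C.S:ℝ))⁻¹)^n := by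
  have hR0 := C.hR0
  have hS0 := C.hS0
  have hlen : C.len n = (C.R:ℝ) ^ (-(n:ℝ)) := by
    unfold len
    rw [Real.rpow_neg hR0.le, Real.rpow_natCast]
  rw [hlen, ← Real.rpow_natCast ((C.S:ℝ))⁻¹ n, ← Real.rpow_neg_one (C.S:ℝ),
    ← Real.rpow_mul hS0.le, ← C.rpow_alpha, ← Real.rpow_mul hR0.le, ← Real.rpow_mul hR0.le]
  congr 1
  ring

lemma holder_key (C : Ctx) (σ τ : ℕ → Fin C.S) :
    |C.e σ - C.e τ| ≤ (C.S:ℝ) * |C.F σ - C.F τ| ^ C.alpha := by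
  have hS0 := C.hS0
  have hα := C.alpha_pos
  by_cases hστ : σ = τ
  · rw [hστ, sub_self, abs_zero]
    positivity
  · have hex : ∃ n, σ n ≠ τ n := by
      by_contra h2
      push_neg at h2
      exact hστ (funext h2)
    set n := Nat.find hex with hn
    have h1 : σ n ≠ τ n := Nat.find_spec hex
    have hpre : ∀ k < n, σ k = τ k := fun k hk => of_not_not (Nat.find_min hex hk)
    have hclose : |C.e σ - C.e τ| ≤ (((C.S:ℝ))⁻¹)^n := C.e_prefix_close hpre
    have hsep : C.len (n+1) ≤ |C.F σ - C.F τ| := C.sep hpre h1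
    have hrp : (C.len (n+1)) ^ C.alpha ≤ |C.F σ - C.F τ| ^ C.alpha :=
      Real.rpow_le_rpow (C.len_pos (n+1)).le hsep hα.le
    rw [C.len_rpow_alpha (n+1)] at hrp
    have hstep : (((C.S:ℝ))⁻¹)^n = (C.S:ℝ) * (((C.S:ℝ))⁻¹)^(n+1) := by
      rw [pow_succ, ← mul_assoc, mul_comm (C.S:ℝ), mul_assoc]
      rw [mul_inv_cancel₀ hS0.ne', mul_one]
    calc |C.e σ - C.e τ| ≤ (((C.S:ℝ))⁻¹)^n := hclose
      _ = (C.S:ℝ) * (((C.S:ℝ))⁻¹)^(n+1) := hstep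
      _ ≤ (C.S:ℝ) * |C.F σ - C.F τ| ^ C.alpha := mul_le_mul_of_nonneg_left hrp hS0.le

instance (C : Ctx) : Nonempty (Fin C.S) := ⟨⟨0, by have := C.hS2; omega⟩⟩

noncomputable def gmap (C : Ctx) : ℝ → ℝ := fun x => C.e (Function.invFun C.F x)

lemma gmap_F (C : Ctx) (σ : ℕ → Fin C.S) : C.gmap (C.F σ) = C.e σ := by
  unfold gmap
  rw [Function.leftInverse_invFun C.F_inj σ]

lemma gmap_holder (C : Ctx) :
    HolderOnWith (Real.toNNReal (C.S:ℝ)) (Real.toNNReal C.alpha) C.gmap (Set.range C.F) := by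
  rintro x ⟨σ, rfl⟩ y ⟨τ, rfl⟩
  rw [C.gmap_F, C.gmap_F, edist_dist, edist_dist, Real.dist_eq, Real.dist_eq]
  have hkey := C.holder_key σ τ
  have hd0 : (0:ℝ) ≤ |C.F σ - C.F τ| := abs_nonneg _
  have hα := C.alpha_pos
  have hS0 := C.hS0
  calc ENNReal.ofReal |C.e σ - C.e τ| ≤ ENNReal.ofReal ((C.S:ℝ) * |C.F σ - C.F τ| ^ C.alpha) :=
        ENNReal.ofReal_le_ofReal hkey
    _ = ENNReal.ofReal (C.S:ℝ) * ENNReal.ofReal (|C.F σ - C.F τ| ^ C.alpha) :=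
        ENNReal.ofReal_mul hS0.le
    _ = ENNReal.ofReal (C.S:ℝ) * ENNReal.ofReal |C.F σ - C.F τ| ^ C.alpha := by
        rw [ENNReal.ofReal_rpow_of_nonneg hd0 hα.le]
    _ = (Real.toNNReal (C.S:ℝ) : ℝ≥0∞) * ENNReal.ofReal |C.F σ - C.F τ| ^ ((Real.toNNReal C.alpha : ℝ≥0) : ℝ) := by
        rw [ENNReal.ofReal]
        congr 2
        exact (Real.coe_toNNReal _ hα.le).symm

lemma dimH_range_F (C : Ctx) : ENNReal.ofReal C.alpha ≤ dimH (Set.range C.F) := by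
  have hα := C.alpha_pos
  have hαnn : 0 < Real.toNNReal C.alpha := Real.toNNReal_pos.mpr hα
  have hH := C.gmap_holder.dimH_image_le hαnn
  have himg : Set.Ico (0:ℝ) 1 ⊆ C.gmap '' (Set.range C.F) := by
    rintro t ⟨ht0, ht1⟩
    obtain ⟨σ, hσ⟩ := C.e_surj ht0 ht1
    exact ⟨C.F σ, Set.mem_range_self σ, by rw [C.gmap_F]; exact hσ⟩
  have hIco : dimH (Set.Ico (0:ℝ) 1) = 1 := by
    rw [Real.dimH_of_mem_nhds (x := (1/2:ℝ)) (Ico_mem_nhds (by norm_num) (by norm_num))]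
    simp
  have h1 : (1:ℝ≥0∞) ≤ dimH (C.gmap '' Set.range C.F) := by
    rw [← hIco]
    exact dimH_mono himg
  have h2 : (1:ℝ≥0∞) ≤ dimH (Set.range C.F) / (Real.toNNReal C.alpha : ℝ≥0∞) :=
    le_trans h1 hH
  rw [ENNReal.le_div_iff_mul_le
    (Or.inl (by exact_mod_cast hαnn.ne'))
    (Or.inl ENNReal.coe_ne_top), one_mul] at h2
  exact h2

end Ctx

/-- The set `Bad ∩ Bad_𝒟(i,j)` has full Hausdorff dimension; in particular it is
nonempty. -/
theorem dimH_bad_inter_badD (d : ℕ → ℕ) (hd2 : ∀ k, 2 ≤ d k) (hdbdd : ∃ M, ∀ k, d k ≤ M)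
    (i j : ℝ) (hi : 0 < i) (hi' : i < 1) (hj : 0 < j) (hj' : j < 1) (hij : i + j = 1) :
    dimH (Bad ∩ BadD d i j) = 1 ∧ (Bad ∩ BadD d i j).Nonempty := by
  have main : ∀ k : ℕ, 5 ≤ k →
      ENNReal.ofReal (1 - 2/(k:ℝ)) ≤ dimH (Bad ∩ BadD d i j) ∧
        (Bad ∩ BadD d i j).Nonempty := by
    intro k hk
    have hR20 : 20 ≤ 2^k := le_trans (by norm_num : (20:ℕ) ≤ 2^5)
      (Nat.pow_le_pow_right (by norm_num) hk)
    have hRe : Even (2^k) := (Nat.even_pow).mpr ⟨even_two, by omega⟩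
    let C : Ctx := ⟨d, hd2, i, j, hi, hj, hij, 2^k, hR20, hRe⟩
    have hsub : Set.range C.F ⊆ Bad ∩ BadD d i j := by
      rintro x ⟨σ, rfl⟩
      exact ⟨C.F_mem_Bad σ, C.F_mem_BadD σ⟩
    have hdim1 := C.dimH_range_F
    have hdim2 : dimH (Set.range C.F) ≤ dimH (Bad ∩ BadD d i j) := dimH_mono hsub
    have hSlb : 2^(k-2) ≤ C.S := by
      show 2^(k-2) ≤ 2^k/2 - 8
      have h1 : 2^k = 2^(k-1)*2 := by rw [← pow_succ, show (k-1)+1 = k by omega]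
      have h2 : 2^(k-1) = 2^(k-2)*2 := by rw [← pow_succ, show (k-2)+1 = k-1 by omega]
      have h3 : 8 ≤ 2^(k-2) := by
        calc (8:ℕ) = 2^3 := by norm_num
          _ ≤ 2^(k-2) := Nat.pow_le_pow_right (by norm_num) (by omega)
      omega
    have hk0 : (0:ℝ) < (k:ℝ) := by exact_mod_cast (by omega : 0 < k)
    have hlog2 : (0:ℝ) < Real.log 2 := Real.log_pos (by norm_num)
    have halpha : 1 - 2/(k:ℝ) ≤ C.alpha := by
      have hR : (C.R:ℝ) = (2:ℝ)^k := by
        show ((2^k : ℕ):ℝ) = (2:ℝ)^k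
        push_cast
        ring
      have hlogR : Real.log (C.R:ℝ) = (k:ℝ) * Real.log 2 := by
        rw [hR, Real.log_pow]
      have hcast2 : ((k-2:ℕ):ℝ) = (k:ℝ) - 2 := by
        push_cast [Nat.cast_sub (by omega : 2 ≤ k)]
        ring
      have hcast : ((2:ℝ))^(k-2 : ℕ) ≤ (C.S:ℝ) := by exact_mod_cast hSlb
      have hlogS : ((k:ℝ) - 2) * Real.log 2 ≤ Real.log (C.S:ℝ) := by
        calc ((k:ℝ)-2) * Real.log 2 = Real.log ((2:ℝ)^(k-2:ℕ)) := by
              rw [Real.log_pow, hcast2]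
          _ ≤ Real.log (C.S:ℝ) := Real.log_le_log (by positivity) hcast
      have h5 : 1 - 2/(k:ℝ) = ((k:ℝ)-2)/(k:ℝ) := by field_simp
      show 1 - 2/(k:ℝ) ≤ Real.log (C.S:ℝ) / Real.log (C.R:ℝ)
      rw [h5, hlogR, div_le_div_iff₀ hk0 (by positivity)]
      calc ((k:ℝ)-2) * ((k:ℝ) * Real.log 2) = (((k:ℝ)-2) * Real.log 2) * (k:ℝ) := by ring
        _ ≤ Real.log (C.S:ℝ) * (k:ℝ) := mul_le_mul_of_nonneg_right hlogS hk0.le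
    have hOf : ENNReal.ofReal (1 - 2/(k:ℝ)) ≤ ENNReal.ofReal C.alpha :=
      ENNReal.ofReal_le_ofReal halpha
    refine ⟨le_trans hOf (le_trans hdim1 hdim2), ?_⟩
    exact ⟨C.F (fun _ => Classical.arbitrary _), hsub (Set.mem_range_self _)⟩
  have hne := (main 5 le_rfl).2
  have hupper : dimH (Bad ∩ BadD d i j) ≤ 1 :=
    le_of_le_of_eq (dimH_mono (Set.subset_univ _)) Real.dimH_univ
  have hlower : (1:ℝ≥0∞) ≤ dimH (Bad ∩ BadD d i j) := by
    have hev : ∀ᶠ k : ℕ in Filter.atTop,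
        ENNReal.ofReal (1 - 2/(k:ℝ)) ≤ dimH (Bad ∩ BadD d i j) :=
      Filter.eventually_atTop.mpr ⟨5, fun k hk => (main k hk).1⟩
    have h1 : Filter.Tendsto (fun k:ℕ => 1 - 2/(k:ℝ)) Filter.atTop (nhds 1) := by
      have h2 := Filter.Tendsto.const_sub (1:ℝ) (tendsto_const_div_atTop_nhds_zero_nat 2)
      simpa using h2
    have hlim : Filter.Tendsto (fun k:ℕ => ENNReal.ofReal (1 - 2/(k:ℝ)))
        Filter.atTop (nhds 1) := by
      have h3 := (ENNReal.continuous_ofReal.tendsto 1).comp h1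
      simpa [Function.comp_def] using h3
    exact le_of_tendsto hlim hev
  exact ⟨le_antisymm hupper hlower, hne⟩
end
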